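/- arXiv:2602.18081 — 6 statements merged into one kernel-verified Lean document; each statement's English description precedes it below -/
import Mathlib

section
/- Let S(n) be the symmetric simple random walk (P(X_1=1)=P(X_1=-1)=1/2, X_k i.i.d.) and τ_1=inf{n≥1 : 1+S(n)≤0}. Then for every integer k≥0, P(τ_1 = 2k+1) = (1/(k+1))·C(2k,k)·2^{-2k-1}, where C(2k,k) is the central binomial coefficient. -/
open MeasureTheory ProbabilityTheory Filter

namespace Stmt1

variable {Ω : Type*}

/-- Partial sums of the increments: `S n = X 0 + ⋯ + X (n-1)`. -/
def S (X : ℕ → Ω → ℝ) (n : ℕ) (ω : Ω) : ℝ := ∑ k ∈ Finset.range n, X k ω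

/-- The event `τ_x = n`: the first time `k ≥ 1` with `x + S k ≤ 0` equals `n`. -/
def tauEq (X : ℕ → Ω → ℝ) (x : ℝ) (n : ℕ) : Set Ω :=
  {ω | x + S X n ω ≤ 0 ∧ ∀ k, 1 ≤ k → k < n → 0 < x + S X k ω}

section Comb

open DyckStep

/-- Integer partial sums of a ±1 path encoded by booleans. -/
def wz {n : ℕ} (ε : Fin n → Bool) (m : ℕ) : ℤ :=
  ∑ i ∈ Finset.range m, if h : i < n then (if ε ⟨i, h⟩ then 1 else -1) else 0

/-- The path `1 + wz` first hits 0 exactly at time `2k+1`. -/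
def good (k : ℕ) (ε : Fin (2 * k + 1) → Bool) : Prop :=
  wz ε (2 * k + 1) ≤ -1 ∧ ∀ m, m < 2 * k + 1 → 1 ≤ m → 0 ≤ wz ε m

lemma wz_zero {n : ℕ} (ε : Fin n → Bool) : wz ε 0 = 0 := by simp [wz]

lemma wz_succ {n : ℕ} (ε : Fin n → Bool) {m : ℕ} (h : m < n) :
    wz ε (m + 1) = wz ε m + (if ε ⟨m, h⟩ then 1 else -1) := by
  rw [wz, Finset.sum_range_succ, dif_pos h]; rfl

lemma good_last {k : ℕ} {ε : Fin (2 * k + 1) → Bool} (hg : good k ε) :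
    wz ε (2 * k) = 0 ∧ ε ⟨2 * k, by omega⟩ = false := by
  have h0 : 0 ≤ wz ε (2 * k) := by
    rcases Nat.eq_zero_or_pos k with hk | hk
    · subst hk; simp [wz_zero]
    · exact hg.2 (2 * k) (by omega) (by omega)
  have h1 := hg.1
  rw [wz_succ ε (by omega : 2 * k < 2 * k + 1)] at h1
  have hb : ε ⟨2 * k, by omega⟩ = false := by
    by_contra hb'
    rw [Bool.not_eq_false] at hb'
    rw [hb'] at h1; simp only [if_true] at h1; omega
  rw [hb] at h1
  simp only [Bool.false_eq_true, if_false] at h1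
  exact ⟨by omega, hb⟩

/-- The Dyck-step word read off from the first `2k` booleans. -/
def toWord (k : ℕ) (ε : Fin (2 * k + 1) → Bool) : List DyckStep :=
  List.ofFn (fun i : Fin (2 * k) => if ε ⟨i, by omega⟩ then U else D)

lemma toWord_length (k : ℕ) (ε : Fin (2 * k + 1) → Bool) : (toWord k ε).length = 2 * k := by
  simp [toWord]

lemma bal_take (k : ℕ) (ε : Fin (2 * k + 1) → Bool) :
    ∀ m, m ≤ 2 * k →
      (((toWord k ε).take m).count U : ℤ) - ((toWord k ε).take m).count D = wz ε m := by
  intro m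
  induction m with
  | zero => simp [wz_zero]
  | succ m ih =>
    intro hm
    have hm' : m < (toWord k ε).length := by rw [toWord_length]; omega
    rw [List.take_succ, List.getElem?_eq_getElem hm']
    have hget : (toWord k ε)[m] = if ε ⟨m, by omega⟩ then U else D := by
      simp [toWord]
    rw [wz_succ ε (by omega : m < 2 * k + 1), ← ih (by omega)]
    simp only [List.count_append, hget, Option.toList_some]
    rcases hb : ε ⟨m, by omega⟩ with _ | _ <;> simp [hb, List.count_singleton'] <;> ring



lemma take_all (k : ℕ) (ε : Fin (2 * k + 1) → Bool) :
    (toWord k ε).take (2 * k) = toWord k ε := by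
  rw [← toWord_length k ε, List.take_length]

lemma take_big (k : ℕ) (ε : Fin (2 * k + 1) → Bool) {i : ℕ} (h : 2 * k ≤ i) :
    (toWord k ε).take i = toWord k ε :=
  List.take_of_length_le (by rw [toWord_length]; exact h)

/-- The Dyck word associated with a good path. -/
def dyckOf (k : ℕ) (ε : Fin (2 * k + 1) → Bool) (hg : good k ε) : DyckWord where
  toList := toWord k ε
  count_U_eq_count_D := by
    have h := bal_take k ε (2 * k) le_rfl
    rw [take_all] at h
    rw [(good_last hg).1] at h
    omega
  count_D_le_count_U i := by
    rcases le_or_gt i (2 * k) with hi | hi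
    · have h := bal_take k ε i hi
      have h0 : 0 ≤ wz ε i := by
        rcases Nat.eq_zero_or_pos i with h1 | h1
        · subst h1; simp [wz_zero]
        · exact hg.2 i (by omega) h1
      omega
    · rw [take_big k ε hi.le]
      have h := bal_take k ε (2 * k) le_rfl
      rw [take_all] at h
      rw [(good_last hg).1] at h
      omega

lemma dyckOf_semilength (k : ℕ) (ε : Fin (2 * k + 1) → Bool) (hg : good k ε) :
    (dyckOf k ε hg).semilength = k := by
  have h := (dyckOf k ε hg).two_mul_semilength_eq_length
  have h2 : (dyckOf k ε hg).toList.length = 2 * k := toWord_length k ε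
  omega

/-- The boolean path associated with a Dyck word. -/
def boolOf (k : ℕ) (p : DyckWord) : Fin (2 * k + 1) → Bool :=
  fun i => if h : (i : ℕ) < p.toList.length then decide (p.toList[(i : ℕ)] = U) else false

lemma length_of_semilength {k : ℕ} {p : DyckWord} (hp : p.semilength = k) :
    p.toList.length = 2 * k := by
  rw [← p.two_mul_semilength_eq_length, hp]

lemma toWord_boolOf {k : ℕ} {p : DyckWord} (hp : p.semilength = k) :
    toWord k (boolOf k p) = p.toList := by
  have hl := length_of_semilength hp
  apply List.ext_getElem (by rw [toWord_length, hl])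
  intro i h1 h2
  have hi : i < 2 * k := by rwa [toWord_length] at h1
  have : (toWord k (boolOf k p))[i] = if boolOf k p ⟨i, by omega⟩ then U else D := by
    simp [toWord]
  rw [this]
  show (if boolOf k p ⟨i, _⟩ then U else D) = _
  unfold boolOf
  simp only [dif_pos (show ((⟨i, by omega⟩ : Fin (2 * k + 1)) : ℕ) < p.toList.length by simpa [hl])]
  rcases (p.toList[i]'h2).dichotomy with h | h <;> simp [h]

lemma good_boolOf {k : ℕ} {p : DyckWord} (hp : p.semilength = k) :
    good k (boolOf k p) := by
  have hl := length_of_semilength hp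
  have hbal : ∀ m, m ≤ 2 * k →
      ((p.toList.take m).count U : ℤ) - (p.toList.take m).count D = wz (boolOf k p) m := by
    intro m hm
    have := bal_take k (boolOf k p) m hm
    rwa [toWord_boolOf hp] at this
  constructor
  · have h2k : wz (boolOf k p) (2 * k) = 0 := by
      have := hbal (2 * k) le_rfl
      rw [List.take_of_length_le (le_of_eq hl), p.count_U_eq_count_D] at this
      omega
    have hlast : boolOf k p ⟨2 * k, by omega⟩ = false := by
      unfold boolOf
      rw [dif_neg]
      simp [hl]
    rw [wz_succ (boolOf k p) (by omega : 2 * k < 2 * k + 1), hlast, h2k]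
    simp
  · intro m hm1 hm2
    have := hbal m (by omega)
    have := p.count_D_le_count_U m
    omega

/-- The equivalence between good paths and Dyck words of semilength `k`. -/
def goodEquiv (k : ℕ) :
    {ε : Fin (2 * k + 1) → Bool // good k ε} ≃ {p : DyckWord // p.semilength = k} where
  toFun ε := ⟨dyckOf k ε.1 ε.2, dyckOf_semilength k ε.1 ε.2⟩
  invFun p := ⟨boolOf k p.1, good_boolOf p.2⟩
  left_inv := by
    rintro ⟨ε, hg⟩
    apply Subtype.ext
    funext i
    show boolOf k (dyckOf k ε hg) i = ε i
    unfold boolOf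
    rcases lt_or_ge (i : ℕ) (2 * k) with hi | hi
    · rw [dif_pos (by simpa [dyckOf, toWord_length] using hi)]
      have : (dyckOf k ε hg).toList[(i : ℕ)]'(by simpa [dyckOf, toWord_length] using hi)
          = if ε ⟨(i : ℕ), by omega⟩ then U else D := by
        simp [dyckOf, toWord]
      rw [this]
      have hieq : (⟨(i : ℕ), by omega⟩ : Fin (2 * k + 1)) = i := by exact Fin.ext rfl
      rw [hieq]
      rcases hb : ε i with _ | _ <;> simp [hb]
    · rw [dif_neg (by simp [dyckOf, toWord_length]; omega)]
      have h2k : (i : ℕ) = 2 * k := by omega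
      have hieq : (⟨2 * k, by omega⟩ : Fin (2 * k + 1)) = i := Fin.ext h2k.symm
      rw [← hieq, (good_last hg).2]
  right_inv := by
    rintro ⟨p, hp⟩
    apply Subtype.ext
    apply DyckWord.ext
    exact toWord_boolOf hp

theorem ncard_good (k : ℕ) :
    Nat.card {ε : Fin (2 * k + 1) → Bool // good k ε} = catalan k := by
  rw [Nat.card_congr (goodEquiv k), Nat.card_eq_fintype_card,
    DyckWord.card_dyckWord_semilength_eq_catalan]



end Comb

open scoped ENNReal NNReal

/-- for the symmetric simple random walk,
`P(τ_1 = 2k+1) = (1/(k+1)) · C(2k,k) · 2^{-2k-1}` for every `k ≥ 0`. -/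
theorem local_tau_one
    [MeasurableSpace Ω] (P : Measure Ω) [IsProbabilityMeasure P]
    (X : ℕ → Ω → ℝ)
    (hmeas : ∀ k, Measurable (X k))
    (hindep : iIndepFun X P)
    (hlaw1 : ∀ k, P {ω | X k ω = 1} = 1/2)
    (hlaw2 : ∀ k, P {ω | X k ω = -1} = 1/2)
    (k : ℕ) :
    (P (tauEq X 1 (2 * k + 1))).toReal
      = (1 / (k + 1 : ℝ)) * (Nat.choose (2 * k) k : ℝ) * (1/2 : ℝ) ^ (2 * k + 1) := by
  classical
  set n := 2 * k + 1 with hn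
  set c : Bool → ℝ := fun b => if b then 1 else -1 with hc
  set B : (Fin n → Bool) → Set Ω := fun ε =>
    ⋂ i ∈ Finset.range n, X i ⁻¹' {c (if h : i < n then ε ⟨i, h⟩ else true)} with hB
  have hmemB : ∀ (ε : Fin n → Bool) (ω : Ω),
      ω ∈ B ε ↔ ∀ i (h : i < n), X i ω = c (ε ⟨i, h⟩) := by
    intro ε ω
    rw [hB]
    simp only [Set.mem_iInter, Finset.mem_range, Set.mem_preimage, Set.mem_singleton_iff]
    constructor
    · intro H i h; have := H i h; rwa [dif_pos h] at this
    · intro H i h; rw [dif_pos h]; exact H i h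
  -- probability of each cylinder
  have hsingle : ∀ (i : ℕ) (b : Bool), P (X i ⁻¹' {c b}) = 1/2 := by
    intro i b
    cases b
    · have := hlaw2 i
      exact this
    · have := hlaw1 i
      exact this
  have hPB : ∀ ε : Fin n → Bool, P (B ε) = (1/2 : ℝ≥0∞) ^ n := by
    intro ε
    have hmul := (iIndepFun_iff_measure_inter_preimage_eq_mul.mp hindep) (Finset.range n)
      (sets := fun i => {c (if h : i < n then ε ⟨i, h⟩ else true)})
      (fun i _ => measurableSet_singleton _)
    rw [hB]
    simp only []
    rw [hmul]
    rw [Finset.prod_congr rfl (fun i _ => hsingle i _), Finset.prod_const, Finset.card_range]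
  -- the bad set is null
  have hNull : ∀ i : ℕ, P {ω | X i ω ≠ 1 ∧ X i ω ≠ -1} = 0 := by
    intro i
    have hm1 : MeasurableSet {ω | X i ω = 1} := (hmeas i) (measurableSet_singleton 1)
    have hm2 : MeasurableSet {ω | X i ω = -1} := (hmeas i) (measurableSet_singleton (-1))
    have hd : Disjoint {ω | X i ω = 1} {ω | X i ω = -1} := by
      rw [Set.disjoint_left]
      rintro ω h1 h2
      simp only [Set.mem_setOf_eq] at h1 h2
      norm_num [h1] at h2
    have hu : P ({ω | X i ω = 1} ∪ {ω | X i ω = -1}) = 1 := by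
      rw [measure_union hd hm2, hlaw1 i, hlaw2 i, one_div]
      exact ENNReal.inv_two_add_inv_two
    have heq : {ω | X i ω ≠ 1 ∧ X i ω ≠ -1} = ({ω | X i ω = 1} ∪ {ω | X i ω = -1})ᶜ := by
      ext ω; simp [not_or]
    rw [heq, measure_compl (hm1.union hm2) (measure_ne_top P _), hu]
    simp
  -- partial sums on a cylinder
  have hS : ∀ (ε : Fin n → Bool) (ω : Ω), ω ∈ B ε → ∀ m, m ≤ n →
      S X m ω = ((wz ε m : ℤ) : ℝ) := by
    intro ε ω hω m hm
    rw [S, wz]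
    push_cast
    apply Finset.sum_congr rfl
    intro i hi
    rw [Finset.mem_range] at hi
    have hin : i < n := lt_of_lt_of_le hi hm
    rw [(hmemB ε ω).mp hω i hin, dif_pos hin]
    rcases hb : ε ⟨i, hin⟩ with _ | _ <;> simp [hc, hb]
  -- the event on a cylinder
  have hAB : ∀ (ε : Fin n → Bool) (ω : Ω), ω ∈ B ε →
      (ω ∈ tauEq X 1 n ↔ good k ε) := by
    intro ε ω hω
    constructor
    · rintro ⟨h1, h2⟩
      constructor
      · have := hS ε ω hω n le_rfl
        rw [this] at h1
        have : ((wz ε n : ℤ) : ℝ) ≤ ((-1 : ℤ) : ℝ) := by push_cast; linarith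
        exact_mod_cast this
      · intro m hm1 hm2
        have hlt := h2 m hm2 hm1
        rw [hS ε ω hω m (by omega)] at hlt
        have : ((-1 : ℤ) : ℝ) < ((wz ε m : ℤ) : ℝ) := by push_cast; linarith
        have : (-1 : ℤ) < wz ε m := by exact_mod_cast this
        omega
    · rintro ⟨h1, h2⟩
      constructor
      · rw [hS ε ω hω n le_rfl]
        have : ((wz ε n : ℤ) : ℝ) ≤ ((-1 : ℤ) : ℝ) := by exact_mod_cast h1
        push_cast at this
        linarith
      · intro m hm1 hm2
        rw [hS ε ω hω m (by omega)]
        have := h2 m hm2 hm1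
        have : ((0 : ℤ) : ℝ) ≤ ((wz ε m : ℤ) : ℝ) := by exact_mod_cast this
        push_cast at this
        linarith
  set G : Finset (Fin n → Bool) := Finset.univ.filter (fun ε => good k ε) with hG
  -- measurability and disjointness
  have hBmeas : ∀ ε : Fin n → Bool, MeasurableSet (B ε) := by
    intro ε
    exact Finset.measurableSet_biInter _
      (fun i _ => (hmeas i) (measurableSet_singleton _))
  have hdisj : (↑G : Set (Fin n → Bool)).PairwiseDisjoint B := by
    intro ε _ ε' _ hne
    rw [Function.onFun, Set.disjoint_left]
    intro ω h1 h2
    obtain ⟨i, hi⟩ : ∃ i, ε i ≠ ε' i := Function.ne_iff.mp hne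
    have e1 := (hmemB ε ω).mp h1 i i.isLt
    have e2 := (hmemB ε' ω).mp h2 i i.isLt
    rw [Fin.eta] at e1 e2
    have hce : c (ε i) = c (ε' i) := by rw [← e1, e2]
    apply hi
    rcases hb : ε i with _ | _ <;> rcases hb' : ε' i with _ | _ <;>
        rw [hb, hb'] at hce <;> first
      | rfl
      | (simp only [hc] at hce; norm_num at hce)
  -- main identity
  have hmain : P (tauEq X 1 n) = ∑ ε ∈ G, P (B ε) := by
    have hUsub : (⋃ ε ∈ G, B ε) ⊆ tauEq X 1 n := by
      intro ω hω
      rw [Set.mem_iUnion₂] at hω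
      obtain ⟨ε, hε, hωε⟩ := hω
      rw [hG, Finset.mem_filter] at hε
      exact (hAB ε ω hωε).mpr hε.2
    have hcov : tauEq X 1 n ⊆ (⋃ ε ∈ G, B ε) ∪ (⋃ i ∈ Finset.range n, {ω | X i ω ≠ 1 ∧ X i ω ≠ -1}) := by
      intro ω hω
      by_cases hωN : ω ∈ ⋃ i ∈ Finset.range n, {ω | X i ω ≠ 1 ∧ X i ω ≠ -1}
      · exact Or.inr hωN
      · left
        rw [Set.mem_iUnion₂] at hωN
        push_neg at hωN
        set ε : Fin n → Bool := fun i => decide (X i ω = 1) with hε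
        have hωB : ω ∈ B ε := by
          rw [hmemB]
          intro i h
          have hor := hωN i (Finset.mem_range.mpr h)
          simp only [Set.mem_setOf_eq, not_and_or, not_not] at hor
          rcases hor with h1 | h1
          · rw [hε]; simp only [h1, decide_true]; simp [hc]
          · rw [hε]
            have : ¬ (X i ω = 1) := by rw [h1]; norm_num
            simp only [this, decide_false]; simp [hc, h1]
        rw [Set.mem_iUnion₂]
        refine ⟨ε, ?_, hωB⟩
        rw [hG, Finset.mem_filter]
        exact ⟨Finset.mem_univ _, (hAB ε ω hωB).mp hω⟩
    have hNle : P (⋃ i ∈ Finset.range n, {ω | X i ω ≠ 1 ∧ X i ω ≠ -1}) = 0 := by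
      refine measure_biUnion_null_iff (Finset.countable_toSet _) |>.mpr ?_
      intro i _
      exact hNull i
    have h1 : P (tauEq X 1 n) ≤ P (⋃ ε ∈ G, B ε) := by
      calc P (tauEq X 1 n) ≤ P ((⋃ ε ∈ G, B ε) ∪ _) := measure_mono hcov
        _ ≤ P (⋃ ε ∈ G, B ε) + P (⋃ i ∈ Finset.range n, {ω | X i ω ≠ 1 ∧ X i ω ≠ -1}) :=
            measure_union_le _ _
        _ = P (⋃ ε ∈ G, B ε) := by rw [hNle, add_zero]
    have h2 : P (⋃ ε ∈ G, B ε) ≤ P (tauEq X 1 n) := measure_mono hUsub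
    rw [le_antisymm h1 h2]
    exact measure_biUnion_finset hdisj (fun ε _ => hBmeas ε)
  -- count
  have hcard : G.card = catalan k := by
    rw [hG, ← Fintype.card_subtype, ← Nat.card_eq_fintype_card]
    exact ncard_good k
  have hsum : P (tauEq X 1 n) = (catalan k : ℝ≥0∞) * (1/2 : ℝ≥0∞) ^ n := by
    rw [hmain, Finset.sum_congr rfl (fun ε _ => hPB ε), Finset.sum_const, hcard, nsmul_eq_mul]
  rw [hsum]
  rw [ENNReal.toReal_mul, ENNReal.toReal_pow, ENNReal.toReal_natCast]
  have h12 : (1/2 : ℝ≥0∞).toReal = (1/2 : ℝ) := by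
    rw [ENNReal.toReal_div]; norm_num
  rw [h12]
  have hcat : ((k : ℝ) + 1) * (catalan k : ℝ) = (Nat.choose (2 * k) k : ℝ) := by
    have := succ_mul_catalan_eq_centralBinom k
    have h2 : (k + 1) * catalan k = Nat.choose (2 * k) k := this
    exact_mod_cast h2
  have hk1 : (k : ℝ) + 1 ≠ 0 := by positivity
  have : (catalan k : ℝ) = 1 / ((k : ℝ) + 1) * (Nat.choose (2 * k) k : ℝ) := by
    field_simp
    linarith [hcat]
  rw [this]
end Stmt1
end

section
/- Let S(n)=X_1+⋯+X_n be a random walk whose increments X_k are i.i.d. integer-valued with P(X_1 ≥ −1)=1 (a left-continuous random walk), and let τ_x=inf{n≥1 : x+S(n)≤0}. Then for all integers x≥1 and n≥1: P(τ_x=n) = (x/n)·P(S(n)=−x). -/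
open MeasureTheory ProbabilityTheory Filter
open scoped ENNReal NNReal

namespace Stmt9Aux

open Finset

/-- Partial sums of `f`. -/
def PS (f : ℕ → ℤ) (m : ℕ) : ℤ := ∑ i ∈ Finset.range m, f i

lemma PS_zero (f : ℕ → ℤ) : PS f 0 = 0 := by simp [PS]

lemma PS_succ (f : ℕ → ℤ) (m : ℕ) : PS f (m + 1) = PS f m + f m := by
  simp [PS, Finset.sum_range_succ]

lemma PS_add (f : ℕ → ℤ) (m k : ℕ) :
    PS f (m + k) = PS f m + ∑ i ∈ Finset.range k, f (m + i) := by
  induction k with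
  | zero => simp
  | succ k ih => rw [← Nat.add_assoc, PS_succ, ih, Finset.sum_range_succ]; ring

section Periodic

variable {f : ℕ → ℤ} {n x : ℕ}

lemma window (hn : 1 ≤ n) (hper : ∀ i, f (i + n) = f i) :
    ∀ m, ∑ i ∈ Finset.range n, f (m + i) = PS f n := by
  intro m
  induction m with
  | zero => simp [PS]
  | succ m ih =>
    obtain ⟨k, hk⟩ : ∃ k, n = k + 1 := ⟨n - 1, by omega⟩
    subst hk
    rw [Finset.sum_range_succ]
    rw [Finset.sum_range_succ'] at ih
    have h1 : ∀ i, m + (i + 1) = m + 1 + i := fun i => by omega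
    have h2 : m + 1 + k = m + (k + 1) := by omega
    have h3 : f (m + (k + 1)) = f m := hper m
    calc (∑ i ∈ Finset.range k, f (m + 1 + i)) + f (m + 1 + k)
        = (∑ i ∈ Finset.range k, f (m + (i + 1))) + f m := by
          rw [h2, h3]; congr 1; exact Finset.sum_congr rfl fun i _ => by congr 1; omega
      _ = PS f (k + 1) := by rw [← ih]; simp
  
lemma PS_per (hn : 1 ≤ n) (hper : ∀ i, f (i + n) = f i) (m : ℕ) :
    PS f (m + n) = PS f m + PS f n := by
  rw [PS_add, window hn hper m]

lemma PS_per' (hn : 1 ≤ n) (hper : ∀ i, f (i + n) = f i) (hsum : PS f n = -(x : ℤ)) (m : ℕ) :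
    PS f (m + n) = PS f m - (x : ℤ) := by
  rw [PS_per hn hper m, hsum]; ring

/-- records: strict running minima. -/
def Rec (f : ℕ → ℤ) (m : ℕ) : Prop := ∀ l, l < m → PS f m < PS f l

instance (f : ℕ → ℤ) : DecidablePred (Rec f) := fun m =>
  Nat.decidableBallLT m fun l _ => PS f m < PS f l

/-- running minimum of `PS f` over `[0, N]`. -/
def Mf (f : ℕ → ℤ) (N : ℕ) : ℤ :=
  ((Finset.range (N + 1)).image (PS f)).min'
    (Finset.Nonempty.image ⟨0, by simp⟩ _)

lemma Mf_le (f : ℕ → ℤ) {l N : ℕ} (h : l ≤ N) : Mf f N ≤ PS f l :=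
  Finset.min'_le _ _ (Finset.mem_image_of_mem _ (by simp; omega))

lemma Mf_exists (f : ℕ → ℤ) (N : ℕ) : ∃ l ≤ N, Mf f N = PS f l := by
  have h := Finset.min'_mem ((Finset.range (N + 1)).image (PS f))
    (Finset.Nonempty.image ⟨0, by simp⟩ _)
  rw [Finset.mem_image] at h
  obtain ⟨l, hl, hl2⟩ := h
  exact ⟨l, by simpa using Nat.lt_succ_iff.mp (Finset.mem_range.mp hl), hl2.symm⟩

lemma Mf_zero (f : ℕ → ℤ) : Mf f 0 = 0 := by
  simp [Mf, PS]

lemma Mf_succ (f : ℕ → ℤ) (N : ℕ) : Mf f (N + 1) = min (Mf f N) (PS f (N + 1)) := by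
  have : Finset.range (N + 1 + 1) = insert (N + 1) (Finset.range (N + 1)) :=
    Finset.range_add_one
  rw [Mf, Mf]
  simp_rw [this, Finset.image_insert]
  rw [Finset.min'_insert, min_comm]

lemma rec_succ_iff (f : ℕ → ℤ) (N : ℕ) : Rec f (N + 1) ↔ PS f (N + 1) < Mf f N := by
  constructor
  · intro h
    obtain ⟨l, hl, hl2⟩ := Mf_exists f N
    rw [hl2]
    exact h l (by omega)
  · intro h l hl
    exact lt_of_lt_of_le h (Mf_le f (by omega))

/-- count of records in `[1, N]`. -/
def cnt (f : ℕ → ℤ) (N : ℕ) : ℕ := ((Finset.Icc 1 N).filter (Rec f)).card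

lemma Icc_succ (N : ℕ) : Finset.Icc 1 (N + 1) = insert (N + 1) (Finset.Icc 1 N) := by
  ext m; simp [Finset.mem_Icc]; omega

lemma cnt_zero (f : ℕ → ℤ) : cnt f 0 = 0 := by simp [cnt]

lemma cnt_spec (hstep : ∀ i, -1 ≤ f i) : ∀ N, (cnt f N : ℤ) = -Mf f N := by
  intro N
  induction N with
  | zero => simp [cnt_zero, Mf_zero]
  | succ N ih =>
    have hcnt : Finset.filter (Rec f) (Finset.Icc 1 (N + 1))
        = if Rec f (N + 1) then insert (N + 1) (Finset.filter (Rec f) (Finset.Icc 1 N))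
          else Finset.filter (Rec f) (Finset.Icc 1 N) := by
      rw [Icc_succ, Finset.filter_insert]
    by_cases h : Rec f (N + 1)
    · have hlt : PS f (N + 1) < Mf f N := (rec_succ_iff f N).mp h
      have hge : Mf f N - 1 ≤ PS f (N + 1) := by
        have h1 : PS f N - 1 ≤ PS f (N + 1) := by
          rw [PS_succ]; have := hstep N; omega
        have h2 : Mf f N ≤ PS f N := Mf_le f (le_refl N)
        omega
      have heq : PS f (N + 1) = Mf f N - 1 := by omega
      have hMf : Mf f (N + 1) = Mf f N - 1 := by
        rw [Mf_succ, heq]; omega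
      have hc : cnt f (N + 1) = cnt f N + 1 := by
        rw [cnt, hcnt, if_pos h, Finset.card_insert_of_notMem (by simp)]; rfl
      rw [hc, hMf]; push_cast; omega
    · have hge : Mf f N ≤ PS f (N + 1) := by
        by_contra hlt
        exact h ((rec_succ_iff f N).mpr (by omega))
      have hMf : Mf f (N + 1) = Mf f N := by
        rw [Mf_succ]; omega
      have hc : cnt f (N + 1) = cnt f N := by
        rw [cnt, hcnt, if_neg h]; rfl
      rw [hc, hMf, ih]

lemma Mf_two (hn : 1 ≤ n) (hper : ∀ i, f (i + n) = f i) (hsum : PS f n = -(x : ℤ)) :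
    Mf f (n + n) = Mf f n - (x : ℤ) := by
  have hle : Mf f (n + n) ≤ Mf f n - (x : ℤ) := by
    obtain ⟨l, hl, hl2⟩ := Mf_exists f n
    have := Mf_le f (show l + n ≤ n + n by omega)
    rw [PS_per' hn hper hsum l] at this
    omega
  have hge : Mf f n - (x : ℤ) ≤ Mf f (n + n) := by
    obtain ⟨m, hm, hm2⟩ := Mf_exists f (n + n)
    rw [hm2]
    by_cases h : m ≤ n
    · have := Mf_le f h; omega
    · have hm' : m = (m - n) + n := by omega
      rw [hm', PS_per' hn hper hsum]
      have := Mf_le f (show m - n ≤ n by omega)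
      omega
  omega

lemma cnt_two (hn : 1 ≤ n) (hper : ∀ i, f (i + n) = f i) (hsum : PS f n = -(x : ℤ))
    (hstep : ∀ i, -1 ≤ f i) : cnt f (n + n) = cnt f n + x := by
  have h1 := cnt_spec hstep (n + n)
  have h2 := cnt_spec hstep n
  have h3 := Mf_two hn hper hsum
  omega

lemma rec_n_iff_two (hn : 1 ≤ n) (hx : 1 ≤ x) (hper : ∀ i, f (i + n) = f i)
    (hsum : PS f n = -(x : ℤ)) : Rec f n ↔ Rec f (n + n) := by
  have hps2 : PS f (n + n) = -(2 * x : ℤ) := by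
    rw [PS_per' hn hper hsum, hsum]; ring
  constructor
  · intro h l hl
    rw [hps2]
    by_cases hc : l < n
    · have := h l hc; rw [hsum] at this
      have hxx : (1 : ℤ) ≤ x := by exact_mod_cast hx
      omega
    · have hl' : l = (l - n) + n := by omega
      rw [hl', PS_per' hn hper hsum]
      have := h (l - n) (by omega)
      rw [hsum] at this
      omega
  · intro h l hl
    have := h (l + n) (by omega)
    rw [hps2, PS_per' hn hper hsum] at this
    rw [hsum]
    omega

/-- `Good j`: the rotation of the sequence by `j` stays strictly above `-x`
before time `n`. -/
def Good (f : ℕ → ℤ) (x : ℕ) (n : ℕ) (j : ℕ) : Prop :=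
  ∀ k, 1 ≤ k → k < n → -(x : ℤ) < PS f (j + k) - PS f j

instance (f : ℕ → ℤ) (x n : ℕ) : DecidablePred (Good f x n) := fun j =>
  decidable_of_iff (∀ k, k < n → 1 ≤ k → -(x : ℤ) < PS f (j + k) - PS f j)
    (by constructor <;> intro h k h1 h2 <;> exact h k h2 h1)

lemma good_iff_rec (hn : 1 ≤ n) (hx : 1 ≤ x) (hper : ∀ i, f (i + n) = f i)
    (hsum : PS f n = -(x : ℤ)) {j : ℕ} (hj : j < n) :
    Good f x n j ↔ Rec f (j + n) := by
  have hxx : (1 : ℤ) ≤ x := by exact_mod_cast hx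
  have hPS : PS f (j + n) = PS f j - (x : ℤ) := PS_per' hn hper hsum j
  constructor
  · intro h l hl
    rw [hPS]
    rcases lt_trichotomy l j with hc | hc | hc
    · -- l < j : use the case j < l + n < j + n
      have h1 : -(x:ℤ) < PS f (j + (l + n - j)) - PS f j :=
        h (l + n - j) (by omega) (by omega)
      have h2 : j + (l + n - j) = l + n := by omega
      rw [h2, PS_per' hn hper hsum l] at h1
      omega
    · subst hc; omega
    · have h1 : -(x:ℤ) < PS f (j + (l - j)) - PS f j := h (l - j) (by omega) (by omega)
      have h2 : j + (l - j) = l := by omega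
      rw [h2] at h1; omega
  · intro h k hk1 hk2
    have := h (j + k) (by omega)
    rw [hPS] at this
    omega

/-- The cycle lemma: exactly `x` of the `n` rotations are good. -/
lemma cycle_count (hn : 1 ≤ n) (hx : 1 ≤ x) (hper : ∀ i, f (i + n) = f i)
    (hsum : PS f n = -(x : ℤ)) (hstep : ∀ i, -1 ≤ f i) :
    ((Finset.range n).filter (Good f x n)).card = x := by
  classical
  -- good j ↔ Rec (j + n), so count Rec over [n, 2n)
  have h1 : ((Finset.range n).filter (Good f x n)).card
      = ((Finset.Ico n (n + n)).filter (Rec f)).card := by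
    apply Finset.card_bij (fun j _ => j + n)
    · intro j hj
      simp only [Finset.mem_filter, Finset.mem_range] at hj
      simp only [Finset.mem_filter, Finset.mem_Ico]
      exact ⟨⟨by omega, by omega⟩, (good_iff_rec hn hx hper hsum hj.1).mp hj.2⟩
    · intro a ha b hb hab; omega
    · intro m hm
      simp only [Finset.mem_filter, Finset.mem_Ico] at hm
      refine ⟨m - n, ?_, by omega⟩
      simp only [Finset.mem_filter, Finset.mem_range]
      have hmn : m - n + n = m := by omega
      refine ⟨by omega, (good_iff_rec hn hx hper hsum (by omega)).mpr ?_⟩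
      rw [hmn]; exact hm.2
  -- replace [n, 2n) by (n, 2n] using Rec n ↔ Rec 2n
  have h2 : ((Finset.Ico n (n + n)).filter (Rec f)).card
      = ((Finset.Ioc n (n + n)).filter (Rec f)).card := by
    have hIco : Finset.Ico n (n + n) = insert n (Finset.Ioo n (n + n)) := by
      ext m; simp [Finset.mem_Ico, Finset.mem_Ioo]; omega
    have hIoc : Finset.Ioc n (n + n) = insert (n + n) (Finset.Ioo n (n + n)) := by
      ext m; simp [Finset.mem_Ioc, Finset.mem_Ioo]; omega
    rw [hIco, hIoc, Finset.filter_insert, Finset.filter_insert]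
    have hrec := rec_n_iff_two hn hx hper hsum
    by_cases h : Rec f n
    · rw [if_pos h, if_pos (hrec.mp h),
        Finset.card_insert_of_notMem (by simp), Finset.card_insert_of_notMem (by simp)]
    · rw [if_neg h, if_neg (fun hc => h (hrec.mpr hc))]
  -- count over (n, 2n] via cnt
  have h3 : ((Finset.Ioc n (n + n)).filter (Rec f)).card = cnt f (n + n) - cnt f n := by
    have hsplit : Finset.Icc 1 (n + n) = Finset.Icc 1 n ∪ Finset.Ioc n (n + n) := by
      ext m; simp [Finset.mem_Icc, Finset.mem_Ioc, Finset.mem_union]; omega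
    have hdisj : Disjoint (Finset.filter (Rec f) (Finset.Icc 1 n))
        (Finset.filter (Rec f) (Finset.Ioc n (n + n))) := by
      apply Finset.disjoint_filter_filter
      rw [Finset.disjoint_left]
      intro m hm1 hm2
      simp [Finset.mem_Icc] at hm1
      simp [Finset.mem_Ioc] at hm2
      omega
    have : cnt f (n + n) = cnt f n + ((Finset.Ioc n (n + n)).filter (Rec f)).card := by
      rw [cnt, hsplit, Finset.filter_union, Finset.card_union_of_disjoint hdisj]; rfl
    omega
  have h4 := cnt_two hn hper hsum hstep
  omega

end Periodic

section Ext

open Fin.NatCast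

variable {n : ℕ} [NeZero n]

/-- periodic extension of a vector `y : Fin n → ℤ` to `ℕ`. -/
def ext (n : ℕ) [NeZero n] (y : Fin n → ℤ) : ℕ → ℤ := fun i => y (i : Fin n)

lemma ext_per (y : Fin n → ℤ) (i : ℕ) : ext n y (i + n) = ext n y i := by
  unfold ext
  congr 1
  rw [Nat.cast_add, Fin.natCast_self, add_zero]

lemma ext_apply_lt (y : Fin n → ℤ) {i : ℕ} (h : i < n) : ext n y i = y ⟨i, h⟩ := by
  unfold ext
  congr 1
  ext
  simp [Nat.mod_eq_of_lt h]

lemma PS_rot (c : Fin n) (y : Fin n → ℤ) (k : ℕ) :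
    PS (ext n (fun j => y (j + c))) k
      = PS (ext n y) (c.val + k) - PS (ext n y) c.val := by
  rw [PS_add]
  have h : ∀ i : ℕ, ext n y (c.val + i) = ext n (fun j => y (j + c)) i := by
    intro i
    unfold ext
    rw [Nat.cast_add, Fin.cast_val_eq_self, add_comm]
  rw [Finset.sum_congr rfl fun i _ => (h i)]
  have hdef : PS (ext n fun j => y (j + c)) k
      = ∑ i ∈ Finset.range k, ext n (fun j => y (j + c)) i := rfl
  rw [hdef]
  ring

end Ext

end Stmt9Aux

open Stmt9Aux

namespace Stmt9

variable {Ω : Type*}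

/-- Partial sums of the integer-valued increments: `S n = X 0 + ⋯ + X (n-1)`. -/
def S (X : ℕ → Ω → ℤ) (n : ℕ) (ω : Ω) : ℤ := ∑ k ∈ Finset.range n, X k ω

/-- The event `τ_x = n`: the first time `k ≥ 1` with `x + S k ≤ 0` equals `n`. -/
def tauEq (X : ℕ → Ω → ℤ) (x : ℤ) (n : ℕ) : Set Ω :=
  {ω | x + S X n ω ≤ 0 ∧ ∀ k, 1 ≤ k → k < n → 0 < x + S X k ω}

/-- Kemperman's formula: for a left-continuous random walk with i.i.d.
integer-valued increments satisfying `P(X_1 ≥ -1) = 1`, one has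
`P(τ_x = n) = (x/n) · P(S(n) = -x)` for all integers `x ≥ 1` and `n ≥ 1`. -/
theorem kemperman
    [MeasurableSpace Ω] (P : Measure Ω) [IsProbabilityMeasure P]
    (X : ℕ → Ω → ℤ)
    (hmeas : ∀ k, Measurable (X k))
    (hindep : iIndepFun X P)
    (hident : ∀ k, IdentDistrib (X k) (X 0) P P)
    (hleft : P {ω | -1 ≤ X 0 ω} = 1)
    (x n : ℕ) (hx : 1 ≤ x) (hn : 1 ≤ n) :
    (P (tauEq X (x : ℤ) n)).toReal
      = ((x : ℝ) / n) * (P {ω | S X n ω = -(x : ℤ)}).toReal := by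
  classical
  haveI : NeZero n := ⟨by omega⟩
  -- every subset of `ℤ` and of `Fin n → ℤ` is measurable
  have hmsZ : ∀ s : Set ℤ, MeasurableSet s := fun s => (Set.to_countable s).measurableSet
  have hms : ∀ s : Set (Fin n → ℤ), MeasurableSet s := fun s =>
    (Set.to_countable s).measurableSet
  set μ : Measure ℤ := P.map (X 0) with hμdef
  haveI : IsProbabilityMeasure μ := Measure.isProbabilityMeasure_map (hmeas 0).aemeasurable
  set π : Measure (Fin n → ℤ) := Measure.pi (fun _ : Fin n => μ) with hπdef
  haveI : IsProbabilityMeasure π := by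
    constructor
    rw [hπdef, ← Set.pi_univ Set.univ, Measure.pi_pi]
    simp
  set J : Ω → (Fin n → ℤ) := fun ω i => X i ω with hJdef
  have hJ : Measurable J := measurable_pi_lambda _ fun i => hmeas i
  have hXk : ∀ (k : ℕ) (t : Set ℤ), P (X k ⁻¹' t) = μ t := by
    intro k t
    rw [hμdef, ← (hident k).map_eq, Measure.map_apply (hmeas k) (hmsZ t)]
  -- the law of `J` is the product measure
  have hmap : P.map J = π := by
    rw [hπdef]
    refine (Measure.pi_eq (μ := fun _ : Fin n => μ) fun s _ => ?_).symm
    rw [Measure.map_apply hJ (hms _)]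
    set sets : ℕ → Set ℤ := fun i => if h : i < n then s ⟨i, h⟩ else Set.univ with hsets
    have hpre : J ⁻¹' Set.pi Set.univ s = ⋂ i ∈ Finset.range n, X i ⁻¹' sets i := by
      ext ω
      simp only [Set.mem_preimage, Set.mem_pi, Set.mem_univ, forall_true_left,
        Set.mem_iInter, Finset.mem_range, hsets, Set.mem_preimage]
      constructor
      · intro h i hi
        rw [dif_pos hi]
        exact h ⟨i, hi⟩
      · intro h i
        have := h i.val i.isLt
        rw [dif_pos i.isLt] at this
        simpa using this
    rw [hpre, hindep.measure_inter_preimage_eq_mul (Finset.range n)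
      (fun i _ => hmsZ (sets i))]
    have := Fin.prod_univ_eq_prod_range (fun i => P (X i ⁻¹' sets i)) n
    rw [← this]
    refine Finset.prod_congr rfl fun i _ => ?_
    rw [hXk]
    congr 1
    rw [hsets]
    simp only [Fin.is_lt, dif_pos, Fin.eta]
  -- the relevant events, as subsets of the product space
  set A : Set (Fin n → ℤ) :=
    {y | (x : ℤ) + PS (ext n y) n ≤ 0 ∧
      ∀ k, 1 ≤ k → k < n → 0 < (x : ℤ) + PS (ext n y) k} with hAdef
  set B : Set (Fin n → ℤ) := {y | PS (ext n y) n = -(x : ℤ)} with hBdef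
  set C : Set (Fin n → ℤ) := {y | ∀ i : Fin n, -1 ≤ y i} with hCdef
  set A' : Set (Fin n → ℤ) :=
    {y | PS (ext n y) n = -(x : ℤ) ∧
      ∀ k, 1 ≤ k → k < n → -(x : ℤ) < PS (ext n y) k} with hA'def
  -- identification of the events in `Ω`
  have hS : ∀ (ω : Ω) (k : ℕ), k ≤ n → S X k ω = PS (ext n (J ω)) k := by
    intro ω k hk
    refine Finset.sum_congr rfl fun i hi => ?_
    rw [Finset.mem_range] at hi
    rw [ext_apply_lt (J ω) (by omega : i < n)]
  have htau : tauEq X (x : ℤ) n = J ⁻¹' A := by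
    ext ω
    simp only [tauEq, Set.mem_setOf_eq, Set.mem_preimage, hAdef]
    constructor
    · rintro ⟨h1, h2⟩
      exact ⟨by rw [← hS ω n le_rfl]; exact h1,
        fun k hk1 hk2 => by rw [← hS ω k (by omega)]; exact h2 k hk1 hk2⟩
    · rintro ⟨h1, h2⟩
      exact ⟨by rw [hS ω n le_rfl]; exact h1,
        fun k hk1 hk2 => by rw [hS ω k (by omega)]; exact h2 k hk1 hk2⟩
  have hBev : {ω | S X n ω = -(x : ℤ)} = J ⁻¹' B := by
    ext ω
    simp only [Set.mem_setOf_eq, Set.mem_preimage, hBdef, hS ω n le_rfl]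
  -- `C` has full measure
  have hC1 : π C = 1 := by
    have hCpi : C = Set.pi Set.univ (fun _ : Fin n => {t : ℤ | -1 ≤ t}) := by
      ext y; simp [hCdef, Set.mem_pi]
    have hμ1 : μ {t : ℤ | -1 ≤ t} = 1 := by
      rw [← hXk 0 {t : ℤ | -1 ≤ t}]
      exact hleft
    rw [hπdef, hCpi, Measure.pi_pi]
    simp [hμ1]
  have hCae : ∀ᵐ y ∂π, y ∈ C := by
    rw [ae_iff]
    have : {y | ¬ y ∈ C} = Cᶜ := rfl
    rw [this, measure_compl (hms C) (measure_ne_top _ _), hC1, measure_univ]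
    simp
  -- on `C`, the events `A` and `A'` agree
  have hstepy : ∀ y ∈ C, ∀ i, -1 ≤ ext n y i := by
    intro y hy i
    exact hy _
  have hAiff : ∀ y ∈ C, (y ∈ A ↔ y ∈ A') := by
    intro y hy
    have hsy := hstepy y hy
    simp only [hAdef, hA'def, Set.mem_setOf_eq]
    constructor
    · rintro ⟨h1, h2⟩
      have hn1 : n - 1 + 1 = n := by omega
      have h3 : PS (ext n y) (n - 1 + 1) = PS (ext n y) (n - 1) + ext n y (n - 1) :=
        PS_succ _ _
      rw [hn1] at h3
      have h4 : (1 : ℤ) ≤ (x : ℤ) + PS (ext n y) (n - 1) := by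
        by_cases hm : 1 ≤ n - 1
        · have := h2 (n - 1) hm (by omega)
          omega
        · have hm0 : n - 1 = 0 := by omega
          rw [hm0, PS_zero]
          omega
      have h5 := hsy (n - 1)
      constructor
      · omega
      · intro k hk1 hk2
        have := h2 k hk1 hk2
        omega
    · rintro ⟨h1, h2⟩
      exact ⟨by omega, fun k hk1 hk2 => by have := h2 k hk1 hk2; omega⟩
  have hAA' : π A = π A' := by
    refine measure_congr ?_
    rw [Filter.eventuallyEq_set]
    filter_upwards [hCae] with y hy
    exact hAiff y hy
  -- rotations are measure preserving
  have hmp : ∀ c : Fin n, MeasurePreserving (fun (y : Fin n → ℤ) (i : Fin n) => y (i + c)) π π := by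
    intro c
    have heq : (fun (y : Fin n → ℤ) (i : Fin n) => y (i + c))
        = ⇑(MeasurableEquiv.arrowCongr' (Equiv.addRight c).symm (MeasurableEquiv.refl ℤ)) := by
      funext y i
      simp [MeasurableEquiv.arrowCongr', Equiv.arrowCongr', Equiv.arrowCongr]
    rw [heq, hπdef]
    exact measurePreserving_arrowCongr' (fun _ => μ) (fun _ => μ) (Equiv.addRight c).symm
      (MeasurableEquiv.refl ℤ) (fun _ => MeasurePreserving.id μ)
  -- rotated first-passage events
  set Gs : Fin n → Set (Fin n → ℤ) := fun c => {y | Good (ext n y) x n c.val} with hGsdef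
  have hrotA' : ∀ c : Fin n,
      (fun (y : Fin n → ℤ) (i : Fin n) => y (i + c)) ⁻¹' A' = Gs c ∩ B := by
    intro c
    ext y
    simp only [Set.mem_preimage, hA'def, Set.mem_setOf_eq, Set.mem_inter_iff, hGsdef,
      hBdef, Good]
    have hper := ext_per (n := n) y
    have hfirst : PS (ext n (fun j => y (j + c))) n = PS (ext n y) n := by
      rw [PS_rot, PS_per hn hper]
      ring
    constructor
    · rintro ⟨h1, h2⟩
      refine ⟨fun k hk1 hk2 => ?_, by rw [← hfirst]; exact h1⟩
      have := h2 k hk1 hk2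
      rw [PS_rot] at this
      exact this
    · rintro ⟨h1, h2⟩
      refine ⟨by rw [hfirst]; exact h2, fun k hk1 hk2 => ?_⟩
      rw [PS_rot]
      exact h1 k hk1 hk2
  -- the pointwise cycle-lemma identity
  have hpoint : ∀ y ∈ C,
      ∑ c : Fin n, (Gs c ∩ B).indicator (1 : (Fin n → ℤ) → ℝ≥0∞) y
        = (x : ℝ≥0∞) * B.indicator 1 y := by
    intro y hy
    by_cases hyB : y ∈ B
    · have hterm : ∀ c : Fin n, (Gs c ∩ B).indicator (1 : (Fin n → ℤ) → ℝ≥0∞) y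
          = if Good (ext n y) x n c.val then 1 else 0 := by
        intro c
        by_cases hg : Good (ext n y) x n c.val
        · rw [Set.indicator_of_mem (show y ∈ Gs c ∩ B from ⟨hg, hyB⟩), if_pos hg]
          rfl
        · rw [Set.indicator_of_notMem (fun hc => hg hc.1), if_neg hg]
      rw [Finset.sum_congr rfl fun c _ => hterm c]
      have hconv := Fin.sum_univ_eq_sum_range
        (fun j => if Good (ext n y) x n j then (1 : ℝ≥0∞) else 0) n
      rw [hconv, Finset.sum_boole,
        cycle_count hn hx (ext_per y) hyB (hstepy y hy)]
      rw [Set.indicator_of_mem hyB]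
      simp
    · have hterm : ∀ c : Fin n, (Gs c ∩ B).indicator (1 : (Fin n → ℤ) → ℝ≥0∞) y = 0 :=
        fun c => Set.indicator_of_notMem (fun hc => hyB hc.2) _
      rw [Finset.sum_congr rfl fun c _ => hterm c, Set.indicator_of_notMem hyB]
      simp
  -- summing over all rotations
  have hsum1 : ∑ c : Fin n, π ((fun (y : Fin n → ℤ) (i : Fin n) => y (i + c)) ⁻¹' A')
      = (n : ℝ≥0∞) * π A' := by
    rw [Finset.sum_congr rfl fun c _ =>
      (hmp c).measure_preimage (hms A').nullMeasurableSet]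
    rw [Finset.sum_const, Finset.card_univ, Fintype.card_fin, nsmul_eq_mul]
  have hsum2 : ∑ c : Fin n, π ((fun (y : Fin n → ℤ) (i : Fin n) => y (i + c)) ⁻¹' A')
      = (x : ℝ≥0∞) * π B := by
    rw [Finset.sum_congr rfl fun c _ => by rw [hrotA' c]]
    have hind : ∀ c : Fin n, π (Gs c ∩ B)
        = ∫⁻ y, (Gs c ∩ B).indicator (1 : (Fin n → ℤ) → ℝ≥0∞) y ∂π :=
      fun c => (lintegral_indicator_one (hms _)).symm
    rw [Finset.sum_congr rfl fun c _ => hind c]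
    rw [← lintegral_finset_sum _ fun c _ => (measurable_one.indicator (hms _))]
    have : ∫⁻ y, (∑ c : Fin n, (Gs c ∩ B).indicator (1 : (Fin n → ℤ) → ℝ≥0∞) y) ∂π
        = ∫⁻ y, (x : ℝ≥0∞) * B.indicator 1 y ∂π := by
      refine lintegral_congr_ae ?_
      filter_upwards [hCae] with y hy
      exact hpoint y hy
    rw [this, lintegral_const_mul _ (measurable_one.indicator (hms _)),
      lintegral_indicator_one (hms B)]
  have hkey : (n : ℝ≥0∞) * π A' = (x : ℝ≥0∞) * π B := hsum1.symm.trans hsum2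
  -- identify the probabilities
  have hPA : P (tauEq X (x : ℤ) n) = π A' := by
    rw [htau, ← Measure.map_apply hJ (hms A), hmap, hAA']
  have hPB : P {ω | S X n ω = -(x : ℤ)} = π B := by
    rw [hBev, ← Measure.map_apply hJ (hms B), hmap]
  -- pass to real numbers
  have hreal : (n : ℝ) * (π A').toReal = (x : ℝ) * (π B).toReal := by
    have := congrArg ENNReal.toReal hkey
    rwa [ENNReal.toReal_mul, ENNReal.toReal_mul, ENNReal.toReal_natCast,
      ENNReal.toReal_natCast] at this
  rw [hPA, hPB]
  have hn0 : (n : ℝ) ≠ 0 := by positivity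
  field_simp
  linarith
  
end Stmt9
end

section
/- Let S(n)=X_1+⋯+X_n be a random walk with i.i.d. real-valued increments. Define τ_0 = inf{n≥1 : S(n) ≤ 0} and τ⁺ = inf{n≥1 : S(n) > 0} (either may be infinite with positive probability; s^τ is interpreted as 0 on {τ=∞}). Then for every s∈[0,1): (1 − E[s^{τ_0}])·(1 − E[s^{τ⁺}]) = 1 − s. -/
open MeasureTheory ProbabilityTheory Filter

namespace Stmt12

variable {Ω : Type*}

/-- Partial sums of the increments: `S n = X 0 + ⋯ + X (n-1)`. -/
def S (X : ℕ → Ω → ℝ) (n : ℕ) (ω : Ω) : ℝ := ∑ k ∈ Finset.range n, X k ω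

/-- The event `τ_0 = n`: the first time `k ≥ 1` with `S k ≤ 0` equals `n`. -/
def tau0Eq (X : ℕ → Ω → ℝ) (n : ℕ) : Set Ω :=
  {ω | S X n ω ≤ 0 ∧ ∀ k, 1 ≤ k → k < n → 0 < S X k ω}

/-- The event `τ⁺ = n`: the first time `k ≥ 1` with `S k > 0` equals `n`. -/
def tauPlusEq (X : ℕ → Ω → ℝ) (n : ℕ) : Set Ω :=
  {ω | 0 < S X n ω ∧ ∀ k, 1 ≤ k → k < n → S X k ω ≤ 0}

/-! ### Auxiliary definitions -/

/-- the event `τ⁺ > k`. -/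
def Uset (X : ℕ → Ω → ℝ) (k : ℕ) : Set Ω := {ω | ∀ m, 1 ≤ m → m ≤ k → S X m ω ≤ 0}

/-- the event `τ_0 > k`. -/
def Vset (X : ℕ → Ω → ℝ) (k : ℕ) : Set Ω := {ω | ∀ m, 1 ≤ m → m ≤ k → 0 < S X m ω}

/-- all partial sums `≤ 0`, as a subset of `ℝ^k`. -/
def Aset (k : ℕ) : Set (Fin k → ℝ) :=
  {x | ∀ m, 1 ≤ m → m ≤ k → (∑ i : Fin k, if (i : ℕ) < m then x i else 0) ≤ 0}

/-- all partial sums `> 0`, as a subset of `ℝ^k`. -/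
def Bset (k : ℕ) : Set (Fin k → ℝ) :=
  {x | ∀ m, 1 ≤ m → m ≤ k → 0 < (∑ i : Fin k, if (i : ℕ) < m then x i else 0)}

/-- event: `k` is the (unique) last minimum place of `S_0, …, S_n`. -/
def Eset (X : ℕ → Ω → ℝ) (n k : ℕ) : Set Ω :=
  {ω | (∀ j, j < k → S X k ω ≤ S X j ω) ∧ ∀ j, k < j → j ≤ n → S X k ω < S X j ω}

lemma measurable_S (X : ℕ → Ω → ℝ) [MeasurableSpace Ω] (hmeas : ∀ k, Measurable (X k)) (n : ℕ) :
    Measurable (S X n) := by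
  unfold S; exact Finset.measurable_sum _ fun i _ => hmeas i

lemma measurableSet_Uset (X : ℕ → Ω → ℝ) [MeasurableSpace Ω] (hmeas : ∀ k, Measurable (X k))
    (k : ℕ) : MeasurableSet (Uset X k) := by
  have : Uset X k = ⋂ (m : ℕ) (_ : 1 ≤ m) (_ : m ≤ k), {ω | S X m ω ≤ 0} := by
    ext ω; simp [Uset]
  rw [this]
  exact MeasurableSet.iInter fun m => MeasurableSet.iInter fun _ => MeasurableSet.iInter fun _ =>
    measurableSet_le (measurable_S X hmeas m) measurable_const

lemma measurableSet_Vset (X : ℕ → Ω → ℝ) [MeasurableSpace Ω] (hmeas : ∀ k, Measurable (X k))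
    (k : ℕ) : MeasurableSet (Vset X k) := by
  have : Vset X k = ⋂ (m : ℕ) (_ : 1 ≤ m) (_ : m ≤ k), {ω | 0 < S X m ω} := by
    ext ω; simp [Vset]
  rw [this]
  exact MeasurableSet.iInter fun m => MeasurableSet.iInter fun _ => MeasurableSet.iInter fun _ =>
    measurableSet_lt measurable_const (measurable_S X hmeas m)

lemma measurableSet_tau0Eq (X : ℕ → Ω → ℝ) [MeasurableSpace Ω] (hmeas : ∀ k, Measurable (X k))
    (n : ℕ) : MeasurableSet (tau0Eq X n) := by
  have : tau0Eq X n = {ω | S X n ω ≤ 0} ∩ ⋂ (k : ℕ) (_ : 1 ≤ k) (_ : k < n), {ω | 0 < S X k ω} := by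
    ext ω; simp [tau0Eq]
  rw [this]
  exact (measurableSet_le (measurable_S X hmeas n) measurable_const).inter
    (MeasurableSet.iInter fun m => MeasurableSet.iInter fun _ => MeasurableSet.iInter fun _ =>
      measurableSet_lt measurable_const (measurable_S X hmeas m))

lemma measurableSet_tauPlusEq (X : ℕ → Ω → ℝ) [MeasurableSpace Ω] (hmeas : ∀ k, Measurable (X k))
    (n : ℕ) : MeasurableSet (tauPlusEq X n) := by
  have : tauPlusEq X n
      = {ω | 0 < S X n ω} ∩ ⋂ (k : ℕ) (_ : 1 ≤ k) (_ : k < n), {ω | S X k ω ≤ 0} := by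
    ext ω; simp [tauPlusEq]
  rw [this]
  exact (measurableSet_lt measurable_const (measurable_S X hmeas n)).inter
    (MeasurableSet.iInter fun m => MeasurableSet.iInter fun _ => MeasurableSet.iInter fun _ =>
      measurableSet_le (measurable_S X hmeas m) measurable_const)

lemma measurableSet_Eset (X : ℕ → Ω → ℝ) [MeasurableSpace Ω] (hmeas : ∀ k, Measurable (X k))
    (n k : ℕ) : MeasurableSet (Eset X n k) := by
  have : Eset X n k = (⋂ (j : ℕ) (_ : j < k), {ω | S X k ω ≤ S X j ω})
      ∩ ⋂ (j : ℕ) (_ : k < j) (_ : j ≤ n), {ω | S X k ω < S X j ω} := by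
    ext ω; simp [Eset]
  rw [this]
  exact (MeasurableSet.iInter fun j => MeasurableSet.iInter fun _ =>
      measurableSet_le (measurable_S X hmeas k) (measurable_S X hmeas j)).inter
    (MeasurableSet.iInter fun j => MeasurableSet.iInter fun _ => MeasurableSet.iInter fun _ =>
      measurableSet_lt (measurable_S X hmeas k) (measurable_S X hmeas j))

lemma measurableSet_Aset (k : ℕ) : MeasurableSet (Aset k) := by
  have : Aset k = ⋂ (m : ℕ) (_ : 1 ≤ m) (_ : m ≤ k),
      {x : Fin k → ℝ | (∑ i : Fin k, if (i : ℕ) < m then x i else 0) ≤ 0} := by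
    ext x; simp [Aset]
  rw [this]
  refine MeasurableSet.iInter fun m => MeasurableSet.iInter fun _ => MeasurableSet.iInter fun _ => ?_
  have hmeas : Measurable fun x : Fin k → ℝ => ∑ i : Fin k, if (i : ℕ) < m then x i else 0 := by
    refine Finset.measurable_sum _ fun i _ => ?_
    by_cases h : (i : ℕ) < m
    · simp only [if_pos h]; exact measurable_pi_apply i
    · simp only [if_neg h]; exact measurable_const
  exact measurableSet_le hmeas measurable_const

lemma measurableSet_Bset (k : ℕ) : MeasurableSet (Bset k) := by
  have : Bset k = ⋂ (m : ℕ) (_ : 1 ≤ m) (_ : m ≤ k),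
      {x : Fin k → ℝ | 0 < (∑ i : Fin k, if (i : ℕ) < m then x i else 0)} := by
    ext x; simp [Bset]
  rw [this]
  refine MeasurableSet.iInter fun m => MeasurableSet.iInter fun _ => MeasurableSet.iInter fun _ => ?_
  have hmeas : Measurable fun x : Fin k → ℝ => ∑ i : Fin k, if (i : ℕ) < m then x i else 0 := by
    refine Finset.measurable_sum _ fun i _ => ?_
    by_cases h : (i : ℕ) < m
    · simp only [if_pos h]; exact measurable_pi_apply i
    · simp only [if_neg h]; exact measurable_const
  exact measurableSet_lt measurable_const hmeas

/-- reindexing a truncated sum of a vector. -/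
lemma sum_if (k m : ℕ) (hm : m ≤ k) (f : ℕ → ℝ) :
    (∑ i : Fin k, if (i : ℕ) < m then f i else 0) = ∑ i ∈ Finset.range m, f i := by
  rw [Fin.sum_univ_eq_sum_range (fun j => if j < m then f j else 0) k, ← Finset.sum_filter]
  congr 1
  ext j
  simp only [Finset.mem_filter, Finset.mem_range]
  omega

section Main

variable [MeasurableSpace Ω] (P : Measure Ω) [IsProbabilityMeasure P]
    (X : ℕ → Ω → ℝ)
    (hmeas : ∀ k, Measurable (X k))
    (hindep : iIndepFun X P)
    (hident : ∀ k, IdentDistrib (X k) (X 0) P P)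

include hmeas hindep hident
set_option linter.unusedSectionVars false

/-- The law of any injectively-indexed tuple of the increments is the product measure. -/
lemma law_pi {k : ℕ} (g : Fin k → ℕ) (hg : Function.Injective g) :
    P.map (fun ω (i : Fin k) => X (g i) ω) = Measure.pi (fun _ => P.map (X 0)) := by
  classical
  have hF : Measurable (fun ω (i : Fin k) => X (g i) ω) :=
    measurable_pi_lambda _ fun i => hmeas (g i)
  haveI : IsProbabilityMeasure (P.map (X 0)) := Measure.isProbabilityMeasure_map (hmeas 0).aemeasurable
  refine (Measure.pi_eq (μ := fun _ : Fin k => P.map (X 0)) (μ' := P.map fun ω (i : Fin k) => X (g i) ω) fun s hs => ?_).symm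
  rw [Measure.map_apply hF (MeasurableSet.univ_pi hs)]
  set sets : ℕ → Set ℝ := fun n => if h : ∃ i, g i = n then s h.choose else Set.univ with hsets
  have hsets_g : ∀ i, sets (g i) = s i := by
    intro i
    have h : ∃ j, g j = g i := ⟨i, rfl⟩
    simp only [hsets, dif_pos h]
    exact congrArg s (hg h.choose_spec)
  have hsets_meas : ∀ n, MeasurableSet (sets n) := by
    intro n
    simp only [hsets]
    split_ifs with h
    · exact hs _
    · exact MeasurableSet.univ
  have hpre : (fun ω (i : Fin k) => X (g i) ω) ⁻¹' Set.pi Set.univ s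
      = ⋂ n ∈ Finset.image g Finset.univ, X n ⁻¹' sets n := by
    ext ω
    simp only [Set.mem_preimage, Set.mem_pi, Set.mem_univ, forall_true_left, Set.mem_iInter,
      Finset.mem_image, Finset.mem_univ, true_and]
    constructor
    · rintro h n ⟨i, rfl⟩
      rw [hsets_g i]; exact h i
    · intro h i
      have := h (g i) ⟨i, rfl⟩
      rwa [hsets_g i] at this
  rw [hpre, hindep.measure_inter_preimage_eq_mul _ (fun n _ => hsets_meas n),
    Finset.prod_image (fun i _ j _ h => hg h)]
  refine Finset.prod_congr rfl fun i _ => ?_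
  rw [hsets_g i, (hident (g i)).measure_mem_eq (hs i), Measure.map_apply (hmeas 0) (hs i)]

/-- probability of a tuple-event does not depend on the injection used. -/
lemma prob_eq {k : ℕ} (g g' : Fin k → ℕ) (hg : Function.Injective g)
    (hg' : Function.Injective g') {A : Set (Fin k → ℝ)} (hA : MeasurableSet A) :
    P ((fun ω (i : Fin k) => X (g i) ω) ⁻¹' A) = P ((fun ω (i : Fin k) => X (g' i) ω) ⁻¹' A) := by
  have hF : Measurable (fun ω (i : Fin k) => X (g i) ω) :=
    measurable_pi_lambda _ fun i => hmeas (g i)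
  have hF' : Measurable (fun ω (i : Fin k) => X (g' i) ω) :=
    measurable_pi_lambda _ fun i => hmeas (g' i)
  rw [← Measure.map_apply hF hA, ← Measure.map_apply hF' hA,
    law_pi P X hmeas hindep hident g hg, law_pi P X hmeas hindep hident g' hg']

/-- Independence of events over disjoint index tuples. -/
lemma indep_parts {k m : ℕ} (g1 : Fin k → ℕ) (g2 : Fin m → ℕ)
    (hdisj : ∀ i j, g1 i ≠ g2 j) {A : Set (Fin k → ℝ)} {B : Set (Fin m → ℝ)}
    (hA : MeasurableSet A) (hB : MeasurableSet B) :
    P ((fun ω (i : Fin k) => X (g1 i) ω) ⁻¹' A ∩ (fun ω (i : Fin m) => X (g2 i) ω) ⁻¹' B)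
      = P ((fun ω (i : Fin k) => X (g1 i) ω) ⁻¹' A)
        * P ((fun ω (i : Fin m) => X (g2 i) ω) ⁻¹' B) := by
  classical
  set Sf : Finset ℕ := Finset.image g1 Finset.univ with hSf
  set Tf : Finset ℕ := Finset.image g2 Finset.univ with hTf
  have hdis : Disjoint Sf Tf := by
    rw [Finset.disjoint_left]
    rintro n hn hn'
    simp only [hSf, hTf, Finset.mem_image, Finset.mem_univ, true_and] at hn hn'
    obtain ⟨i, rfl⟩ := hn
    obtain ⟨j, hj⟩ := hn'
    exact hdisj i j hj.symm
  have h := hindep.indepFun_finset Sf Tf hdis hmeas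
  let φ1 : ((i : Sf) → ℝ) → (Fin k → ℝ) :=
    fun v i => v ⟨g1 i, Finset.mem_image_of_mem _ (Finset.mem_univ i)⟩
  let φ2 : ((i : Tf) → ℝ) → (Fin m → ℝ) :=
    fun v i => v ⟨g2 i, Finset.mem_image_of_mem _ (Finset.mem_univ i)⟩
  have hφ1 : Measurable φ1 := measurable_pi_lambda _ fun i => measurable_pi_apply _
  have hφ2 : Measurable φ2 := measurable_pi_lambda _ fun i => measurable_pi_apply _
  have h2 := h.comp hφ1 hφ2
  have e1 : (φ1 ∘ fun a (i : Sf) => X i a) = fun ω (i : Fin k) => X (g1 i) ω := rfl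
  have e2 : (φ2 ∘ fun a (i : Tf) => X i a) = fun ω (i : Fin m) => X (g2 i) ω := rfl
  rw [e1, e2] at h2
  exact h2.measure_inter_preimage_eq_mul _ _ hA hB

/-- identification of `Uset` as a tuple event. -/
lemma Uset_eq (k : ℕ) :
    Uset X k = (fun ω (i : Fin k) => X (i : ℕ) ω) ⁻¹' Aset k := by
  ext ω
  simp only [Uset, Aset, Set.mem_setOf_eq, Set.mem_preimage]
  refine forall_congr' fun m => forall_congr' fun h1 => forall_congr' fun h2 => ?_
  have e : (∑ i : Fin k, if (i : ℕ) < m then (fun j => X j ω) (i : ℕ) else 0)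
      = ∑ i ∈ Finset.range m, X i ω := sum_if k m h2 (fun j => X j ω)
  rw [e]; rfl

lemma Vset_eq (k : ℕ) :
    Vset X k = (fun ω (i : Fin k) => X (i : ℕ) ω) ⁻¹' Bset k := by
  ext ω
  simp only [Vset, Bset, Set.mem_setOf_eq, Set.mem_preimage]
  refine forall_congr' fun m => forall_congr' fun h1 => forall_congr' fun h2 => ?_
  have e : (∑ i : Fin k, if (i : ℕ) < m then (fun j => X j ω) (i : ℕ) else 0)
      = ∑ i ∈ Finset.range m, X i ω := sum_if k m h2 (fun j => X j ω)
  rw [e]; rfl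

/-- first part of `Eset` as a tuple event over reversed indices. -/
lemma part1_eq (k : ℕ) :
    {ω | ∀ j, j < k → S X k ω ≤ S X j ω}
      = (fun ω (i : Fin k) => X (k - 1 - (i : ℕ)) ω) ⁻¹' Aset k := by
  ext ω
  simp only [Set.mem_setOf_eq, Set.mem_preimage, Aset]
  have key : ∀ m, 1 ≤ m → m ≤ k →
      (∑ i : Fin k, if (i : ℕ) < m then X (k - 1 - (i : ℕ)) ω else 0)
        = S X k ω - S X (k - m) ω := by
    intro m h1 h2
    have e : (∑ i : Fin k, if (i : ℕ) < m then X (k - 1 - (i : ℕ)) ω else 0)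
        = ∑ i ∈ Finset.range m, X (k - 1 - i) ω := sum_if k m h2 (fun j => X (k - 1 - j) ω)
    have e2 : ∑ i ∈ Finset.range m, X (k - 1 - i) ω = ∑ i ∈ Finset.range m, X (k - m + i) ω := by
      rw [← Finset.sum_range_reflect (fun i => X (k - m + i) ω) m]
      refine Finset.sum_congr rfl fun j hj => ?_
      rw [Finset.mem_range] at hj
      congr 1
      omega
    have e3 : S X k ω = S X (k - m) ω + ∑ i ∈ Finset.range m, X (k - m + i) ω := by
      unfold S
      have hk : k = (k - m) + m := by omega
      nth_rewrite 1 [hk]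
      rw [Finset.sum_range_add]
    rw [e, e2]
    linarith
  constructor
  · intro h m h1 h2
    rw [key m h1 h2]
    have := h (k - m) (by omega)
    linarith
  · intro h j hj
    have h1 := key (k - j) (by omega) (by omega)
    have h2 := h (k - j) (by omega) (by omega)
    rw [h1] at h2
    have : k - (k - j) = j := by omega
    rw [this] at h2
    linarith

/-- second part of `Eset` as a tuple event over shifted indices. -/
lemma part2_eq (n k : ℕ) (hk : k ≤ n) :
    {ω | ∀ j, k < j → j ≤ n → S X k ω < S X j ω}
      = (fun ω (i : Fin (n - k)) => X (k + (i : ℕ)) ω) ⁻¹' Bset (n - k) := by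
  ext ω
  simp only [Set.mem_setOf_eq, Set.mem_preimage, Bset]
  have key : ∀ m, 1 ≤ m → m ≤ n - k →
      (∑ i : Fin (n - k), if (i : ℕ) < m then X (k + (i : ℕ)) ω else 0)
        = S X (k + m) ω - S X k ω := by
    intro m h1 h2
    have e : (∑ i : Fin (n - k), if (i : ℕ) < m then X (k + (i : ℕ)) ω else 0)
        = ∑ i ∈ Finset.range m, X (k + i) ω := sum_if (n - k) m h2 (fun j => X (k + j) ω)
    have e3 : S X (k + m) ω = S X k ω + ∑ i ∈ Finset.range m, X (k + i) ω := by
      unfold S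
      rw [← Finset.sum_range_add]
    rw [e]
    linarith
  constructor
  · intro h m h1 h2
    rw [key m h1 h2]
    have := h (k + m) (by omega) (by omega)
    linarith
  · intro h j hj1 hj2
    have h1 := key (j - k) (by omega) (by omega)
    have h2 := h (j - k) (by omega) (by omega)
    rw [h1] at h2
    have : k + (j - k) = j := by omega
    rw [this] at h2
    linarith

lemma Eset_prob (n k : ℕ) (hk : k ≤ n) :
    P (Eset X n k) = P (Uset X k) * P (Vset X (n - k)) := by
  have hE : Eset X n k = {ω | ∀ j, j < k → S X k ω ≤ S X j ω}
      ∩ {ω | ∀ j, k < j → j ≤ n → S X k ω < S X j ω} := rfl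
  have hdisj : ∀ (i : Fin k) (j : Fin (n - k)), k - 1 - (i : ℕ) ≠ k + (j : ℕ) := by
    intro i j
    have := i.isLt
    omega
  rw [hE, part1_eq P X hmeas hindep hident k, part2_eq P X hmeas hindep hident n k hk,
    indep_parts P X hmeas hindep hident _ _ hdisj (measurableSet_Aset k)
      (measurableSet_Bset (n - k))]
  have hrev : Function.Injective (fun i : Fin k => k - 1 - (i : ℕ)) := by
    intro i j hij
    have hi := i.isLt
    have hj := j.isLt
    simp only at hij
    exact Fin.ext (by omega)
  have hsh : Function.Injective (fun i : Fin (n - k) => k + (i : ℕ)) := by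
    intro i j hij
    simp only at hij
    exact Fin.ext (by omega)
  have hval1 : Function.Injective (fun i : Fin k => (i : ℕ)) := Fin.val_injective
  have hval2 : Function.Injective (fun i : Fin (n - k) => (i : ℕ)) := Fin.val_injective
  congr 1
  · rw [Uset_eq P X hmeas hindep hident k]
    exact prob_eq P X hmeas hindep hident _ _ hrev hval1 (measurableSet_Aset k)
  · rw [Vset_eq P X hmeas hindep hident (n - k)]
    exact prob_eq P X hmeas hindep hident _ _ hsh hval2 (measurableSet_Bset (n - k))

lemma Eset_partition (n : ℕ) :
    ∑ k ∈ Finset.range (n + 1), P (Eset X n k) = 1 := by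
  classical
  have hme : ∀ k ∈ Finset.range (n + 1), MeasurableSet (Eset X n k) :=
    fun k _ => measurableSet_Eset X hmeas n k
  have hdis : (↑(Finset.range (n + 1)) : Set ℕ).PairwiseDisjoint (Eset X n) := by
    intro k1 h1 k2 h2 hne
    simp only [Finset.coe_range, Set.mem_Iio] at h1 h2
    refine Set.disjoint_left.2 fun ω hω1 hω2 => ?_
    rcases lt_or_gt_of_ne hne with h | h
    · have a1 := hω1.2 k2 h (by omega)
      have a2 := hω2.1 k1 h
      linarith
    · have a1 := hω2.2 k1 h (by omega)
      have a2 := hω1.1 k2 h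
      linarith
  have hcov : ⋃ k ∈ Finset.range (n + 1), Eset X n k = Set.univ := by
    refine Set.eq_univ_of_forall fun ω => ?_
    have hex : ∀ N : ℕ, ∃ k ≤ N, (∀ j, j < k → S X k ω ≤ S X j ω)
        ∧ ∀ j, k < j → j ≤ N → S X k ω < S X j ω := by
      intro N
      induction N with
      | zero => exact ⟨0, le_rfl, fun j hj => absurd hj (Nat.not_lt_zero j), fun j h1 h2 => by omega⟩
      | succ N ih =>
        obtain ⟨k, hkN, h1, h2⟩ := ih
        by_cases hc : S X k ω < S X (N + 1) ω
        · refine ⟨k, by omega, h1, fun j hj1 hj2 => ?_⟩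
          rcases Nat.lt_or_ge j (N + 1) with hj | hj
          · exact h2 j hj1 (by omega)
          · have : j = N + 1 := by omega
            rw [this]; exact hc
        · push_neg at hc
          refine ⟨N + 1, le_rfl, fun j hj => ?_, fun j hj1 hj2 => by omega⟩
          rcases Nat.lt_trichotomy j k with h | h | h
          · exact le_trans hc (le_trans (h1 j h) le_rfl)
          · rw [← h] at hc; exact hc
          · rcases Nat.lt_or_ge j (N + 1) with hj' | hj'
            · exact le_trans hc (le_of_lt (h2 j h (by omega)))
            · omega
    obtain ⟨k, hkn, h1, h2⟩ := hex n
    simp only [Set.mem_iUnion, Finset.mem_range]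
    exact ⟨k, by omega, h1, h2⟩
  rw [← measure_biUnion_finset hdis hme, hcov, measure_univ]

lemma key_identity (n : ℕ) :
    ∑ k ∈ Finset.range (n + 1),
      (P (Uset X k)).toReal * (P (Vset X (n - k))).toReal = 1 := by
  have h1 := Eset_partition P X hmeas hindep hident n
  have h2 : ∀ k ∈ Finset.range (n + 1),
      P (Eset X n k) = P (Uset X k) * P (Vset X (n - k)) := by
    intro k hk
    rw [Finset.mem_range] at hk
    exact Eset_prob P X hmeas hindep hident n k (by omega)
  rw [Finset.sum_congr rfl h2] at h1
  have h3 := congrArg ENNReal.toReal h1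
  rw [ENNReal.toReal_sum (fun k _ => ENNReal.mul_ne_top (measure_ne_top P _)
    (measure_ne_top P _))] at h3
  simpa [ENNReal.toReal_mul] using h3

lemma Vset_split (n : ℕ) :
    (P (Vset X n)).toReal = (P (Vset X (n+1))).toReal + (P (tau0Eq X (n+1))).toReal := by
  have hsplit : Vset X n = Vset X (n+1) ∪ tau0Eq X (n+1) := by
    ext ω
    simp only [Vset, tau0Eq, Set.mem_setOf_eq, Set.mem_union]
    constructor
    · intro h
      by_cases hS : 0 < S X (n+1) ω
      · left
        intro m h1 h2
        rcases Nat.lt_or_ge m (n+1) with hm | hm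
        · exact h m h1 (by omega)
        · have : m = n + 1 := by omega
          rw [this]; exact hS
      · right
        exact ⟨by linarith [not_lt.1 hS], fun m h1 h2 => h m h1 (by omega)⟩
    · rintro (h | h)
      · exact fun m h1 h2 => h m h1 (by omega)
      · exact fun m h1 h2 => h.2 m h1 (by omega)
  have hdisj : Disjoint (Vset X (n+1)) (tau0Eq X (n+1)) := by
    refine Set.disjoint_left.2 fun ω h1 h2 => ?_
    have := h1 (n+1) (by omega) le_rfl
    linarith [h2.1]
  rw [hsplit, measure_union hdisj (measurableSet_tau0Eq X hmeas (n+1)),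
    ENNReal.toReal_add (measure_ne_top P _) (measure_ne_top P _)]

lemma Uset_split (n : ℕ) :
    (P (Uset X n)).toReal = (P (Uset X (n+1))).toReal + (P (tauPlusEq X (n+1))).toReal := by
  have hsplit : Uset X n = Uset X (n+1) ∪ tauPlusEq X (n+1) := by
    ext ω
    simp only [Uset, tauPlusEq, Set.mem_setOf_eq, Set.mem_union]
    constructor
    · intro h
      by_cases hS : S X (n+1) ω ≤ 0
      · left
        intro m h1 h2
        rcases Nat.lt_or_ge m (n+1) with hm | hm
        · exact h m h1 (by omega)
        · have : m = n + 1 := by omega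
          rw [this]; exact hS
      · right
        exact ⟨by linarith [not_le.1 hS], fun m h1 h2 => h m h1 (by omega)⟩
    · rintro (h | h)
      · exact fun m h1 h2 => h m h1 (by omega)
      · exact fun m h1 h2 => h.2 m h1 (by omega)
  have hdisj : Disjoint (Uset X (n+1)) (tauPlusEq X (n+1)) := by
    refine Set.disjoint_left.2 fun ω h1 h2 => ?_
    have := h1 (n+1) (by omega) le_rfl
    linarith [h2.1]
  rw [hsplit, measure_union hdisj (measurableSet_tauPlusEq X hmeas (n+1)),
    ENNReal.toReal_add (measure_ne_top P _) (measure_ne_top P _)]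

end Main

/-- Wiener–Hopf identity: for a random walk with i.i.d. real increments and
`s ∈ [0,1)`: `(1 - E[s^{τ_0}])(1 - E[s^{τ⁺}]) = 1 - s`, where on `{τ = ∞}` the value
`s^τ` is `0`, so `E[s^τ] = ∑_{n≥1} s^n P(τ = n)`. -/
theorem wiener_hopf
    [MeasurableSpace Ω] (P : Measure Ω) [IsProbabilityMeasure P]
    (X : ℕ → Ω → ℝ)
    (hmeas : ∀ k, Measurable (X k))
    (hindep : iIndepFun X P)
    (hident : ∀ k, IdentDistrib (X k) (X 0) P P)
    (s : ℝ) (hs : s ∈ Set.Ico (0:ℝ) 1) :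
    (1 - ∑' n : ℕ, s ^ (n + 1) * (P (tau0Eq X (n + 1))).toReal)
      * (1 - ∑' n : ℕ, s ^ (n + 1) * (P (tauPlusEq X (n + 1))).toReal)
      = 1 - s := by
  obtain ⟨hs0, hs1⟩ := hs
  have hs1' : (1 : ℝ) - s ≠ 0 := by linarith
  set u : ℕ → ℝ := fun k => (P (Uset X k)).toReal with hu
  set v : ℕ → ℝ := fun k => (P (Vset X k)).toReal with hv
  have hu0 : u 0 = 1 := by
    have h : Uset X 0 = Set.univ := by
      ext ω; simp only [Uset, Set.mem_setOf_eq, Set.mem_univ, iff_true]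
      intro m h1 h2; omega
    simp [hu, h]
  have hv0 : v 0 = 1 := by
    have h : Vset X 0 = Set.univ := by
      ext ω; simp only [Vset, Set.mem_setOf_eq, Set.mem_univ, iff_true]
      intro m h1 h2; omega
    simp [hv, h]
  have hunn : ∀ k, 0 ≤ u k := fun k => ENNReal.toReal_nonneg
  have hvnn : ∀ k, 0 ≤ v k := fun k => ENNReal.toReal_nonneg
  have hule : ∀ k, u k ≤ 1 := fun k => by
    simpa using ENNReal.toReal_mono ENNReal.one_ne_top (prob_le_one (μ := P) (s := Uset X k))
  have hvle : ∀ k, v k ≤ 1 := fun k => by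
    simpa using ENNReal.toReal_mono ENNReal.one_ne_top (prob_le_one (μ := P) (s := Vset X k))
  have hgeo : Summable (fun n : ℕ => s ^ n) := summable_geometric_of_lt_one hs0 hs1
  have hsum_u : Summable (fun k => s ^ k * u k) :=
    Summable.of_nonneg_of_le (fun k => mul_nonneg (pow_nonneg hs0 k) (hunn k))
      (fun k => mul_le_of_le_one_right (pow_nonneg hs0 k) (hule k)) hgeo
  have hsum_v : Summable (fun k => s ^ k * v k) :=
    Summable.of_nonneg_of_le (fun k => mul_nonneg (pow_nonneg hs0 k) (hvnn k))
      (fun k => mul_le_of_le_one_right (pow_nonneg hs0 k) (hvle k)) hgeo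
  set Ub : ℝ := ∑' k, s ^ k * u k with hUb
  set W : ℝ := ∑' k, s ^ k * v k with hW
  -- first factor
  have habel : ∀ (w : ℕ → ℝ) (c : ℕ → ℝ), (∀ n, w n = w (n+1) + c (n+1)) → w 0 = 1 →
      Summable (fun k => s ^ k * w k) →
      1 - (∑' n : ℕ, s ^ (n + 1) * c (n + 1)) = (1 - s) * ∑' k, s ^ k * w k := by
    intro w c hrec hw0 hsw
    have h1 : Summable (fun n => s ^ (n + 1) * w n) := by
      have : (fun n => s ^ (n + 1) * w n) = fun n => s * (s ^ n * w n) := by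
        funext n; ring
      rw [this]
      exact hsw.mul_left s
    have h2 : Summable (fun n => s ^ (n + 1) * w (n + 1)) := (summable_nat_add_iff 1).2 hsw
    have e0 : ∀ n : ℕ, s ^ (n + 1) * c (n + 1) = s ^ (n + 1) * w n - s ^ (n + 1) * w (n + 1) := by
      intro n
      rw [hrec n]; ring
    have e1 : ∑' n : ℕ, s ^ (n + 1) * w n = s * ∑' k, s ^ k * w k := by
      rw [← tsum_mul_left]
      exact tsum_congr fun n => by ring
    have e2 : ∑' n : ℕ, s ^ (n + 1) * w (n + 1) = (∑' k, s ^ k * w k) - 1 := by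
      have := Summable.tsum_eq_zero_add hsw
      rw [pow_zero, hw0] at this
      linarith [this]
    calc 1 - (∑' n : ℕ, s ^ (n + 1) * c (n + 1))
        = 1 - ∑' n : ℕ, (s ^ (n + 1) * w n - s ^ (n + 1) * w (n + 1)) := by
          rw [tsum_congr e0]
      _ = 1 - ((∑' n : ℕ, s ^ (n + 1) * w n) - ∑' n : ℕ, s ^ (n + 1) * w (n + 1)) := by
          rw [Summable.tsum_sub h1 h2]
      _ = (1 - s) * ∑' k, s ^ k * w k := by
          rw [e1, e2]; ring
  have hA : 1 - (∑' n : ℕ, s ^ (n + 1) * (P (tau0Eq X (n + 1))).toReal) = (1 - s) * W := by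
    exact habel v (fun n => (P (tau0Eq X n)).toReal)
      (fun n => Vset_split P X hmeas hindep hident n) hv0 hsum_v
  have hB : 1 - (∑' n : ℕ, s ^ (n + 1) * (P (tauPlusEq X (n + 1))).toReal) = (1 - s) * Ub := by
    exact habel u (fun n => (P (tauPlusEq X n)).toReal)
      (fun n => Uset_split P X hmeas hindep hident n) hu0 hsum_u
  -- Cauchy product
  have hnu : Summable (fun k => ‖s ^ k * u k‖) := by
    refine hsum_u.congr fun k => ?_
    rw [Real.norm_of_nonneg (mul_nonneg (pow_nonneg hs0 k) (hunn k))]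
  have hnv : Summable (fun k => ‖s ^ k * v k‖) := by
    refine hsum_v.congr fun k => ?_
    rw [Real.norm_of_nonneg (mul_nonneg (pow_nonneg hs0 k) (hvnn k))]
  have hcauchy : Ub * W = (1 - s)⁻¹ := by
    rw [hUb, hW, tsum_mul_tsum_eq_tsum_sum_range_of_summable_norm hnu hnv]
    have hterm : ∀ n : ℕ, (∑ k ∈ Finset.range (n + 1), (s ^ k * u k) * (s ^ (n - k) * v (n - k)))
        = s ^ n := by
      intro n
      have : ∀ k ∈ Finset.range (n + 1),
          (s ^ k * u k) * (s ^ (n - k) * v (n - k)) = s ^ n * (u k * v (n - k)) := by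
        intro k hk
        rw [Finset.mem_range] at hk
        have : s ^ k * s ^ (n - k) = s ^ n := by
          rw [← pow_add]
          congr 1
          omega
        calc (s ^ k * u k) * (s ^ (n - k) * v (n - k))
            = (s ^ k * s ^ (n - k)) * (u k * v (n - k)) := by ring
          _ = s ^ n * (u k * v (n - k)) := by rw [this]
      rw [Finset.sum_congr rfl this, ← Finset.mul_sum,
        key_identity P X hmeas hindep hident n, mul_one]
    rw [tsum_congr hterm]
    exact tsum_geometric_of_lt_one hs0 hs1
  rw [hA, hB]
  calc (1 - s) * W * ((1 - s) * Ub) = (1 - s) * ((1 - s) * (Ub * W)) := by ring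
    _ = 1 - s := by rw [hcauchy, mul_inv_cancel₀ hs1', mul_one]

end Stmt12
end

section
/- Let S(n)=X_1+⋯+X_n be a random walk with i.i.d. real-valued increments whose common distribution is symmetric (X_1 and −X_1 have the same law) and atomless (P(X_1=x)=0 for every x). Let τ_0 = inf{n≥1 : S(n) ≤ 0}. Then E[s^{τ_0}] = 1 − √(1−s) for all s∈[0,1), and consequently P(τ_0>n) = C(2n,n)·2^{−2n} for every n≥1. -/
open MeasureTheory ProbabilityTheory Filter

namespace Stmt13

variable {Ω : Type*}

/-- Partial sums of the increments: `S n = X 0 + ⋯ + X (n-1)`. -/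
def S (X : ℕ → Ω → ℝ) (n : ℕ) (ω : Ω) : ℝ := ∑ k ∈ Finset.range n, X k ω

/-- The event `τ_0 = n`: the first time `k ≥ 1` with `S k ≤ 0` equals `n`. -/
def tau0Eq (X : ℕ → Ω → ℝ) (n : ℕ) : Set Ω :=
  {ω | S X n ω ≤ 0 ∧ ∀ k, 1 ≤ k → k < n → 0 < S X k ω}

/-- The event `τ_0 > n`, i.e. `S k > 0` for all `1 ≤ k ≤ n`. -/
def tau0Gt (X : ℕ → Ω → ℝ) (n : ℕ) : Set Ω :=
  {ω | ∀ k, 1 ≤ k → k ≤ n → 0 < S X k ω}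

set_option linter.unusedSectionVars false

section AuxiliaryLemmas



/-- Convolution identity for central binomial coefficients. -/
theorem cb_conv : ∀ n : ℕ, ∑ k ∈ Finset.range (n+1),
    Nat.centralBinom k * Nat.centralBinom (n - k) = 4 ^ n := by
  intro n
  induction n with
  | zero => simp [Nat.centralBinom]
  | succ n ih =>
    have h6 : 2 * ∑ k ∈ Finset.range (n+1),
          k * (Nat.centralBinom k * Nat.centralBinom (n-k)) = n * 4^n := by
      have hrefl : ∑ k ∈ Finset.range (n+1),
            (n-k) * (Nat.centralBinom k * Nat.centralBinom (n-k))
          = ∑ k ∈ Finset.range (n+1),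
            k * (Nat.centralBinom k * Nat.centralBinom (n-k)) := by
        rw [← Finset.sum_range_reflect]
        refine Finset.sum_congr rfl fun k hk => ?_
        have hk' : k ≤ n := Nat.lt_succ_iff.mp (Finset.mem_range.mp hk)
        have h2 : n - (n - k) = k := Nat.sub_sub_self hk'
        simp [h2, mul_comm]
      have : ∑ k ∈ Finset.range (n+1),
            (k + (n-k)) * (Nat.centralBinom k * Nat.centralBinom (n-k)) = n * 4^n := by
        rw [← ih, Finset.mul_sum]
        refine Finset.sum_congr rfl fun k hk => ?_
        rw [Nat.add_sub_cancel' (Nat.lt_succ_iff.mp (Finset.mem_range.mp hk))]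
      rw [two_mul]
      calc _ = ∑ k ∈ Finset.range (n+1),
            (k + (n-k)) * (Nat.centralBinom k * Nat.centralBinom (n-k)) := by
              simp only [add_mul]; rw [Finset.sum_add_distrib, hrefl]
        _ = n * 4^n := this
    have key : (n+1) * ∑ k ∈ Finset.range (n+2),
        Nat.centralBinom k * Nat.centralBinom (n+1-k) = (n+1) * 4^(n+1) := by
      have h1 : (n+1) * ∑ k ∈ Finset.range (n+2),
          Nat.centralBinom k * Nat.centralBinom (n+1-k)
          = ∑ k ∈ Finset.range (n+2),
            (k + (n+1-k)) * (Nat.centralBinom k * Nat.centralBinom (n+1-k)) := by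
        rw [Finset.mul_sum]
        refine Finset.sum_congr rfl fun k hk => ?_
        rw [Nat.add_sub_cancel' (Nat.lt_succ_iff.mp (Finset.mem_range.mp hk))]
      have hrefl : ∑ k ∈ Finset.range (n+2),
            (n+1-k) * (Nat.centralBinom k * Nat.centralBinom (n+1-k))
          = ∑ k ∈ Finset.range (n+2),
            k * (Nat.centralBinom k * Nat.centralBinom (n+1-k)) := by
        rw [← Finset.sum_range_reflect]
        refine Finset.sum_congr rfl fun k hk => ?_
        have hk' : k ≤ n + 1 := Nat.lt_succ_iff.mp (Finset.mem_range.mp hk)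
        have h2 : n + 1 - (n + 1 - k) = k := Nat.sub_sub_self hk'
        simp [h2, mul_comm]
      have h2 : ∑ k ∈ Finset.range (n+2),
            (k + (n+1-k)) * (Nat.centralBinom k * Nat.centralBinom (n+1-k))
          = 2 * ∑ k ∈ Finset.range (n+2),
            k * (Nat.centralBinom k * Nat.centralBinom (n+1-k)) := by
        rw [two_mul]
        simp only [add_mul]
        rw [Finset.sum_add_distrib, hrefl]
      have h3 : ∑ k ∈ Finset.range (n+2),
            k * (Nat.centralBinom k * Nat.centralBinom (n+1-k))
          = ∑ k ∈ Finset.range (n+1),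
            (k+1) * Nat.centralBinom (k+1) * Nat.centralBinom (n-k) := by
        rw [Finset.sum_range_succ' (fun k => k * (Nat.centralBinom k * Nat.centralBinom (n+1-k)))]
        simp [mul_assoc]
      have h4 : ∑ k ∈ Finset.range (n+1),
            (k+1) * Nat.centralBinom (k+1) * Nat.centralBinom (n-k)
          = 2 * ∑ k ∈ Finset.range (n+1),
            (2*k+1) * (Nat.centralBinom k * Nat.centralBinom (n-k)) := by
        rw [Finset.mul_sum]
        refine Finset.sum_congr rfl fun k _ => ?_
        rw [Nat.succ_mul_centralBinom_succ]; ring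
      have h5 : ∑ k ∈ Finset.range (n+1),
            (2*k+1) * (Nat.centralBinom k * Nat.centralBinom (n-k))
          = 2 * (∑ k ∈ Finset.range (n+1),
              k * (Nat.centralBinom k * Nat.centralBinom (n-k))) + 4^n := by
        calc ∑ k ∈ Finset.range (n+1),
              (2*k+1) * (Nat.centralBinom k * Nat.centralBinom (n-k))
            = ∑ k ∈ Finset.range (n+1),
              (2 * (k * (Nat.centralBinom k * Nat.centralBinom (n-k)))
                + Nat.centralBinom k * Nat.centralBinom (n-k)) := by
              refine Finset.sum_congr rfl fun k _ => by ring
          _ = _ := by rw [Finset.sum_add_distrib, ← Finset.mul_sum, ih]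
      rw [h1, h2, h3, h4, h5, h6]
      ring
    exact Nat.eq_of_mul_eq_mul_left (Nat.succ_pos n) key

/-- normalized central binomial coefficient -/
noncomputable def cbr (n : ℕ) : ℝ := (Nat.centralBinom n : ℝ) / 4 ^ n

lemma cbr_zero : cbr 0 = 1 := by simp [cbr, Nat.centralBinom]

lemma cbr_pos (n : ℕ) : 0 < cbr n := by
  apply div_pos (by exact_mod_cast Nat.centralBinom_pos n) (by positivity)

lemma cbr_conv (n : ℕ) : ∑ k ∈ Finset.range (n+1), cbr k * cbr (n-k) = 1 := by
  have h := cb_conv n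
  have h4 : (0:ℝ) < 4 ^ n := by positivity
  rw [← div_self h4.ne']
  rw [eq_div_iff h4.ne']
  have : ∑ k ∈ Finset.range (n+1), cbr k * cbr (n-k) * 4 ^ n
      = ∑ k ∈ Finset.range (n+1), (Nat.centralBinom k : ℝ) * Nat.centralBinom (n-k) := by
    refine Finset.sum_congr rfl fun k hk => ?_
    have hk' : k ≤ n := Nat.lt_succ_iff.mp (Finset.mem_range.mp hk)
    have : (4:ℝ)^n = 4^k * 4^(n-k) := by rw [← pow_add, Nat.add_sub_cancel' hk']
    rw [cbr, cbr, this]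
    field_simp
  rw [Finset.sum_mul]
  calc ∑ k ∈ Finset.range (n+1), cbr k * cbr (n-k) * 4 ^ n
      = ∑ k ∈ Finset.range (n+1), (Nat.centralBinom k : ℝ) * Nat.centralBinom (n-k) := this
    _ = 4 ^ n := by exact_mod_cast congrArg (Nat.cast (R := ℝ)) h

lemma cbr_rec (n : ℕ) : (2*(n:ℝ)+2) * cbr (n+1) = (2*n+1) * cbr n := by
  have h := Nat.succ_mul_centralBinom_succ n
  have h4 : (0:ℝ) < 4 ^ n := by positivity
  have hc : ((n:ℝ)+1) * (Nat.centralBinom (n+1) : ℝ) = 2 * (2*n+1) * Nat.centralBinom n := by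
    exact_mod_cast congrArg (fun x : ℕ => (x:ℝ)) h
  rw [cbr, cbr, pow_succ]
  field_simp
  nlinarith [hc]

lemma cbr_le_one (n : ℕ) : cbr n ≤ 1 := by
  induction n with
  | zero => simp [cbr_zero]
  | succ n ih =>
    have hrec := cbr_rec n
    nlinarith [cbr_pos n, cbr_pos (n+1)]


lemma conv_unique (p : ℕ → ℝ) (h0 : p 0 = 1)
    (hconv : ∀ n, ∑ k ∈ Finset.range (n+1), p k * p (n-k) = 1) : ∀ n, p n = cbr n := by
  intro n
  induction n using Nat.strong_induction_on with
  | _ n IH =>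
    match n with
    | 0 => simpa [cbr_zero] using h0
    | (m+1) =>
      have h1 := hconv (m+1)
      have h2 := cbr_conv (m+1)
      rw [Finset.sum_range_succ', Finset.sum_range_succ] at h1 h2
      have hmid : ∑ i ∈ Finset.range m, p (i+1) * p (m+1-(i+1))
          = ∑ i ∈ Finset.range m, cbr (i+1) * cbr (m+1-(i+1)) := by
        refine Finset.sum_congr rfl fun i hi => ?_
        have hi' : i < m := Finset.mem_range.mp hi
        have e1 : m + 1 - (i + 1) = m - i := by omega
        rw [e1, IH (i+1) (by omega), IH (m-i) (by omega)]
      rw [hmid] at h1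
      simp only [h0, cbr_zero, Nat.add_sub_cancel, Nat.sub_zero, Nat.sub_self] at h1 h2
      linarith

variable {s : ℝ}

lemma summable_cbr (hs0 : 0 ≤ s) (hs1 : s < 1) : Summable (fun n => cbr n * s^n) := by
  refine Summable.of_nonneg_of_le
    (fun n => mul_nonneg (cbr_pos n).le (pow_nonneg hs0 n)) ?_
    (summable_geometric_of_lt_one hs0 hs1)
  intro n
  calc cbr n * s^n ≤ 1 * s^n := by
        apply mul_le_mul_of_nonneg_right (cbr_le_one n) (by positivity)
    _ = s^n := one_mul _

lemma tsum_cbr (hs0 : 0 ≤ s) (hs1 : s < 1) :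
    ∑' n, cbr n * s^n = (Real.sqrt (1 - s))⁻¹ := by
  set f := ∑' n, cbr n * s^n with hf
  have hsum := summable_cbr hs0 hs1
  have hnorm : Summable (fun n => ‖cbr n * s^n‖) := by
    refine hsum.congr fun n => ?_
    rw [Real.norm_eq_abs, abs_of_nonneg (mul_nonneg (cbr_pos n).le (pow_nonneg hs0 n))]
  have hsq : f * f = (1 - s)⁻¹ := by
    rw [hf, tsum_mul_tsum_eq_tsum_sum_range_of_summable_norm hnorm hnorm]
    have : ∀ n : ℕ, ∑ k ∈ Finset.range (n+1), (cbr k * s^k) * (cbr (n-k) * s^(n-k)) = s^n := by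
      intro n
      have : ∀ k ∈ Finset.range (n+1), (cbr k * s^k) * (cbr (n-k) * s^(n-k))
          = cbr k * cbr (n-k) * s^n := by
        intro k hk
        have hk' : k ≤ n := Nat.lt_succ_iff.mp (Finset.mem_range.mp hk)
        have hp : s^k * s^(n-k) = s^n := by rw [← pow_add, Nat.add_sub_cancel' hk']
        rw [← hp]; ring
      rw [Finset.sum_congr rfl this, ← Finset.sum_mul, cbr_conv, one_mul]
    rw [tsum_congr this, tsum_geometric_of_lt_one hs0 hs1]
  have hfnn : 0 ≤ f := tsum_nonneg fun n => mul_nonneg (cbr_pos n).le (pow_nonneg hs0 n)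
  have h1s : (0:ℝ) < 1 - s := by linarith
  have : f = Real.sqrt ((1-s)⁻¹) := by
    rw [← Real.sqrt_sq hfnn, sq, hsq]
  rw [this, Real.sqrt_inv]




lemma tsum_diff {s : ℝ} (hs0 : 0 ≤ s) (hs1 : s < 1) :
    ∑' n : ℕ, s^(n+1) * (cbr n - cbr (n+1)) = 1 - Real.sqrt (1 - s) := by
  have hsum := summable_cbr hs0 hs1
  have hsumA : Summable (fun n : ℕ => s^(n+1) * cbr n) := by
    refine (hsum.mul_left s).congr fun n => ?_
    ring
  have hsumshift : Summable (fun n : ℕ => cbr (n+1) * s^(n+1)) :=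
    ((summable_nat_add_iff 1).mpr hsum)
  have hsumB : Summable (fun n : ℕ => s^(n+1) * cbr (n+1)) := by
    refine hsumshift.congr fun n => by ring
  have h1s : (0:ℝ) < 1 - s := by linarith
  have hA : ∑' n : ℕ, s^(n+1) * cbr n = s * (Real.sqrt (1-s))⁻¹ := by
    rw [← tsum_cbr hs0 hs1, ← tsum_mul_left]
    refine tsum_congr fun n => by ring
  have hB : ∑' n : ℕ, s^(n+1) * cbr (n+1) = (Real.sqrt (1-s))⁻¹ - 1 := by
    have h0 := Summable.tsum_eq_zero_add hsum
    rw [← tsum_cbr hs0 hs1]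
    have : ∑' n : ℕ, s^(n+1) * cbr (n+1) = ∑' n : ℕ, cbr (n+1) * s^(n+1) :=
      tsum_congr fun n => by ring
    rw [this]
    rw [h0, cbr_zero, pow_zero, one_mul]
    ring
  calc ∑' n : ℕ, s^(n+1) * (cbr n - cbr (n+1))
      = ∑' n : ℕ, (s^(n+1) * cbr n - s^(n+1) * cbr (n+1)) :=
        tsum_congr fun n => by ring
    _ = (∑' n : ℕ, s^(n+1) * cbr n) - ∑' n : ℕ, s^(n+1) * cbr (n+1) :=
        Summable.tsum_sub hsumA hsumB
    _ = s * (Real.sqrt (1-s))⁻¹ - ((Real.sqrt (1-s))⁻¹ - 1) := by rw [hA, hB]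
    _ = 1 - (1 - s) * (Real.sqrt (1-s))⁻¹ := by ring
    _ = 1 - Real.sqrt (1 - s) := by
        have hstar : (1 - s) = Real.sqrt (1-s) * Real.sqrt (1-s) :=
          (Real.mul_self_sqrt h1s.le).symm
        have hpos : Real.sqrt (1-s) > 0 := Real.sqrt_pos.mpr h1s
        rw [← div_eq_mul_inv, Real.div_sqrt]


variable [MeasurableSpace Ω]

/-- partial sum of the first `k` coordinates of a vector -/
noncomputable def psum {m : ℕ} (y : Fin m → ℝ) (k : ℕ) : ℝ :=
  ∑ i ∈ Finset.univ.filter (fun i : Fin m => (i : ℕ) < k), y i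

/-- the positivity event -/
def Gpos (m : ℕ) : Set (Fin m → ℝ) := {y | ∀ k, 1 ≤ k → k ≤ m → 0 < psum y k}

lemma measurable_psum (m k : ℕ) : Measurable fun y : Fin m → ℝ => psum y k :=
  Finset.measurable_sum _ fun i _ => measurable_pi_apply i

lemma measurableSet_Gpos (m : ℕ) : MeasurableSet (Gpos m) := by
  have : Gpos m = ⋂ k ∈ Set.Icc 1 m, {y | 0 < psum y k} := by
    ext y
    simp only [Gpos, Set.mem_iInter, Set.mem_Icc, Set.mem_setOf_eq, and_imp]
  rw [this]
  exact MeasurableSet.biInter (Set.to_countable _)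
    fun k _ => measurableSet_lt measurable_const (measurable_psum m k)

lemma psum_eq {m : ℕ} (y : Fin m → ℝ) {k : ℕ} (hk : k ≤ m) (g : ℕ → ℝ)
    (hg : ∀ i : Fin m, (i : ℕ) < k → y i = g i) :
    psum y k = ∑ j ∈ Finset.range k, g j := by
  classical
  refine Finset.sum_bij' (fun (i : Fin m) _ => (i : ℕ))
    (fun (j : ℕ) hj => (⟨j, lt_of_lt_of_le (Finset.mem_range.mp hj) hk⟩ : Fin m))
    ?_ ?_ ?_ ?_ ?_
  · intro i hi
    exact Finset.mem_range.mpr (Finset.mem_filter.mp hi).2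
  · intro j hj
    refine Finset.mem_filter.mpr ⟨Finset.mem_univ _, ?_⟩
    exact Finset.mem_range.mp hj
  · intro i _; ext; rfl
  · intro j _; rfl
  · intro i hi
    exact hg i (Finset.mem_filter.mp hi).2

lemma sum_reflect_Ico (W : ℕ → ℝ) (kk mm : ℕ) (h : mm ≤ kk) :
    ∑ j ∈ Finset.range mm, W (kk - 1 - j) = ∑ i ∈ Finset.Ico (kk - mm) kk, W i := by
  classical
  refine Finset.sum_bij' (fun (j : ℕ) _ => kk - 1 - j) (fun (i : ℕ) _ => kk - 1 - i)
    ?_ ?_ ?_ ?_ ?_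
  · intro j hj
    have := Finset.mem_range.mp hj
    simp only [Finset.mem_Ico]
    omega
  · intro i hi
    have := Finset.mem_Ico.mp hi
    simp only [Finset.mem_range]
    omega
  · intro j hj; have := Finset.mem_range.mp hj; omega
  · intro i hi; have := Finset.mem_Ico.mp hi; omega
  · intro j _; rfl

/-- joint law of an independent family with common law `μ` is the product measure -/
lemma map_vec_pi {P : Measure Ω} [IsProbabilityMeasure P] {μ : Measure ℝ}
    [IsProbabilityMeasure μ] {m : ℕ} (Z : Fin m → Ω → ℝ) (hZm : ∀ i, Measurable (Z i))
    (hZi : iIndepFun Z P) (hZd : ∀ i, P.map (Z i) = μ) :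
    P.map (fun ω i => Z i ω) = Measure.pi (fun _ => μ) := by
  refine (Measure.pi_eq fun s hs => ?_).symm
  rw [Measure.map_apply (measurable_pi_iff.mpr hZm) (MeasurableSet.univ_pi hs)]
  have hpre : (fun ω i => Z i ω) ⁻¹' Set.pi Set.univ s = ⋂ i ∈ Finset.univ, Z i ⁻¹' s i := by
    ext ω
    simp [Set.mem_pi]
  rw [hpre, hZi.measure_inter_preimage_eq_mul Finset.univ (fun i _ => hs i)]
  exact Finset.prod_congr rfl fun i _ => by rw [← hZd i, Measure.map_apply (hZm i) (hs i)]

/-- an injectively reindexed independent family is independent -/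
lemma iIndepFun_comp_of_injective {X : ℕ → Ω → ℝ} {P : Measure Ω} [IsProbabilityMeasure P]
    (hindep : iIndepFun X P)
    {m : ℕ} (φ : Fin m → ℕ) (hφ : Function.Injective φ) :
    iIndepFun (fun i => X (φ i)) P := by
  rw [iIndepFun_iff_measure_inter_preimage_eq_mul]
  intro S sets hsets
  classical
  set S' := S.image φ with hS'
  set sets' : ℕ → Set ℝ := fun j => if h : ∃ i ∈ S, φ i = j then sets h.choose else Set.univ
    with hsets'
  have hslook : ∀ i ∈ S, sets' (φ i) = sets i := by
    intro i hi
    have hex : ∃ i' ∈ S, φ i' = φ i := ⟨i, hi, rfl⟩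
    simp only [hsets', dif_pos hex]
    exact congrArg sets (hφ hex.choose_spec.2)
  have h1 : (⋂ i ∈ S, X (φ i) ⁻¹' sets i) = ⋂ j ∈ S', X j ⁻¹' sets' j := by
    ext ω
    simp only [Set.mem_iInter, hS', Finset.mem_image]
    constructor
    · rintro h j ⟨i, hi, rfl⟩
      rw [hslook i hi]; exact h i hi
    · intro h i hi
      rw [← hslook i hi]; exact h (φ i) ⟨i, hi, rfl⟩
  rw [h1, (iIndepFun_iff_measure_inter_preimage_eq_mul.mp hindep) S'
    (fun j hj => ?_)]
  · rw [Finset.prod_image (fun i hi j hj hij => hφ hij)]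
    exact Finset.prod_congr rfl fun i hi => by rw [hslook i hi]
  · by_cases h : ∃ i ∈ S, φ i = j
    · simp only [hsets', dif_pos h]
      exact hsets h.choose h.choose_spec.1
    · simp only [hsets', dif_neg h]
      exact MeasurableSet.univ






lemma sum_Ico_null {P : Measure Ω} [IsProbabilityMeasure P] {X : ℕ → Ω → ℝ}
    (hmeas : ∀ k, Measurable (X k)) (hindep : iIndepFun X P)
    (hatom : ∀ (j : ℕ) (c : ℝ), P.map (X j) {c} = 0)
    (j k : ℕ) (hjk : j < k) : P {ω | ∑ i ∈ Finset.Ico j k, X i ω = 0} = 0 := by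
  classical
  set W : Ω → ℝ := (∑ i ∈ Finset.Ico (j+1) k, X i) with hW
  have hWval : ∀ ω, W ω = ∑ i ∈ Finset.Ico (j+1) k, X i ω := by
    intro ω; rw [hW, Finset.sum_apply]
  have hWmeas : Measurable W := by
    have : W = fun ω => ∑ i ∈ Finset.Ico (j+1) k, X i ω := funext hWval
    rw [this]
    exact Finset.measurable_sum _ fun i _ => hmeas i
  have hWind : IndepFun W (X j) P :=
    hindep.indepFun_finsetSum_of_notMem hmeas (by simp)
  have hmap : P.map (fun ω => (W ω, X j ω)) = (P.map W).prod (P.map (X j)) :=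
    (indepFun_iff_map_prod_eq_prod_map_map hWmeas.aemeasurable
      (hmeas j).aemeasurable).mp hWind
  set E : Set (ℝ × ℝ) := {p : ℝ × ℝ | p.1 + p.2 = 0} with hE
  have hEmeas : MeasurableSet E := by
    have : E = (fun p : ℝ × ℝ => p.1 + p.2) ⁻¹' {0} := rfl
    rw [this]
    exact (measurable_fst.add measurable_snd) (measurableSet_singleton 0)
  have hset : {ω | ∑ i ∈ Finset.Ico j k, X i ω = 0}
      = (fun ω => (W ω, X j ω)) ⁻¹' E := by
    ext ω
    simp only [Set.mem_setOf_eq, Set.mem_preimage, hE, hWval]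
    rw [Finset.sum_eq_sum_Ico_succ_bot hjk]
    constructor <;> intro h <;> linarith
  rw [hset, ← Measure.map_apply (hWmeas.prodMk (hmeas j)) hEmeas, hmap,
    Measure.prod_apply hEmeas]
  have hzero : ∀ a : ℝ, (P.map (X j)) (Prod.mk a ⁻¹' E) = 0 := by
    intro a
    have : Prod.mk a ⁻¹' E = {-a} := by
      ext b
      simp only [Set.mem_preimage, hE, Set.mem_setOf_eq, Set.mem_singleton_iff]
      constructor <;> intro h <;> linarith
    rw [this]
    exact hatom j (-a)
  calc ∫⁻ a, (P.map (X j)) (Prod.mk a ⁻¹' E) ∂(P.map W)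
      = ∫⁻ _, 0 ∂(P.map W) := by
        refine lintegral_congr fun a => hzero a
    _ = 0 := lintegral_zero


lemma measurable_S (X : ℕ → Ω → ℝ) (hmeas : ∀ k, Measurable (X k)) (k : ℕ) :
    Measurable (S X k) :=
  Finset.measurable_sum _ fun i _ => hmeas i

lemma measurableSet_tau0Gt (X : ℕ → Ω → ℝ) (hmeas : ∀ k, Measurable (X k)) (m : ℕ) :
    MeasurableSet (tau0Gt X m) := by
  have : tau0Gt X m = ⋂ k ∈ Set.Icc 1 m, {ω | 0 < S X k ω} := by
    ext ω
    simp only [tau0Gt, Set.mem_iInter, Set.mem_Icc, Set.mem_setOf_eq, and_imp]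
  rw [this]
  exact MeasurableSet.biInter (Set.to_countable _)
    fun k _ => measurableSet_lt measurable_const (measurable_S X hmeas k)

lemma measurableSet_tau0Eq (X : ℕ → Ω → ℝ) (hmeas : ∀ k, Measurable (X k)) (m : ℕ) :
    MeasurableSet (tau0Eq X m) := by
  have : tau0Eq X m = {ω | S X m ω ≤ 0} ∩ ⋂ k ∈ Set.Ico 1 m, {ω | 0 < S X k ω} := by
    ext ω
    simp only [tau0Eq, Set.mem_inter_iff, Set.mem_iInter, Set.mem_Ico, Set.mem_setOf_eq, and_imp]
  rw [this]
  refine (measurableSet_le (measurable_S X hmeas m) measurable_const).inter ?_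
  exact MeasurableSet.biInter (Set.to_countable _)
    fun k _ => measurableSet_lt measurable_const (measurable_S X hmeas k)

/-- The core computation: `P(τ₀ > m) = C(2m,m)/4^m`. -/
lemma core (P : Measure Ω) [IsProbabilityMeasure P] (X : ℕ → Ω → ℝ)
    (hmeas : ∀ k, Measurable (X k))
    (hindep : iIndepFun X P)
    (hident : ∀ k, IdentDistrib (X k) (X 0) P P)
    (hsym : Measure.map (X 0) P = Measure.map (fun ω => -(X 0 ω)) P)
    (hatomless : ∀ c : ℝ, P {ω | X 0 ω = c} = 0) :
    ∀ m : ℕ, (P (tau0Gt X m)).toReal = cbr m := by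
  classical
  set μ : Measure ℝ := P.map (X 0) with hμdef
  have hprobμ : IsProbabilityMeasure μ := Measure.isProbabilityMeasure_map (hmeas 0).aemeasurable
  have hlaw : ∀ j, P.map (X j) = μ := fun j => (hident j).map_eq
  have hatomμ : ∀ (j : ℕ) (c : ℝ), P.map (X j) {c} = 0 := by
    intro j c
    rw [hlaw j, hμdef, Measure.map_apply (hmeas 0) (measurableSet_singleton c)]
    have : X 0 ⁻¹' {c} = {ω | X 0 ω = c} := by ext ω; simp
    rw [this]
    exact hatomless c
  -- joint laws of signed reindexed vectors
  have hvec : ∀ (m : ℕ) (φ : Fin m → ℕ), Function.Injective φ →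
      P ((fun ω (i : Fin m) => X (φ i) ω) ⁻¹' Gpos m)
        = (Measure.pi fun _ : Fin m => μ) (Gpos m) := by
    intro m φ hφ
    have hmap : P.map (fun ω (i : Fin m) => X (φ i) ω) = Measure.pi (fun _ => μ) :=
      map_vec_pi _ (fun i => hmeas (φ i)) (iIndepFun_comp_of_injective hindep φ hφ)
        (fun i => hlaw (φ i))
    rw [← hmap, Measure.map_apply (measurable_pi_iff.mpr fun i => hmeas (φ i))
      (measurableSet_Gpos m)]
  have hvecneg : ∀ (m : ℕ) (φ : Fin m → ℕ), Function.Injective φ →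
      P ((fun ω (i : Fin m) => -(X (φ i) ω)) ⁻¹' Gpos m)
        = (Measure.pi fun _ : Fin m => μ) (Gpos m) := by
    intro m φ hφ
    have hind2 : iIndepFun (fun i => Neg.neg ∘ X (φ i)) P :=
      (iIndepFun_comp_of_injective hindep φ hφ).comp (fun _ => Neg.neg)
        (fun _ => measurable_neg)
    have hlaw2 : ∀ i : Fin m, P.map (Neg.neg ∘ X (φ i)) = μ := by
      intro i
      have h1 : P.map (Neg.neg ∘ X (φ i)) = P.map (Neg.neg ∘ X 0) :=
        ((hident (φ i)).comp measurable_neg).map_eq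
      rw [h1]
      have h2 : Neg.neg ∘ X 0 = fun ω => -(X 0 ω) := rfl
      rw [h2, ← hsym]
    have hmap : P.map (fun ω (i : Fin m) => -(X (φ i) ω)) = Measure.pi (fun _ => μ) :=
      map_vec_pi _ (fun i => (hmeas (φ i)).neg) hind2 hlaw2
    rw [← hmap, Measure.map_apply (measurable_pi_iff.mpr fun i => (hmeas (φ i)).neg :
        Measurable fun ω (i : Fin m) => -(X (φ i) ω))
      (measurableSet_Gpos m)]
  set Q : ℕ → ENNReal := fun m => (Measure.pi fun _ : Fin m => μ) (Gpos m) with hQdef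
  have hQle : ∀ m, Q m ≤ 1 := fun m => prob_le_one
  have hQne : ∀ m, Q m ≠ ⊤ := fun m => (lt_of_le_of_lt (hQle m) ENNReal.one_lt_top).ne
  -- τ₀ > m as a vector event
  have hGt : ∀ m, P (tau0Gt X m) = Q m := by
    intro m
    have hsetq : tau0Gt X m = (fun ω (i : Fin m) => X ((i : ℕ)) ω) ⁻¹' Gpos m := by
      ext ω
      simp only [tau0Gt, Set.mem_setOf_eq, Set.mem_preimage]
      constructor
      · intro h kk h1 h2
        rw [psum_eq _ h2 (fun j => X j ω) (fun i _ => rfl)]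
        exact h kk h1 h2
      · intro h kk h1 h2
        have := h kk h1 h2
        rwa [psum_eq _ h2 (fun j => X j ω) (fun i _ => rfl)] at this
    rw [hsetq]
    exact hvec m (fun i => (i : ℕ)) Fin.val_injective
  -- the B and C events
  set Bev : ℕ → Set Ω := fun k => {ω | ∀ j, j < k → S X j ω < S X k ω} with hBdef
  set Cev : ℕ → ℕ → Set Ω := fun k n => {ω | ∀ j, k < j → j ≤ n → S X j ω < S X k ω} with hCdef
  have hBiff : ∀ (k : ℕ) (ω : Ω),
      ((fun t : Fin k => X (k - 1 - (t : ℕ)) ω) ∈ Gpos k) ↔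
        (∀ j, j < k → S X j ω < S X k ω) := by
    intro k ω
    have hps : ∀ mm, mm ≤ k →
        psum (fun t : Fin k => X (k - 1 - (t : ℕ)) ω) mm = S X k ω - S X (k - mm) ω := by
      intro mm hmm
      rw [psum_eq _ hmm (fun j => X (k - 1 - j) ω) (fun i _ => rfl),
        sum_reflect_Ico (fun i => X i ω) k mm hmm,
        Finset.sum_Ico_eq_sub _ (by omega : k - mm ≤ k)]
      rfl
    constructor
    · intro h j hj
      have h2 : k - j ≤ k := by omega
      have := h (k - j) (by omega) h2
      rw [hps (k - j) h2] at this
      have hj' : k - (k - j) = j := by omega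
      rw [hj'] at this
      linarith
    · intro h mm h1 h2
      rw [hps mm h2]
      have := h (k - mm) (by omega)
      linarith
  have hCiff : ∀ (k m : ℕ) (ω : Ω),
      ((fun t : Fin m => -(X (k + (t : ℕ)) ω)) ∈ Gpos m) ↔
        (∀ j, k < j → j ≤ k + m → S X j ω < S X k ω) := by
    intro k m ω
    have hps : ∀ mm, mm ≤ m →
        psum (fun t : Fin m => -(X (k + (t : ℕ)) ω)) mm = S X k ω - S X (k + mm) ω := by
      intro mm hmm
      rw [psum_eq _ hmm (fun j => -(X (k + j) ω)) (fun i _ => rfl)]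
      have h1 : ∑ j ∈ Finset.range mm, -(X (k + j) ω)
          = -∑ j ∈ Finset.range mm, X (k + j) ω := by
        rw [Finset.sum_neg_distrib]
      have h2 : ∑ j ∈ Finset.range mm, X (k + j) ω = ∑ i ∈ Finset.Ico k (k + mm), X i ω := by
        rw [Finset.sum_Ico_eq_sum_range]
        simp
      rw [h1, h2, Finset.sum_Ico_eq_sub _ (by omega : k ≤ k + mm)]
      have : S X k ω = ∑ i ∈ Finset.range k, X i ω := rfl
      have h3 : S X (k + mm) ω = ∑ i ∈ Finset.range (k + mm), X i ω := rfl
      rw [this, h3]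
      ring
    constructor
    · intro h j hkj hjm
      have h2 : j - k ≤ m := by omega
      have := h (j - k) (by omega) h2
      rw [hps (j - k) h2] at this
      have hj' : k + (j - k) = j := by omega
      rw [hj'] at this
      linarith
    · intro h mm h1 h2
      rw [hps mm h2]
      have := h (k + mm) (by omega) (by omega)
      linarith
  have hBval : ∀ k, P (Bev k) = Q k := by
    intro k
    have hφ : Function.Injective (fun t : Fin k => k - 1 - (t : ℕ)) := by
      intro a b hab
      have ha := a.isLt
      have hb := b.isLt
      ext
      simp only at hab
      omega
    have : Bev k = (fun ω (t : Fin k) => X (k - 1 - (t : ℕ)) ω) ⁻¹' Gpos k := by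
      ext ω
      rw [Set.mem_preimage]
      exact (hBiff k ω).symm
    rw [this]
    exact hvec k _ hφ
  have hCval : ∀ k n, k ≤ n → P (Cev k n) = Q (n - k) := by
    intro k n hkn
    have hφ : Function.Injective (fun t : Fin (n - k) => k + (t : ℕ)) := by
      intro a b hab
      ext
      simp only at hab
      omega
    have : Cev k n = (fun ω (t : Fin (n - k)) => -(X (k + (t : ℕ)) ω)) ⁻¹' Gpos (n - k) := by
      ext ω
      rw [Set.mem_preimage]
      have := (hCiff k (n - k) ω)
      have he : k + (n - k) = n := by omega
      rw [he] at this
      exact this.symm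
    rw [this]
    exact hvecneg (n - k) _ hφ
  -- independence of B and C
  have hBC : ∀ k n, k ≤ n → P (Bev k ∩ Cev k n) = P (Bev k) * P (Cev k n) := by
    intro k n hkn
    have hdisj : Disjoint (Finset.range k) (Finset.Ico k n) := by
      rw [Finset.disjoint_left]
      intro a ha hb
      have h1 := Finset.mem_range.mp ha
      have h2 := (Finset.mem_Ico.mp hb).1
      omega
    have hIF := hindep.indepFun_finset (Finset.range k) (Finset.Ico k n) hdisj hmeas
    set ρB : ((i : Finset.range k) → ℝ) → (Fin k → ℝ) :=
      fun y t => y ⟨k - 1 - (t : ℕ), Finset.mem_range.mpr (by have := t.isLt; omega)⟩ with hρBdef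
    set ρC : ((i : Finset.Ico k n) → ℝ) → (Fin (n - k) → ℝ) :=
      fun y t => -(y ⟨k + (t : ℕ), Finset.mem_Ico.mpr (by have := t.isLt; omega)⟩) with hρCdef
    have hρB : Measurable ρB := measurable_pi_iff.mpr fun t => measurable_pi_apply _
    have hρC : Measurable ρC := measurable_pi_iff.mpr fun t => (measurable_pi_apply _).neg
    have hBset : Bev k = (fun a (i : Finset.range k) => X (i : ℕ) a) ⁻¹' (ρB ⁻¹' Gpos k) := by
      ext ω
      rw [Set.mem_preimage, Set.mem_preimage]
      exact (hBiff k ω).symm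
    have hCset : Cev k n
        = (fun a (i : Finset.Ico k n) => X (i : ℕ) a) ⁻¹' (ρC ⁻¹' Gpos (n - k)) := by
      ext ω
      rw [Set.mem_preimage, Set.mem_preimage]
      have := (hCiff k (n - k) ω)
      have he : k + (n - k) = n := by omega
      rw [he] at this
      exact this.symm
    rw [hBset, hCset]
    exact (indepFun_iff_measure_inter_preimage_eq_mul.mp hIF) _ _
      (hρB (measurableSet_Gpos k)) (hρC (measurableSet_Gpos (n - k)))
  -- measurability
  have hmeasB : ∀ k, MeasurableSet (Bev k) := by
    intro k
    have : Bev k = ⋂ j ∈ Set.Iio k, {ω | S X j ω < S X k ω} := by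
      ext ω
      simp only [hBdef, Set.mem_iInter, Set.mem_Iio, Set.mem_setOf_eq]
    rw [this]
    exact MeasurableSet.biInter (Set.to_countable _)
      fun j _ => measurableSet_lt (measurable_S X hmeas j) (measurable_S X hmeas k)
  have hmeasC : ∀ k n, MeasurableSet (Cev k n) := by
    intro k n
    have : Cev k n = ⋂ j ∈ Set.Ioc k n, {ω | S X j ω < S X k ω} := by
      ext ω
      simp only [hCdef, Set.mem_iInter, Set.mem_Ioc, Set.mem_setOf_eq, and_imp]
    rw [this]
    exact MeasurableSet.biInter (Set.to_countable _)
      fun j _ => measurableSet_lt (measurable_S X hmeas j) (measurable_S X hmeas k)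
  -- a.s. no ties
  have hnull : ∀ j k, j < k → P {ω | S X j ω = S X k ω} = 0 := by
    intro j k hjk
    have hset : {ω | S X j ω = S X k ω} = {ω | ∑ i ∈ Finset.Ico j k, X i ω = 0} := by
      ext ω
      simp only [Set.mem_setOf_eq]
      rw [Finset.sum_Ico_eq_sub _ hjk.le]
      have h1 : S X j ω = ∑ i ∈ Finset.range j, X i ω := rfl
      have h2 : S X k ω = ∑ i ∈ Finset.range k, X i ω := rfl
      rw [h1, h2]
      constructor <;> intro h <;> linarith
    rw [hset]
    exact sum_Ico_null hmeas hindep hatomμ j k hjk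
  -- the partition identity
  have hpart : ∀ n : ℕ, ∑ k ∈ Finset.range (n + 1), Q k * Q (n - k) = 1 := by
    intro n
    have hterm : ∀ k ∈ Finset.range (n + 1), P (Bev k ∩ Cev k n) = Q k * Q (n - k) := by
      intro k hk
      have hkn : k ≤ n := Nat.lt_succ_iff.mp (Finset.mem_range.mp hk)
      rw [hBC k n hkn, hBval k, hCval k n hkn]
    have hdisjE : Set.PairwiseDisjoint (↑(Finset.range (n + 1)))
        (fun k => Bev k ∩ Cev k n) := by
      intro k hk l hl hkl
      simp only [Finset.coe_range, Set.mem_Iio] at hk hl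
      refine Set.disjoint_left.mpr fun ω hωk hωl => ?_
      rcases lt_or_gt_of_ne hkl with h | h
      · have h1 := hωk.2 l h (by omega)
        have h2 := hωl.1 k h
        linarith
      · have h1 := hωl.2 k h (by omega)
        have h2 := hωk.1 l h
        linarith
    have hsum : P (⋃ k ∈ Finset.range (n + 1), (Bev k ∩ Cev k n))
        = ∑ k ∈ Finset.range (n + 1), P (Bev k ∩ Cev k n) :=
      measure_biUnion_finset hdisjE fun k _ => (hmeasB k).inter (hmeasC k n)
    have hcover : P (⋃ k ∈ Finset.range (n + 1), (Bev k ∩ Cev k n)) = 1 := by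
      set bad : Set Ω := ⋃ j ∈ Finset.range (n + 1), ⋃ k ∈ Set.Ioc j n,
        {ω | S X j ω = S X k ω} with hbaddef
      have hbadnull : P bad = 0 := by
        rw [hbaddef]
        refine measure_biUnion_null_iff (Finset.countable_toSet _) |>.mpr fun j _ => ?_
        refine measure_biUnion_null_iff (Set.to_countable _) |>.mpr fun k hk => ?_
        exact hnull j k (Set.mem_Ioc.mp hk).1
      have huniv : (Set.univ : Set Ω) ⊆
          (⋃ k ∈ Finset.range (n + 1), (Bev k ∩ Cev k n)) ∪ bad := by
        intro ω _
        by_cases hgood : ∀ j k, j < k → k ≤ n → S X j ω ≠ S X k ω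
        · left
          obtain ⟨k, hkmem, hkmax⟩ := Finset.exists_max_image (Finset.range (n + 1))
            (fun j => S X j ω) ⟨0, by simp⟩
          have hkn : k ≤ n := Nat.lt_succ_iff.mp (Finset.mem_range.mp hkmem)
          refine Set.mem_biUnion hkmem ⟨?_, ?_⟩
          · intro j hj
            have hle := hkmax j (Finset.mem_range.mpr (by omega))
            exact lt_of_le_of_ne hle (hgood j k hj hkn)
          · intro j hkj hjn
            have hle := hkmax j (Finset.mem_range.mpr (by omega))
            exact lt_of_le_of_ne hle fun hEq => (hgood k j hkj hjn) hEq.symm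
        · right
          push_neg at hgood
          obtain ⟨j, k, hjk, hkn, hEq⟩ := hgood
          rw [hbaddef]
          refine Set.mem_biUnion (Finset.mem_range.mpr (by omega : j < n + 1)) ?_
          exact Set.mem_biUnion (Set.mem_Ioc.mpr ⟨hjk, hkn⟩) hEq
      refine le_antisymm prob_le_one ?_
      calc (1 : ENNReal) = P Set.univ := (measure_univ).symm
        _ ≤ P ((⋃ k ∈ Finset.range (n + 1), (Bev k ∩ Cev k n)) ∪ bad) := measure_mono huniv
        _ ≤ P (⋃ k ∈ Finset.range (n + 1), (Bev k ∩ Cev k n)) + P bad := measure_union_le _ _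
        _ = P (⋃ k ∈ Finset.range (n + 1), (Bev k ∩ Cev k n)) := by rw [hbadnull, add_zero]
    rw [← Finset.sum_congr rfl hterm, ← hsum, hcover]
  -- pass to real numbers
  set q : ℕ → ℝ := fun m => (Q m).toReal with hqdef
  have hq0 : q 0 = 1 := by
    have : Gpos 0 = Set.univ := by
      ext y
      simp only [Gpos, Set.mem_setOf_eq, Set.mem_univ, iff_true]
      intro k h1 h2
      omega
    rw [hqdef]
    simp only [Q, this, measure_univ, ENNReal.toReal_one]
  have hqconv : ∀ n, ∑ k ∈ Finset.range (n + 1), q k * q (n - k) = 1 := by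
    intro n
    have h1 := hpart n
    have h2 : ((∑ k ∈ Finset.range (n + 1), Q k * Q (n - k)).toReal : ℝ)
        = ∑ k ∈ Finset.range (n + 1), q k * q (n - k) := by
      rw [ENNReal.toReal_sum fun k _ => ENNReal.mul_ne_top (hQne k) (hQne (n - k))]
      exact Finset.sum_congr rfl fun k _ => ENNReal.toReal_mul
    rw [← h2, h1, ENNReal.toReal_one]
  have hqcbr : ∀ m, q m = cbr m := conv_unique q hq0 hqconv
  intro m
  rw [hGt m, ← hqcbr m]

end AuxiliaryLemmas

/-- for a random walk with i.i.d. increments with symmetric atomless common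
distribution: `E[s^{τ_0}] = 1 - √(1-s)` for `s ∈ [0,1)`, and consequently
`P(τ_0 > n) = C(2n,n)·2^{-2n}` for every `n ≥ 1`. -/
theorem symmetric_atomless
    [MeasurableSpace Ω] (P : Measure Ω) [IsProbabilityMeasure P]
    (X : ℕ → Ω → ℝ)
    (hmeas : ∀ k, Measurable (X k))
    (hindep : iIndepFun X P)
    (hident : ∀ k, IdentDistrib (X k) (X 0) P P)
    (hsym : Measure.map (X 0) P = Measure.map (fun ω => -(X 0 ω)) P)
    (hatomless : ∀ c : ℝ, P {ω | X 0 ω = c} = 0) :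
    (∀ s ∈ Set.Ico (0:ℝ) 1,
        ∑' n : ℕ, s ^ (n + 1) * (P (tau0Eq X (n + 1))).toReal = 1 - Real.sqrt (1 - s))
    ∧ (∀ n : ℕ, 1 ≤ n →
        (P (tau0Gt X n)).toReal = (Nat.choose (2 * n) n : ℝ) * (1/2 : ℝ) ^ (2 * n)) := by
  have hcore := core P X hmeas hindep hident hsym hatomless
  constructor
  · intro s hs
    obtain ⟨hs0, hs1⟩ := hs
    have hEqval : ∀ n : ℕ, (P (tau0Eq X (n + 1))).toReal = cbr n - cbr (n + 1) := by
      intro n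
      have hsplit : tau0Gt X n = tau0Eq X (n + 1) ∪ tau0Gt X (n + 1) := by
        ext ω
        simp only [tau0Gt, tau0Eq, Set.mem_union, Set.mem_setOf_eq]
        constructor
        · intro h
          rcases le_or_gt (S X (n + 1) ω) 0 with hle | hlt
          · exact Or.inl ⟨hle, fun k h1 h2 => h k h1 (by omega)⟩
          · refine Or.inr fun k h1 h2 => ?_
            rcases Nat.lt_or_ge k (n + 1) with hk | hk
            · exact h k h1 (by omega)
            · have hkk : k = n + 1 := by omega
              rw [hkk]; exact hlt
        · rintro (⟨h1, h2⟩ | h)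
          · exact fun k hk1 hk2 => h2 k hk1 (by omega)
          · exact fun k hk1 hk2 => h k hk1 (by omega)
      have hdisj : Disjoint (tau0Eq X (n + 1)) (tau0Gt X (n + 1)) := by
        refine Set.disjoint_left.mpr fun ω h1 h2 => ?_
        have ha := h2 (n + 1) (by omega) le_rfl
        have hb := h1.1
        linarith
      have hM : P (tau0Gt X n) = P (tau0Eq X (n + 1)) + P (tau0Gt X (n + 1)) := by
        rw [hsplit, measure_union hdisj (measurableSet_tau0Gt X hmeas (n + 1))]
      have hne1 : P (tau0Eq X (n + 1)) ≠ ⊤ := measure_ne_top P _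
      have hne2 : P (tau0Gt X (n + 1)) ≠ ⊤ := measure_ne_top P _
      have hMR := congrArg ENNReal.toReal hM
      rw [ENNReal.toReal_add hne1 hne2, hcore n, hcore (n + 1)] at hMR
      linarith
    calc ∑' n : ℕ, s ^ (n + 1) * (P (tau0Eq X (n + 1))).toReal
        = ∑' n : ℕ, s ^ (n + 1) * (cbr n - cbr (n + 1)) :=
          tsum_congr fun n => by rw [hEqval n]
      _ = 1 - Real.sqrt (1 - s) := tsum_diff hs0 hs1
  · intro n _
    rw [hcore n, cbr, Nat.centralBinom_eq_two_mul_choose]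
    have h4 : ((1:ℝ)/2) ^ (2 * n) = ((4:ℝ) ^ n)⁻¹ := by
      rw [pow_mul, ← inv_pow]
      norm_num
    rw [h4, div_eq_mul_inv]

end Stmt13
end

section
/- Let S(n)=X_1+⋯+X_n be a random walk with i.i.d. real-valued increments and τ_0 = inf{n≥1 : S(n) ≤ 0} (with s^{τ_0}:=0 on {τ_0=∞}). Then for every u∈(0,1): 1 − E[u^{τ_0}] = exp{ −∑_{n=1}^∞ (u^n/n)·P(S(n) ≤ 0) }. -/
open MeasureTheory ProbabilityTheory Filter

namespace Stmt14

variable {Ω : Type*}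

/-- Partial sums of the increments: `S n = X 0 + ⋯ + X (n-1)`. -/
def S (X : ℕ → Ω → ℝ) (n : ℕ) (ω : Ω) : ℝ := ∑ k ∈ Finset.range n, X k ω

/-- The event `τ_0 = n`: the first time `k ≥ 1` with `S k ≤ 0` equals `n`. -/
def tau0Eq (X : ℕ → Ω → ℝ) (n : ℕ) : Set Ω :=
  {ω | S X n ω ≤ 0 ∧ ∀ k, 1 ≤ k → k < n → 0 < S X k ω}


open scoped Classical

/-- partial sums of a sequence -/
def ps (y : ℕ → ℝ) (k : ℕ) : ℝ := ∑ i ∈ Finset.range k, y i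

/-- `k` is a weak descending ladder epoch -/
def Ep (y : ℕ → ℝ) (k : ℕ) : Prop := ∀ j < k, ps y k ≤ ps y j

/-- number of ladder epochs in `[1,n]` -/
noncomputable def DN (n : ℕ) (y : ℕ → ℝ) : ℕ := ((Finset.Icc 1 n).filter (Ep y)).card

/-- `n` is a ladder epoch -/
def GN (n : ℕ) (y : ℕ → ℝ) : Prop := Ep y n

/-- `τ₀ = n` for the sequence `y` -/
def TE (n : ℕ) (y : ℕ → ℝ) : Prop :=
  ps y n ≤ 0 ∧ ∀ k, 1 ≤ k → k < n → 0 < ps y k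

/-- the weight function `h` -/
noncomputable def hh (n : ℕ) (y : ℕ → ℝ) : ℝ := if GN n y then ((DN n y : ℝ))⁻¹ else 0

lemma ps_zero (y : ℕ → ℝ) : ps y 0 = 0 := by simp [ps]

lemma ps_succ (y : ℕ → ℝ) (k : ℕ) : ps y (k + 1) = ps y k + y k := by
  simp [ps, Finset.sum_range_succ]

lemma ps_add (y : ℕ → ℝ) (a b : ℕ) : ps y (a + b) = ps y a + ps (fun i => y (a + i)) b := by
  induction b with
  | zero => simp [ps]
  | succ b ih => rw [← Nat.add_assoc, ps_succ, ih, ps_succ]; ring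

lemma ps_congr {y z : ℕ → ℝ} {n : ℕ} (h : ∀ i < n, y i = z i) {k : ℕ} (hk : k ≤ n) :
    ps y k = ps z k := by
  unfold ps
  exact Finset.sum_congr rfl fun i hi => h i (lt_of_lt_of_le (Finset.mem_range.mp hi) hk)

lemma Ep_congr {y z : ℕ → ℝ} {n : ℕ} (h : ∀ i < n, y i = z i) {k : ℕ} (hk : k ≤ n) :
    Ep y k ↔ Ep z k := by
  unfold Ep
  constructor <;> intro H j hj
  · rw [← ps_congr h hk, ← ps_congr h (le_trans (le_of_lt hj) hk)]; exact H j hj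
  · rw [ps_congr h hk, ps_congr h (le_trans (le_of_lt hj) hk)]; exact H j hj

lemma DN_congr {y z : ℕ → ℝ} {n : ℕ} (h : ∀ i < n, y i = z i) : DN n y = DN n z := by
  unfold DN
  congr 1
  apply Finset.filter_congr
  intro k hk
  simp only [Finset.mem_Icc] at hk
  simpa using Ep_congr h hk.2

lemma GN_congr {y z : ℕ → ℝ} {n : ℕ} (h : ∀ i < n, y i = z i) : GN n y ↔ GN n z :=
  Ep_congr h le_rfl

lemma TE_congr {y z : ℕ → ℝ} {n : ℕ} (h : ∀ i < n, y i = z i) : TE n y ↔ TE n z := by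
  unfold TE
  constructor <;> intro H
  · exact ⟨by rw [← ps_congr h le_rfl]; exact H.1,
      fun k h1 h2 => by rw [← ps_congr h (le_of_lt h2)]; exact H.2 k h1 h2⟩
  · exact ⟨by rw [ps_congr h le_rfl]; exact H.1,
      fun k h1 h2 => by rw [ps_congr h (le_of_lt h2)]; exact H.2 k h1 h2⟩

lemma hh_congr {y z : ℕ → ℝ} {n : ℕ} (h : ∀ i < n, y i = z i) : hh n y = hh n z := by
  unfold hh
  rw [DN_congr h]
  by_cases hg : GN n y
  · rw [if_pos hg, if_pos ((GN_congr h).mp hg)]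
  · rw [if_neg hg, if_neg (fun hz => hg ((GN_congr h).mpr hz))]

section Comb

variable {n : ℕ} {y : ℕ → ℝ} (hn : 0 < n) (hper : ∀ i, y (i + n) = y i)

/-- extended `W` condition at position `p` -/
def Wext (n : ℕ) (y : ℕ → ℝ) (p : ℕ) : Prop :=
  ∀ m, p ≤ m → m < p + n → ps y p + ps y n ≤ ps y m

include hper in
lemma ps_add_n : ∀ m, ps y (m + n) = ps y m + ps y n := by
  intro m
  induction m with
  | zero => simp [ps_zero]
  | succ m ih =>
      have : m + 1 + n = (m + n) + 1 := by omega
      rw [this, ps_succ, ih, hper, ps_succ]; ring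

include hper in
lemma Wext_add_n (p : ℕ) : Wext n y (p + n) ↔ Wext n y p := by
  unfold Wext
  constructor
  · intro H m hm hm'
    have := H (m + n) (by omega) (by omega)
    rw [ps_add_n hper, ps_add_n hper] at this
    linarith
  · intro H m hm hm'
    obtain ⟨m', rfl⟩ : ∃ m', m = m' + n := ⟨m - n, by omega⟩
    have := H m' (by omega) (by omega)
    rw [ps_add_n hper, ps_add_n hper]
    linarith

lemma ps_shift (j k : ℕ) : ps (fun i => y (j + i)) k = ps y (j + k) - ps y j := by
  rw [ps_add]; ring

include hper in
lemma GN_shift (j : ℕ) : GN n (fun i => y (j + i)) ↔ Wext n y j := by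
  unfold GN Ep Wext
  constructor
  · intro H m hm hm'
    have := H (m - j) (by omega)
    rw [ps_shift, ps_shift] at this
    have hjm : j + (m - j) = m := by omega
    rw [hjm] at this
    rw [ps_add_n hper] at this
    linarith
  · intro H t ht
    rw [ps_shift, ps_shift]
    have := H (j + t) (by omega) (by omega)
    rw [← ps_add_n hper] at this
    have hc : j + n = n + j := by omega
    linarith [this]

include hper in
lemma Ep_shift_iff (hs : ps y n ≤ 0) {j : ℕ} (hj : Wext n y j) {k : ℕ} (hk1 : 1 ≤ k)
    (hkn : k ≤ n) : Ep (fun i => y (j + i)) k ↔ Wext n y (j + k) := by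
  unfold Ep Wext
  constructor
  · intro H m hm hm'
    -- H : ∀ t < k, ps y (j+k) ≤ ps y (j+t)  (after rewriting)
    have H' : ∀ t < k, ps y (j + k) ≤ ps y (j + t) := by
      intro t ht
      have := H t ht
      rw [ps_shift, ps_shift] at this
      linarith
    by_cases hcase : m < j + n
    · -- use Wext j : ps y j + s ≤ ps y m ; and ps y (j+k) ≤ ps y j
      have h1 := hj m (by omega) hcase
      have h2 := H' 0 (by omega)
      simp only [Nat.add_zero] at h2
      linarith
    · -- m ≥ j + n : use m - n ∈ [j, j+k)
      have h1 := H' (m - n - j) (by omega)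
      have hrw : j + (m - n - j) = m - n := by omega
      rw [hrw] at h1
      have h2 : ps y m = ps y (m - n) + ps y n := by
        conv_lhs => rw [show m = (m - n) + n by omega]
        rw [ps_add_n hper]
      rw [h2]
      linarith
  · intro H t ht
    rw [ps_shift, ps_shift]
    have := H (j + t + n) (by omega) (by omega)
    rw [ps_add_n hper] at this
    linarith

/-- the set of good shift positions -/
noncomputable def Wset (n : ℕ) (y : ℕ → ℝ) : Finset ℕ :=
  (Finset.range n).filter (Wext n y)

include hper hn in
lemma Wext_mod {p : ℕ} (hp : Wext n y p) : p % n ∈ Wset n y := by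
  unfold Wset
  rw [Finset.mem_filter, Finset.mem_range]
  refine ⟨Nat.mod_lt _ hn, ?_⟩
  -- Wext p ↔ Wext (p % n) by repeated application of Wext_add_n
  obtain ⟨q, r, hr, rfl⟩ : ∃ q r, r < n ∧ p = r + q * n :=
    ⟨p / n, p % n, Nat.mod_lt _ hn, by rw [Nat.add_comm, Nat.mul_comm, Nat.div_add_mod]⟩
  have hmod : (r + q * n) % n = r := by
    rw [Nat.add_mul_mod_self_right, Nat.mod_eq_of_lt hr]
  rw [hmod]
  clear hmod
  induction q with
  | zero => simpa using hp
  | succ q ih =>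
      apply ih
      have : r + (q + 1) * n = (r + q * n) + n := by ring
      rw [this] at hp
      exact (Wext_add_n hper _).mp hp

include hper hn in
lemma DN_shift {j : ℕ} (hjn : j < n) (hs : ps y n ≤ 0) (hj : Wext n y j) :
    DN n (fun i => y (j + i)) = (Wset n y).card := by
  unfold DN
  apply Finset.card_bij (fun k _ => (j + k) % n)
  · -- maps into Wset
    intro k hk
    rw [Finset.mem_filter, Finset.mem_Icc] at hk
    have hep := (Ep_shift_iff hper hs hj hk.1.1 hk.1.2).mp hk.2
    exact Wext_mod hn hper hep
  · -- injective
    intro k1 hk1 k2 hk2 he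
    rw [Finset.mem_filter, Finset.mem_Icc] at hk1 hk2
    have h1 : k1 % n = k2 % n := by
      have := Nat.ModEq.add_left_cancel' j (he : (j + k1) % n = (j + k2) % n)
      exact this
    rcases le_total k1 k2 with hle | hle
    · have hd : n ∣ k2 - k1 := (Nat.modEq_iff_dvd' hle).mp h1
      rcases Nat.eq_zero_or_pos (k2 - k1) with h0 | hpos
      · omega
      · have := Nat.le_of_dvd hpos hd
        omega
    · have hd : n ∣ k1 - k2 := (Nat.modEq_iff_dvd' hle).mp h1.symm
      rcases Nat.eq_zero_or_pos (k1 - k2) with h0 | hpos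
      · omega
      · have := Nat.le_of_dvd hpos hd
        omega
  · -- surjective
    intro i hi
    rw [Wset, Finset.mem_filter, Finset.mem_range] at hi
    by_cases hij : j < i
    · refine ⟨i - j, ?_, ?_⟩
      · rw [Finset.mem_filter, Finset.mem_Icc]
        refine ⟨⟨by omega, by omega⟩, ?_⟩
        rw [Ep_shift_iff hper hs hj (by omega) (by omega)]
        have : j + (i - j) = i := by omega
        rw [this]; exact hi.2
      · have : j + (i - j) = i := by omega
        rw [this, Nat.mod_eq_of_lt hi.1]
    · refine ⟨i + n - j, ?_, ?_⟩
      · rw [Finset.mem_filter, Finset.mem_Icc]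
        refine ⟨⟨by omega, by omega⟩, ?_⟩
        rw [Ep_shift_iff hper hs hj (by omega) (by omega)]
        have : j + (i + n - j) = i + n := by omega
        rw [this, Wext_add_n hper]
        exact hi.2
      · have : j + (i + n - j) = i + n := by omega
        rw [this, Nat.add_mod_right, Nat.mod_eq_of_lt hi.1]

include hper hn in
lemma Wset_nonempty (hs : ps y n ≤ 0) : (Wset n y).Nonempty := by
  obtain ⟨j₀, hj₀, hmin⟩ := Finset.exists_min_image (Finset.range n) (ps y)
    ⟨0, Finset.mem_range.mpr hn⟩
  refine ⟨j₀, ?_⟩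
  rw [Wset, Finset.mem_filter]
  rw [Finset.mem_range] at hj₀
  refine ⟨Finset.mem_range.mpr hj₀, ?_⟩
  intro m hm hm'
  by_cases hc : m < n
  · have := hmin m (Finset.mem_range.mpr hc)
    linarith
  · have h2 : ps y m = ps y (m - n) + ps y n := by
      conv_lhs => rw [show m = (m - n) + n by omega]
      rw [ps_add_n hper]
    have := hmin (m - n) (Finset.mem_range.mpr (by omega))
    rw [h2]
    linarith

include hper hn in
/-- The cyclic-shift combinatorial identity. -/
lemma comb_sum :
    ∑ j ∈ Finset.range n, hh n (fun i => y (j + i)) = if ps y n ≤ 0 then 1 else 0 := by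
  by_cases hs : ps y n ≤ 0
  · rw [if_pos hs]
    have hW : ∀ j ∈ Finset.range n,
        hh n (fun i => y (j + i)) = if j ∈ Wset n y then ((Wset n y).card : ℝ)⁻¹ else 0 := by
      intro j hj
      rw [Finset.mem_range] at hj
      unfold hh
      by_cases hw : Wext n y j
      · rw [if_pos ((GN_shift hper j).mpr hw), DN_shift hn hper hj hs hw,
          if_pos (by rw [Wset, Finset.mem_filter]; exact ⟨Finset.mem_range.mpr hj, hw⟩)]
      · rw [if_neg (fun hg => hw ((GN_shift hper j).mp hg)),
          if_neg (by rw [Wset, Finset.mem_filter]; rintro ⟨-, h⟩; exact hw h)]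
    rw [Finset.sum_congr rfl hW]
    have hsub : Wset n y ⊆ Finset.range n := Finset.filter_subset _ _
    rw [← Finset.sum_filter, Finset.filter_mem_eq_inter, Finset.inter_eq_right.mpr hsub]
    rw [Finset.sum_const]
    have hne := Wset_nonempty hn hper hs
    have hcard : ((Wset n y).card : ℝ) ≠ 0 := by
      simp [Finset.card_ne_zero_of_mem hne.choose_spec]
    rw [nsmul_eq_mul, mul_inv_cancel₀ hcard]
  · rw [if_neg hs]
    apply Finset.sum_eq_zero
    intro j hj
    unfold hh
    rw [if_neg]
    intro hg
    have hw := (GN_shift hper j).mp hg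
    have := hw j le_rfl (by omega)
    linarith

end Comb

end Stmt14

namespace Stmt14
open scoped Classical

lemma DN_le (n : ℕ) (y : ℕ → ℝ) : DN n y ≤ n := by
  unfold DN
  calc ((Finset.Icc 1 n).filter (Ep y)).card ≤ (Finset.Icc 1 n).card :=
        Finset.card_filter_le _ _
    _ = n := by rw [Nat.card_Icc]; omega

lemma DN_pos {n : ℕ} (hn : 1 ≤ n) {y : ℕ → ℝ} (hg : GN n y) : 1 ≤ DN n y := by
  unfold DN
  have : n ∈ (Finset.Icc 1 n).filter (Ep y) := by
    rw [Finset.mem_filter, Finset.mem_Icc]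
    exact ⟨⟨hn, le_rfl⟩, hg⟩
  exact Finset.card_pos.mpr ⟨n, this⟩

lemma hh_eq_sum {n : ℕ} (hn : 1 ≤ n) (y : ℕ → ℝ) :
    hh n y = ∑ m ∈ Finset.Icc 1 n, if (GN n y ∧ DN n y = m) then ((m : ℝ))⁻¹ else 0 := by
  by_cases hg : GN n y
  · rw [hh, if_pos hg]
    rw [Finset.sum_eq_single_of_mem (DN n y)]
    · rw [if_pos ⟨hg, rfl⟩]
    · rw [Finset.mem_Icc]; exact ⟨DN_pos hn hg, DN_le n y⟩
    · intro b _ hb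
      rw [if_neg]; rintro ⟨-, h⟩; exact hb h.symm
  · rw [hh, if_neg hg]
    symm
    apply Finset.sum_eq_zero
    intro m _
    rw [if_neg]; rintro ⟨h, -⟩; exact hg h

lemma TE_unique {y : ℕ → ℝ} {k k' : ℕ} (h : TE k y) (h' : TE k' y) (hk : 1 ≤ k)
    (hk' : 1 ≤ k') : k = k' := by
  by_contra hne
  rcases Nat.lt_or_ge k k' with hlt | hge
  · exact absurd (h'.2 k hk hlt) (not_lt.mpr h.1)
  · have hlt : k' < k := by omega
    exact absurd (h.2 k' hk' hlt) (not_lt.mpr h'.1)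

lemma TE_exists {n : ℕ} (hn : 1 ≤ n) {y : ℕ → ℝ} (hg : GN n y) :
    ∃ k, 1 ≤ k ∧ k ≤ n ∧ TE k y := by
  have hps : ps y n ≤ 0 := by simpa [ps_zero] using hg 0 (by omega)
  have hex : ∃ k, 0 < k ∧ ps y k ≤ 0 := ⟨n, by omega, hps⟩
  classical
  obtain ⟨hk0, hkps⟩ := Nat.find_spec hex
  have hkn : Nat.find hex ≤ n := Nat.find_min' hex ⟨by omega, hps⟩
  refine ⟨Nat.find hex, hk0, hkn, hkps, ?_⟩
  intro t ht1 ht2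
  by_contra hc
  push_neg at hc
  exact Nat.find_min hex ht2 ⟨by omega, hc⟩

lemma Ep_of_TE {k : ℕ} {y : ℕ → ℝ} (h : TE k y) : Ep y k := by
  intro j hj
  rcases Nat.eq_zero_or_pos j with rfl | hj0
  · rw [ps_zero]; exact h.1
  · exact le_of_lt (lt_of_le_of_lt h.1 (h.2 j hj0 hj))

lemma Ep_cut {k t : ℕ} {y : ℕ → ℝ} (h : TE k y) (hkt : k < t) :
    Ep y t ↔ Ep (fun i => y (k + i)) (t - k) := by
  constructor
  · intro H j' hj'
    rw [ps_shift, ps_shift]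
    have h1 := H (k + j') (by omega)
    have h2 : k + (t - k) = t := by omega
    rw [h2]
    linarith
  · intro H j hj
    have hkey : ps y t ≤ ps y k := by
      have := H 0 (by omega)
      rw [ps_shift, ps_shift] at this
      have h2 : k + (t - k) = t := by omega
      rw [h2] at this
      simpa using this
    rcases Nat.lt_or_ge j k with hjk | hjk
    · rcases Nat.eq_zero_or_pos j with rfl | hj0
      · rw [ps_zero]; linarith [h.1]
      · have := h.2 j hj0 hjk
        linarith [h.1]
    · rcases Nat.eq_or_lt_of_le hjk with rfl | hjk'
      · exact hkey
      · have := H (j - k) (by omega)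
        rw [ps_shift, ps_shift] at this
        have h2 : k + (t - k) = t := by omega
        have h3 : k + (j - k) = j := by omega
        rw [h2, h3] at this
        linarith

lemma epoch_set_cut {k n : ℕ} {y : ℕ → ℝ} (h : TE k y) (hk1 : 1 ≤ k) (hkn : k ≤ n) :
    (Finset.Icc 1 n).filter (Ep y)
      = insert k (((Finset.Icc 1 (n - k)).filter (Ep (fun i => y (k + i)))).image (· + k)) := by
  ext t
  rw [Finset.mem_insert, Finset.mem_filter, Finset.mem_Icc, Finset.mem_image]
  constructor
  · rintro ⟨⟨ht1, htn⟩, hep⟩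
    rcases Nat.lt_trichotomy t k with hlt | rfl | hgt
    · exfalso
      have := hep 0 (by omega)
      rw [ps_zero] at this
      exact absurd (h.2 t ht1 hlt) (not_lt.mpr this)
    · exact Or.inl rfl
    · refine Or.inr ⟨t - k, ?_, by omega⟩
      rw [Finset.mem_filter, Finset.mem_Icc]
      exact ⟨⟨by omega, by omega⟩, (Ep_cut h hgt).mp hep⟩
  · rintro (rfl | ⟨b, hb, rfl⟩)
    · exact ⟨⟨hk1, hkn⟩, Ep_of_TE h⟩
    · rw [Finset.mem_filter, Finset.mem_Icc] at hb
      refine ⟨⟨by omega, by omega⟩, ?_⟩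
      rw [Ep_cut h (by omega)]
      have : b + k - k = b := by omega
      rw [this]
      exact hb.2

lemma DN_cut {k n : ℕ} {y : ℕ → ℝ} (h : TE k y) (hk1 : 1 ≤ k) (hkn : k ≤ n) :
    DN n y = DN (n - k) (fun i => y (k + i)) + 1 := by
  unfold DN
  rw [epoch_set_cut h hk1 hkn, Finset.card_insert_of_notMem, Finset.card_image_of_injective]
  · exact add_left_injective k
  · rw [Finset.mem_image]
    rintro ⟨b, hb, hbe⟩
    rw [Finset.mem_filter, Finset.mem_Icc] at hb
    omega

lemma GN_cut {k n : ℕ} {y : ℕ → ℝ} (h : TE k y) (hkn : k < n) :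
    GN n y ↔ GN (n - k) (fun i => y (k + i)) := Ep_cut h hkn

lemma TE_iff_DN_one {n : ℕ} (hn : 1 ≤ n) (y : ℕ → ℝ) :
    (GN n y ∧ DN n y = 1) ↔ TE n y := by
  constructor
  · rintro ⟨hg, hd⟩
    obtain ⟨k, hk1, hkn, hTE⟩ := TE_exists hn hg
    rcases Nat.eq_or_lt_of_le hkn with rfl | hlt
    · exact hTE
    · exfalso
      have hdn := DN_cut hTE hk1 (le_of_lt hlt)
      have hg' := (GN_cut hTE hlt).mp hg
      have := DN_pos (by omega) hg'
      omega
  · intro hTE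
    refine ⟨Ep_of_TE hTE, ?_⟩
    rw [DN_cut hTE hn le_rfl]
    have : n - n = 0 := by omega
    rw [this]
    unfold DN
    simp

lemma decomp {m n : ℕ} (hm : 1 ≤ m) (hn : 1 ≤ n) (y : ℕ → ℝ) :
    (GN n y ∧ DN n y = m + 1)
      ↔ ∃ k, 1 ≤ k ∧ k < n ∧ TE k y ∧ GN (n - k) (fun i => y (k + i))
          ∧ DN (n - k) (fun i => y (k + i)) = m := by
  constructor
  · rintro ⟨hg, hd⟩
    obtain ⟨k, hk1, hkn, hTE⟩ := TE_exists hn hg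
    rcases Nat.eq_or_lt_of_le hkn with rfl | hlt
    · exfalso
      have h1 := (TE_iff_DN_one hn y).mpr hTE
      omega
    · refine ⟨k, hk1, hlt, hTE, (GN_cut hTE hlt).mp hg, ?_⟩
      have := DN_cut hTE hk1 (le_of_lt hlt)
      omega
  · rintro ⟨k, hk1, hkn, hTE, hg', hd'⟩
    refine ⟨(GN_cut hTE hkn).mpr hg', ?_⟩
    rw [DN_cut hTE hk1 (le_of_lt hkn)]
    omega

end Stmt14

namespace Stmt14
open scoped Classical

/-- padding a finite vector to a sequence -/
def padv {n : ℕ} (v : Fin n → ℝ) : ℕ → ℝ := fun i => if h : i < n then v ⟨i, h⟩ else 0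

lemma padv_lt {n : ℕ} (v : Fin n → ℝ) {i : ℕ} (h : i < n) : padv v i = v ⟨i, h⟩ := dif_pos h

lemma meas_psv (n k : ℕ) : Measurable fun v : Fin n → ℝ => ps (padv v) k := by
  unfold ps
  apply Finset.measurable_sum
  intro i _
  unfold padv
  by_cases h : i < n
  · simp only [dif_pos h]
    exact measurable_pi_apply _
  · simp only [dif_neg h]
    exact measurable_const

lemma meas_Epv (n k : ℕ) : MeasurableSet {v : Fin n → ℝ | Ep (padv v) k} := by
  have he : {v : Fin n → ℝ | Ep (padv v) k}
      = ⋂ j ∈ Finset.range k, {v | ps (padv v) k ≤ ps (padv v) j} := by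
    ext v
    simp only [Set.mem_iInter, Set.mem_setOf_eq, Finset.mem_range]
    rfl
  rw [he]
  exact MeasurableSet.biInter (Finset.range k).countable_toSet
    fun j _ => measurableSet_le (meas_psv n k) (meas_psv n j)

lemma meas_DNv (n : ℕ) : Measurable fun v : Fin n → ℝ => DN n (padv v) := by
  unfold DN
  simp_rw [Finset.card_filter]
  apply Finset.measurable_sum
  intro k _
  exact Measurable.ite (meas_Epv n k) measurable_const measurable_const

lemma meas_Aset (n m : ℕ) :
    MeasurableSet {v : Fin n → ℝ | GN n (padv v) ∧ DN n (padv v) = m} := by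
  have : {v : Fin n → ℝ | GN n (padv v) ∧ DN n (padv v) = m}
      = {v | Ep (padv v) n} ∩ ((fun v : Fin n → ℝ => DN n (padv v)) ⁻¹' {m}) := rfl
  rw [this]
  exact (meas_Epv n n).inter (meas_DNv n (measurableSet_singleton m))

lemma meas_TEv (n : ℕ) : MeasurableSet {v : Fin n → ℝ | TE n (padv v)} := by
  have he : {v : Fin n → ℝ | TE n (padv v)}
      = {v | ps (padv v) n ≤ 0} ∩ ⋂ k ∈ Finset.Ico 1 n, {v | 0 < ps (padv v) k} := by
    ext v
    simp only [Set.mem_inter_iff, Set.mem_iInter, Set.mem_setOf_eq, Finset.mem_Ico, TE]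
    constructor
    · rintro ⟨h1, h2⟩; exact ⟨h1, fun k hk => h2 k hk.1 hk.2⟩
    · rintro ⟨h1, h2⟩; exact ⟨h1, fun k hk1 hk2 => h2 k ⟨hk1, hk2⟩⟩
  rw [he]
  exact (measurableSet_le (meas_psv n n) measurable_const).inter
    (MeasurableSet.biInter (Finset.Ico 1 n).countable_toSet
      fun k _ => measurableSet_lt measurable_const (meas_psv n k))

lemma meas_LEv (n : ℕ) : MeasurableSet {v : Fin n → ℝ | ps (padv v) n ≤ 0} :=
  measurableSet_le (meas_psv n n) measurable_const

section Prob

variable [MeasurableSpace Ω] {P : Measure Ω} [IsProbabilityMeasure P] {X : ℕ → Ω → ℝ}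
variable (hmeas : ∀ k, Measurable (X k))
  (hindep : iIndepFun X P)
  (hident : ∀ k, IdentDistrib (X k) (X 0) P P)

include hmeas in
lemma meas_vec (c n : ℕ) : Measurable fun ω (i : Fin n) => X (c + (i : ℕ)) ω :=
  measurable_pi_lambda _ fun _ => hmeas _

include hmeas hindep hident in
lemma map_vec (c n : ℕ) :
    Measure.map (fun ω (i : Fin n) => X (c + (i : ℕ)) ω) P
      = Measure.pi (fun _ : Fin n => Measure.map (X 0) P) := by
  refine (Measure.pi_eq fun s hs => ?_).symm
  rw [Measure.map_apply (meas_vec hmeas c n) (MeasurableSet.univ_pi hs)]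
  set sets : ℕ → Set ℝ := fun j => if h : c ≤ j ∧ j - c < n then s ⟨j - c, h.2⟩ else Set.univ
    with hsets_def
  have hsets : ∀ i : Fin n, sets (c + (i : ℕ)) = s i := by
    intro i
    rw [hsets_def]
    dsimp only
    have h : c ≤ c + (i : ℕ) ∧ c + (i : ℕ) - c < n := ⟨by omega, by omega⟩
    rw [dif_pos h]
    congr 1
    ext
    simp
  have hmeas_sets : ∀ j, MeasurableSet (sets j) := by
    intro j
    rw [hsets_def]
    dsimp only
    by_cases h : c ≤ j ∧ j - c < n
    · rw [dif_pos h]; exact hs _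
    · rw [dif_neg h]; exact MeasurableSet.univ
  set Sf : Finset ℕ := Finset.image (fun i : Fin n => c + (i : ℕ)) Finset.univ with hSf
  have hpre : (fun ω (i : Fin n) => X (c + (i : ℕ)) ω) ⁻¹' (Set.univ.pi s)
      = ⋂ j ∈ Sf, X j ⁻¹' sets j := by
    ext ω
    simp only [Set.mem_preimage, Set.mem_univ_pi, Set.mem_iInter, hSf, Finset.mem_image,
      Finset.mem_univ, true_and]
    constructor
    · rintro h j ⟨i, rfl⟩
      rw [hsets i]
      exact h i
    · intro h i
      have := h (c + (i : ℕ)) ⟨i, rfl⟩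
      rwa [hsets i] at this
  rw [hpre, hindep.measure_inter_preimage_eq_mul Sf (fun j _ => hmeas_sets j)]
  rw [hSf, Finset.prod_image (by intro a _ b _ h; ext; dsimp only at h; omega)]
  apply Finset.prod_congr rfl
  intro i _
  rw [hsets i, ← Measure.map_apply (hmeas _) (hs i), (hident (c + (i : ℕ))).map_eq]

include hmeas hindep hident in
lemma prob_vec (c n : ℕ) {A : Set (Fin n → ℝ)} (hA : MeasurableSet A) :
    P ((fun ω (i : Fin n) => X (c + (i : ℕ)) ω) ⁻¹' A)
      = Measure.pi (fun _ : Fin n => Measure.map (X 0) P) A := by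
  rw [← map_vec hmeas hindep hident c n, Measure.map_apply (meas_vec hmeas c n) hA]

lemma pi_comp_equiv {n : ℕ} (μ : Measure ℝ) [IsProbabilityMeasure μ] (e : Fin n ≃ Fin n)
    {A : Set (Fin n → ℝ)} (hA : MeasurableSet A) :
    Measure.pi (fun _ : Fin n => μ) ((fun v : Fin n → ℝ => v ∘ e) ⁻¹' A)
      = Measure.pi (fun _ : Fin n => μ) A := by
  have hm : Measurable fun v : Fin n → ℝ => v ∘ e :=
    measurable_pi_lambda _ fun i => measurable_pi_apply (e i)
  have hmap : Measure.map (fun v : Fin n → ℝ => v ∘ e)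
      (Measure.pi (fun _ : Fin n => μ)) = Measure.pi (fun _ : Fin n => μ) := by
    refine (Measure.pi_eq fun s hs => ?_).symm
    rw [Measure.map_apply hm (MeasurableSet.univ_pi hs)]
    have hpre : (fun v : Fin n → ℝ => v ∘ e) ⁻¹' (Set.univ.pi s)
        = Set.univ.pi (fun j => s (e.symm j)) := by
      ext v
      simp only [Set.mem_preimage, Set.mem_univ_pi, Function.comp_apply]
      constructor
      · intro h j
        have := h (e.symm j)
        rwa [Equiv.apply_symm_apply] at this
      · intro h i
        have := h (e i)
        rwa [Equiv.symm_apply_apply] at this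
    rw [hpre, Measure.pi_pi]
    exact (Equiv.prod_comp e.symm fun i => μ (s i))
  conv_rhs => rw [← hmap]
  rw [Measure.map_apply hm hA]

include hmeas hindep in
lemma indep_blocks (k m : ℕ) {A : Set (Fin k → ℝ)} {B : Set (Fin m → ℝ)}
    (hA : MeasurableSet A) (hB : MeasurableSet B) :
    P ((fun ω (i : Fin k) => X (0 + (i : ℕ)) ω) ⁻¹' A
        ∩ (fun ω (i : Fin m) => X (k + (i : ℕ)) ω) ⁻¹' B)
      = P ((fun ω (i : Fin k) => X (0 + (i : ℕ)) ω) ⁻¹' A)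
        * P ((fun ω (i : Fin m) => X (k + (i : ℕ)) ω) ⁻¹' B) := by
  have hdisj : Disjoint (Finset.range k) (Finset.Ico k (k + m)) := by
    rw [Finset.disjoint_left]
    intro a ha hb
    rw [Finset.mem_range] at ha
    rw [Finset.mem_Ico] at hb
    omega
  have hIF := hindep.indepFun_finset (Finset.range k) (Finset.Ico k (k + m)) hdisj hmeas
  set φ : (↥(Finset.range k) → ℝ) → (Fin k → ℝ) :=
    fun w i => w ⟨(i : ℕ), Finset.mem_range.mpr i.2⟩ with hφ
  set ψ : (↥(Finset.Ico k (k + m)) → ℝ) → (Fin m → ℝ) :=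
    fun w i => w ⟨k + (i : ℕ), Finset.mem_Ico.mpr ⟨by omega, by omega⟩⟩ with hψ
  have hφm : Measurable φ := measurable_pi_lambda _ fun i => measurable_pi_apply _
  have hψm : Measurable ψ := measurable_pi_lambda _ fun i => measurable_pi_apply _
  have hIF2 := hIF.comp hφm hψm
  have he1 : φ ∘ (fun a (i : ↥(Finset.range k)) => X (i : ℕ) a)
      = fun ω (i : Fin k) => X (0 + (i : ℕ)) ω := by
    funext ω i
    simp [hφ]
  have he2 : ψ ∘ (fun a (i : ↥(Finset.Ico k (k + m))) => X (i : ℕ) a)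
      = fun ω (i : Fin m) => X (k + (i : ℕ)) ω := by
    funext ω i
    simp [hψ]
  rw [he1, he2] at hIF2
  exact (indepFun_iff_measure_inter_preimage_eq_mul.mp hIF2) A B hA hB

end Prob

end Stmt14

namespace Stmt14
open scoped Classical

section Prob2

variable [MeasurableSpace Ω] {P : Measure Ω} [IsProbabilityMeasure P] {X : ℕ → Ω → ℝ}
variable (hmeas : ∀ k, Measurable (X k))
  (hindep : iIndepFun X P)
  (hident : ∀ k, IdentDistrib (X k) (X 0) P P)

/-- the increment sequence of `ω` -/
def Xseq (X : ℕ → Ω → ℝ) (ω : Ω) : ℕ → ℝ := fun i => X i ω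

lemma ev_TE (n : ℕ) :
    tau0Eq X n = (fun ω (i : Fin n) => X (0 + (i : ℕ)) ω) ⁻¹' {v | TE n (padv v)} := by
  ext ω
  have hc : ∀ i < n, Xseq X ω i = padv (fun i : Fin n => X (0 + (i : ℕ)) ω) i := by
    intro i hi
    rw [padv_lt _ hi]
    simp [Xseq]
  have : ω ∈ tau0Eq X n ↔ TE n (Xseq X ω) := Iff.rfl
  rw [Set.mem_preimage, Set.mem_setOf_eq, this]
  exact TE_congr hc

lemma ev_A (n m : ℕ) :
    {ω | GN n (Xseq X ω) ∧ DN n (Xseq X ω) = m}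
      = (fun ω (i : Fin n) => X (0 + (i : ℕ)) ω) ⁻¹'
          {v | GN n (padv v) ∧ DN n (padv v) = m} := by
  ext ω
  have hc : ∀ i < n, Xseq X ω i = padv (fun i : Fin n => X (0 + (i : ℕ)) ω) i := by
    intro i hi
    rw [padv_lt _ hi]
    simp [Xseq]
  rw [Set.mem_preimage, Set.mem_setOf_eq, Set.mem_setOf_eq]
  rw [GN_congr hc, DN_congr hc]

lemma ev_A_shift (k m m' : ℕ) :
    {ω | GN m (fun i => Xseq X ω (k + i)) ∧ DN m (fun i => Xseq X ω (k + i)) = m'}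
      = (fun ω (i : Fin m) => X (k + (i : ℕ)) ω) ⁻¹'
          {v | GN m (padv v) ∧ DN m (padv v) = m'} := by
  ext ω
  have hc : ∀ i < m, Xseq X ω (k + i) = padv (fun i : Fin m => X (k + (i : ℕ)) ω) i := by
    intro i hi
    rw [padv_lt _ hi]
    simp [Xseq]
  rw [Set.mem_preimage, Set.mem_setOf_eq, Set.mem_setOf_eq]
  rw [GN_congr hc, DN_congr hc]

lemma ev_LE (n : ℕ) :
    {ω | S X n ω ≤ 0}
      = (fun ω (i : Fin n) => X (0 + (i : ℕ)) ω) ⁻¹' {v | ps (padv v) n ≤ 0} := by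
  ext ω
  have hc : ∀ i < n, Xseq X ω i = padv (fun i : Fin n => X (0 + (i : ℕ)) ω) i := by
    intro i hi
    rw [padv_lt _ hi]
    simp [Xseq]
  rw [Set.mem_preimage, Set.mem_setOf_eq, Set.mem_setOf_eq]
  have h1 : S X n ω = ps (Xseq X ω) n := rfl
  rw [h1, ps_congr hc le_rfl]

include hmeas in
lemma meas_evA (n m : ℕ) : MeasurableSet {ω | GN n (Xseq X ω) ∧ DN n (Xseq X ω) = m} := by
  rw [ev_A]
  exact meas_vec hmeas 0 n (meas_Aset n m)

include hmeas in
lemma meas_evTE (n : ℕ) : MeasurableSet (tau0Eq X n) := by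
  rw [ev_TE]
  exact meas_vec hmeas 0 n (meas_TEv n)

include hmeas in
lemma meas_evLE (n : ℕ) : MeasurableSet {ω | S X n ω ≤ 0} := by
  rw [ev_LE]
  exact meas_vec hmeas 0 n (meas_LEv n)

include hmeas hindep hident in
/-- Key identity: `P(Sₙ ≤ 0) = n · ∑ₘ (1/m) P(Tₘ = n)`. -/
lemma Q1 {n : ℕ} (hn : 1 ≤ n) :
    (P {ω | S X n ω ≤ 0}).toReal
      = n * ∑ m ∈ Finset.Icc 1 n,
          ((m : ℝ))⁻¹ * (P {ω | GN n (Xseq X ω) ∧ DN n (Xseq X ω) = m}).toReal := by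
  haveI : NeZero n := ⟨by omega⟩
  haveI : IsProbabilityMeasure (Measure.map (X 0) P) :=
    Measure.isProbabilityMeasure_map (hmeas 0).aemeasurable
  set ej : ℕ → (Fin n ≃ Fin n) := fun j => Equiv.addLeft ((Fin.ofNat n j)) with hej
  set B : ℕ → ℕ → Set Ω := fun j m =>
    (fun ω (i : Fin n) => X (0 + (i : ℕ)) ω) ⁻¹'
      ((fun v : Fin n → ℝ => v ∘ (ej j)) ⁻¹' {v | GN n (padv v) ∧ DN n (padv v) = m}) with hB
  have hBmeas : ∀ j m, MeasurableSet (B j m) := by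
    intro j m
    apply meas_vec hmeas 0 n
    exact (measurable_pi_lambda _ fun i => measurable_pi_apply _) (meas_Aset n m)
  -- pointwise identity
  have key : ∀ ω, ∑ j ∈ Finset.range n, ∑ m ∈ Finset.Icc 1 n,
        Set.indicator (B j m) (fun _ => ((m : ℝ))⁻¹) ω
      = Set.indicator {ω | S X n ω ≤ 0} (fun _ => (1 : ℝ)) ω := by
    intro ω
    set y : ℕ → ℝ := fun i => X (i % n) ω with hy
    have hper : ∀ i, y (i + n) = y i := by
      intro i
      simp [hy, Nat.add_mod_right]
    have hcomb := comb_sum (by omega : 0 < n) hper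
    have hterm : ∀ j ∈ Finset.range n,
        ∑ m ∈ Finset.Icc 1 n, Set.indicator (B j m) (fun _ => ((m : ℝ))⁻¹) ω
          = hh n (fun i => y (j + i)) := by
      intro j hj
      have hc : ∀ i < n, (fun i => y (j + i)) i
          = padv ((fun i : Fin n => X (0 + (i : ℕ)) ω) ∘ (ej j)) i := by
        intro i hi
        rw [padv_lt _ hi]
        simp only [Function.comp_apply, hej]
        have hval : ((Equiv.addLeft ((Fin.ofNat n j))) (⟨i, hi⟩ : Fin n) : ℕ) = (j + i) % n := by
          simp [Equiv.addLeft, Fin.add_def, Nat.mod_add_mod]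
        rw [hval]
        simp [hy]
      rw [hh_congr hc, hh_eq_sum hn]
      apply Finset.sum_congr rfl
      intro m hm
      rw [Set.indicator_apply]
      have hmem : ω ∈ B j m ↔ (GN n (padv ((fun i : Fin n => X (0 + (i : ℕ)) ω) ∘ (ej j)))
          ∧ DN n (padv ((fun i : Fin n => X (0 + (i : ℕ)) ω) ∘ (ej j))) = m) := Iff.rfl
      by_cases hcond : ω ∈ B j m
      · rw [if_pos hcond, if_pos (hmem.mp hcond)]
      · rw [if_neg hcond, if_neg (fun hc2 => hcond (hmem.mpr hc2))]
    rw [Finset.sum_congr rfl hterm, hcomb]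
    have hps : ps y n = S X n ω := by
      have hc : ∀ i < n, y i = Xseq X ω i := by
        intro i hi
        simp [hy, Xseq, Nat.mod_eq_of_lt hi]
      rw [ps_congr hc le_rfl]
      rfl
    rw [Set.indicator_apply, hps]
    by_cases hs : S X n ω ≤ 0
    · simp [Set.mem_setOf_eq, hs]
    · simp [Set.mem_setOf_eq, hs]
  -- integrate
  have hint : ∀ (E : Set Ω), MeasurableSet E → ∀ c : ℝ,
      ∫ ω, Set.indicator E (fun _ => c) ω ∂P = (P E).toReal * c := by
    intro E hE c
    rw [integral_indicator_const c hE, smul_eq_mul]; rfl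
  have hL : ∫ ω, (∑ j ∈ Finset.range n, ∑ m ∈ Finset.Icc 1 n,
        Set.indicator (B j m) (fun _ => ((m : ℝ))⁻¹) ω) ∂P
      = ∑ j ∈ Finset.range n, ∑ m ∈ Finset.Icc 1 n, (P (B j m)).toReal * ((m : ℝ))⁻¹ := by
    rw [MeasureTheory.integral_finset_sum]
    · apply Finset.sum_congr rfl
      intro j _
      rw [MeasureTheory.integral_finset_sum]
      · exact Finset.sum_congr rfl fun m _ => hint _ (hBmeas j m) _
      · intro m _
        exact (integrable_const _).indicator (hBmeas j m)
    · intro j _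
      apply MeasureTheory.integrable_finset_sum
      intro m _
      exact (integrable_const _).indicator (hBmeas j m)
  have hR : ∫ ω, Set.indicator {ω | S X n ω ≤ 0} (fun _ => (1:ℝ)) ω ∂P
      = (P {ω | S X n ω ≤ 0}).toReal * 1 := hint _ (meas_evLE hmeas n) _
  have hIeq : ∫ ω, (∑ j ∈ Finset.range n, ∑ m ∈ Finset.Icc 1 n,
        Set.indicator (B j m) (fun _ => ((m : ℝ))⁻¹) ω) ∂P
      = ∫ ω, Set.indicator {ω | S X n ω ≤ 0} (fun _ => (1:ℝ)) ω ∂P := by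
    apply MeasureTheory.integral_congr_ae
    filter_upwards with ω using key ω
  have hPB : ∀ j m, (P (B j m)).toReal
      = (P {ω | GN n (Xseq X ω) ∧ DN n (Xseq X ω) = m}).toReal := by
    intro j m
    rw [hB]
    dsimp only
    have hcm : Measurable fun v : Fin n → ℝ => v ∘ (ej j) :=
      measurable_pi_lambda _ fun i => measurable_pi_apply _
    rw [prob_vec hmeas hindep hident 0 n (hcm (meas_Aset n m))]
    rw [pi_comp_equiv _ (ej j) (meas_Aset n m)]
    rw [ev_A, prob_vec hmeas hindep hident 0 n (meas_Aset n m)]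
  rw [hL, hR] at hIeq
  rw [mul_one] at hIeq
  rw [← hIeq]
  rw [Finset.sum_congr rfl fun j _ => Finset.sum_congr rfl fun m _ => by rw [hPB j m, mul_comm]]
  rw [Finset.sum_const, Finset.card_range, nsmul_eq_mul]

include hmeas in
lemma Q2 {n : ℕ} (hn : 1 ≤ n) :
    (P {ω | GN n (Xseq X ω) ∧ DN n (Xseq X ω) = 1}).toReal = (P (tau0Eq X n)).toReal := by
  have hset : {ω | GN n (Xseq X ω) ∧ DN n (Xseq X ω) = 1} = tau0Eq X n := by
    ext ω
    rw [Set.mem_setOf_eq]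
    have h2 : ω ∈ tau0Eq X n ↔ TE n (Xseq X ω) := Iff.rfl
    rw [h2]
    exact TE_iff_DN_one hn (Xseq X ω)
  rw [hset]

include hmeas hindep hident in
lemma Q3 {m n : ℕ} (hm : 1 ≤ m) (hn : 1 ≤ n) :
    (P {ω | GN n (Xseq X ω) ∧ DN n (Xseq X ω) = m + 1}).toReal
      = ∑ k ∈ Finset.Icc 1 (n - 1), (P (tau0Eq X k)).toReal
          * (P {ω | GN (n - k) (Xseq X ω) ∧ DN (n - k) (Xseq X ω) = m}).toReal := by
  set C : ℕ → Set Ω := fun k =>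
    (fun ω (i : Fin (n - k)) => X (k + (i : ℕ)) ω) ⁻¹'
      {v | GN (n - k) (padv v) ∧ DN (n - k) (padv v) = m} with hC
  have hCmeas : ∀ k, MeasurableSet (C k) :=
    fun k => meas_vec hmeas k (n - k) (meas_Aset (n - k) m)
  set D : ℕ → Set Ω := fun k => tau0Eq X k ∩ C k with hD
  have hDmeas : ∀ k, MeasurableSet (D k) := fun k => (meas_evTE hmeas k).inter (hCmeas k)
  have hunion : {ω | GN n (Xseq X ω) ∧ DN n (Xseq X ω) = m + 1}
      = ⋃ k ∈ Finset.Icc 1 (n - 1), D k := by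
    ext ω
    rw [Set.mem_setOf_eq, Set.mem_iUnion₂]
    rw [decomp hm hn (Xseq X ω)]
    constructor
    · rintro ⟨k, hk1, hkn, hTEk, hg, hd⟩
      refine ⟨k, Finset.mem_Icc.mpr ⟨hk1, by omega⟩, hTEk, ?_⟩
      have hmem : ω ∈ C k ↔ (GN (n - k) (fun i => Xseq X ω (k + i))
          ∧ DN (n - k) (fun i => Xseq X ω (k + i)) = m) := by
        rw [hC]
        have := ev_A_shift (X := X) k (n - k) m
        constructor
        · intro h2
          have h3 : ω ∈ (fun ω (i : Fin (n-k)) => X (k + (i : ℕ)) ω) ⁻¹'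
              {v | GN (n-k) (padv v) ∧ DN (n-k) (padv v) = m} := h2
          rw [← this] at h3
          exact h3
        · intro h2
          have h3 : ω ∈ {ω | GN (n-k) (fun i => Xseq X ω (k + i))
              ∧ DN (n-k) (fun i => Xseq X ω (k + i)) = m} := h2
          rw [this] at h3
          exact h3
      exact hmem.mpr ⟨hg, hd⟩
    · rintro ⟨k, hk, hTEk, hCk⟩
      rw [Finset.mem_Icc] at hk
      refine ⟨k, hk.1, by omega, hTEk, ?_⟩
      have hmem : ω ∈ C k ↔ (GN (n - k) (fun i => Xseq X ω (k + i))
          ∧ DN (n - k) (fun i => Xseq X ω (k + i)) = m) := by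
        rw [hC]
        have := ev_A_shift (X := X) k (n - k) m
        constructor
        · intro h2
          have h3 : ω ∈ (fun ω (i : Fin (n-k)) => X (k + (i : ℕ)) ω) ⁻¹'
              {v | GN (n-k) (padv v) ∧ DN (n-k) (padv v) = m} := h2
          rw [← this] at h3
          exact h3
        · intro h2
          have h3 : ω ∈ {ω | GN (n-k) (fun i => Xseq X ω (k + i))
              ∧ DN (n-k) (fun i => Xseq X ω (k + i)) = m} := h2
          rw [this] at h3
          exact h3
      exact hmem.mp hCk
  have hdisj : Set.PairwiseDisjoint ↑(Finset.Icc 1 (n - 1)) D := by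
    intro k hk k' hk' hne
    rw [Finset.coe_Icc, Set.mem_Icc] at hk hk'
    apply Set.disjoint_left.mpr
    rintro ω ⟨hT, -⟩ ⟨hT', -⟩
    exact hne (TE_unique hT hT' (by omega) (by omega))
  have hPsum : P {ω | GN n (Xseq X ω) ∧ DN n (Xseq X ω) = m + 1}
      = ∑ k ∈ Finset.Icc 1 (n - 1), P (D k) := by
    rw [hunion]
    exact measure_biUnion_finset hdisj fun k _ => hDmeas k
  have hPD : ∀ k ∈ Finset.Icc 1 (n - 1), (P (D k)).toReal
      = (P (tau0Eq X k)).toReal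
        * (P {ω | GN (n - k) (Xseq X ω) ∧ DN (n - k) (Xseq X ω) = m}).toReal := by
    intro k hk
    have e1 : D k = (fun ω (i : Fin k) => X (0 + (i : ℕ)) ω) ⁻¹' {v | TE k (padv v)}
        ∩ (fun ω (i : Fin (n - k)) => X (k + (i : ℕ)) ω) ⁻¹'
            {v | GN (n - k) (padv v) ∧ DN (n - k) (padv v) = m} := by
      rw [hD]
      dsimp only
      rw [ev_TE (X := X) k, hC]
    have h1 : P (D k) = P (tau0Eq X k)
        * P {ω | GN (n - k) (Xseq X ω) ∧ DN (n - k) (Xseq X ω) = m} := by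
      rw [e1, indep_blocks hmeas hindep k (n - k) (meas_TEv k) (meas_Aset (n - k) m),
        ← ev_TE]
      congr 1
      rw [prob_vec hmeas hindep hident k (n - k) (meas_Aset (n - k) m),
        ev_A, prob_vec hmeas hindep hident 0 (n - k) (meas_Aset (n - k) m)]
    rw [h1, ENNReal.toReal_mul]
  rw [hPsum, ENNReal.toReal_sum (fun k _ => measure_ne_top P _)]
  exact Finset.sum_congr rfl hPD

include hmeas in
lemma q_zero_of_gt {m n : ℕ} (h : n < m) :
    (P {ω | GN n (Xseq X ω) ∧ DN n (Xseq X ω) = m}).toReal = 0 := by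
  have : {ω | GN n (Xseq X ω) ∧ DN n (Xseq X ω) = m} = ∅ := by
    ext ω
    simp only [Set.mem_setOf_eq, Set.mem_empty_iff_false, iff_false]
    rintro ⟨-, hd⟩
    have := DN_le n (Xseq X ω)
    omega
  rw [this]
  simp

include hmeas in
lemma q_zero_of_zero {n : ℕ} (hn : 1 ≤ n) :
    (P {ω | GN n (Xseq X ω) ∧ DN n (Xseq X ω) = 0}).toReal = 0 := by
  have : {ω | GN n (Xseq X ω) ∧ DN n (Xseq X ω) = 0} = ∅ := by
    ext ω
    simp only [Set.mem_setOf_eq, Set.mem_empty_iff_false, iff_false]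
    rintro ⟨hg, hd⟩
    have := DN_pos hn hg
    omega
  rw [this]
  simp

end Prob2

end Stmt14

namespace Stmt14
open scoped Classical

lemma sum_Icc_one (N : ℕ) (f : ℕ → ℝ) :
    ∑ k ∈ Finset.Icc 1 N, f k = ∑ i ∈ Finset.range N, f (i + 1) := by
  rw [← Finset.Ico_add_one_right_eq_Icc, Finset.sum_Ico_eq_sum_range]
  exact Finset.sum_congr rfl fun i _ => by rw [Nat.add_comm]

variable {Ω : Type*}

/-- `r n = P(τ₀ = n)` -/
noncomputable def rr [MeasurableSpace Ω] (P : Measure Ω) (X : ℕ → Ω → ℝ) (n : ℕ) : ℝ :=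
  (P (tau0Eq X n)).toReal

/-- `q m n = P(T_m = n)` -/
noncomputable def qq [MeasurableSpace Ω] (P : Measure Ω) (X : ℕ → Ω → ℝ) (m n : ℕ) : ℝ :=
  (P {ω | GN n (Xseq X ω) ∧ DN n (Xseq X ω) = m}).toReal

/-- `a n = P(Sₙ ≤ 0)` -/
noncomputable def aa [MeasurableSpace Ω] (P : Measure Ω) (X : ℕ → Ω → ℝ) (n : ℕ) : ℝ :=
  (P {ω | S X n ω ≤ 0}).toReal

section Main

variable [MeasurableSpace Ω] {P : Measure Ω} [IsProbabilityMeasure P] {X : ℕ → Ω → ℝ}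
variable (hmeas : ∀ k, Measurable (X k))
  (hindep : iIndepFun X P)
  (hident : ∀ k, IdentDistrib (X k) (X 0) P P)

lemma toReal_nonneg' (E : Set Ω) : 0 ≤ (P E).toReal := ENNReal.toReal_nonneg

lemma toReal_le_one' (E : Set Ω) : (P E).toReal ≤ 1 := by
  have h1 : P E ≤ 1 := prob_le_one
  have := ENNReal.toReal_mono (by simp) h1
  simpa using this

include hmeas in
lemma summable_rr : Summable (fun n => rr P X (n + 1)) ∧ (∑' n, rr P X (n + 1)) ≤ 1 := by
  have hd : Pairwise (Function.onFun Disjoint fun n : ℕ => tau0Eq X (n + 1)) := by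
    intro i j hij
    apply Set.disjoint_left.mpr
    intro ω hi hj
    have h1 : TE (i + 1) (Xseq X ω) := hi
    have h2 : TE (j + 1) (Xseq X ω) := hj
    have := TE_unique h1 h2 (by omega) (by omega)
    omega
  have hU : P (⋃ n, tau0Eq X (n + 1)) = ∑' n, P (tau0Eq X (n + 1)) :=
    measure_iUnion hd fun n => meas_evTE hmeas (n + 1)
  have hne : (∑' n, P (tau0Eq X (n + 1))) ≠ ⊤ := by
    rw [← hU]; exact measure_ne_top P _
  constructor
  · exact ENNReal.summable_toReal hne
  · have heq : (∑' n, rr P X (n + 1)) = (∑' n, P (tau0Eq X (n + 1))).toReal := by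
      rw [ENNReal.tsum_toReal_eq fun n => measure_ne_top P _]
      rfl
    rw [heq, ← hU]
    exact toReal_le_one' _

end Main

section Series

variable {u : ℝ} (hu0 : 0 < u) (hu1 : u < 1)

include hu0 hu1 in
lemma summable_upow : Summable (fun n : ℕ => u ^ (n + 1)) := by
  have h := summable_geometric_of_lt_one (le_of_lt hu0) hu1
  exact (h.mul_left u).congr fun n => by ring

include hu0 hu1 in
lemma summable_udom (f : ℕ → ℝ) (h0 : ∀ n, 0 ≤ f n) (h1 : ∀ n, f n ≤ 1) :
    Summable (fun n : ℕ => u ^ (n + 1) * f n) := by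
  apply Summable.of_nonneg_of_le
    (fun n => mul_nonneg (pow_nonneg (le_of_lt hu0) _) (h0 n))
    (fun n => ?_) (summable_upow hu0 hu1)
  calc u ^ (n + 1) * f n ≤ u ^ (n + 1) * 1 :=
        mul_le_mul_of_nonneg_left (h1 n) (pow_nonneg (le_of_lt hu0) _)
    _ = u ^ (n + 1) := mul_one _

include hu0 hu1 in
lemma summable_nupow : Summable (fun n : ℕ => ((n : ℝ) + 1) * u ^ (n + 1)) := by
  have hnorm : ‖u‖ < 1 := by
    rw [Real.norm_eq_abs, abs_of_nonneg (le_of_lt hu0)]; exact hu1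
  have h1 : Summable (fun n : ℕ => (n : ℝ) ^ 1 * u ^ n) :=
    summable_pow_mul_geometric_of_norm_lt_one 1 hnorm
  have h2 := summable_geometric_of_lt_one (le_of_lt hu0) hu1
  exact ((h1.mul_left u).add (h2.mul_left u)).congr fun n => by push_cast; ring

end Series

end Stmt14

namespace Stmt14
open scoped Classical

section MainProof

variable {Ω : Type*} [MeasurableSpace Ω] {P : Measure Ω} [IsProbabilityMeasure P] {X : ℕ → Ω → ℝ}
variable (hmeas : ∀ k, Measurable (X k))
  (hindep : iIndepFun X P)
  (hident : ∀ k, IdentDistrib (X k) (X 0) P P)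

include hmeas hindep hident in
lemma Q1' {n : ℕ} (hn : 1 ≤ n) :
    aa P X n = n * ∑ m ∈ Finset.Icc 1 n, ((m : ℝ))⁻¹ * qq P X m n :=
  Q1 hmeas hindep hident hn

include hmeas in
lemma Q2' {n : ℕ} (hn : 1 ≤ n) : qq P X 1 n = rr P X n := Q2 hmeas hn

include hmeas hindep hident in
lemma Q3' {m n : ℕ} (hm : 1 ≤ m) (hn : 1 ≤ n) :
    qq P X (m + 1) n = ∑ k ∈ Finset.Icc 1 (n - 1), rr P X k * qq P X m (n - k) :=
  Q3 hmeas hindep hident hm hn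

include hmeas in
lemma qq_zero_gt {m n : ℕ} (h : n < m) : qq P X m n = 0 := q_zero_of_gt hmeas h

include hmeas in
lemma qq_zero0 {n : ℕ} (hn : 1 ≤ n) : qq P X 0 n = 0 := q_zero_of_zero hmeas hn

include hmeas hindep hident in
theorem spitzer_main {u : ℝ} (hu0 : 0 < u) (hu1 : u < 1) :
    1 - ∑' n : ℕ, u ^ (n + 1) * rr P X (n + 1)
      = Real.exp (-∑' n : ℕ, u ^ (n + 1) / (n + 1) * aa P X (n + 1)) := by
  obtain ⟨hsumr, hsumr1⟩ := summable_rr (P := P) (X := X) hmeas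
  have hq0 : ∀ m n, 0 ≤ qq P X m n := fun m n => toReal_nonneg' _
  have hq1 : ∀ m n, qq P X m n ≤ 1 := fun m n => toReal_le_one' _
  have hr0 : ∀ n, 0 ≤ rr P X n := fun n => toReal_nonneg' _
  have hr1 : ∀ n, rr P X n ≤ 1 := fun n => toReal_le_one' _
  set F : ℝ := ∑' n : ℕ, u ^ (n + 1) * rr P X (n + 1) with hF
  have hrsum : Summable fun n : ℕ => u ^ (n + 1) * rr P X (n + 1) :=
    summable_udom hu0 hu1 _ (fun n => hr0 _) (fun n => hr1 _)
  have hqsum : ∀ m, Summable fun n : ℕ => u ^ (n + 1) * qq P X m (n + 1) :=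
    fun m => summable_udom hu0 hu1 _ (fun n => hq0 _ _) (fun n => hq1 _ _)
  have hFnn : 0 ≤ F :=
    tsum_nonneg fun n => mul_nonneg (pow_nonneg hu0.le _) (hr0 _)
  have hFle : F ≤ u := by
    have h1 : ∀ n : ℕ, u ^ (n + 1) * rr P X (n + 1) ≤ u * rr P X (n + 1) := by
      intro n
      apply mul_le_mul_of_nonneg_right _ (hr0 _)
      calc u ^ (n + 1) ≤ u ^ 1 := pow_le_pow_of_le_one hu0.le hu1.le (by omega)
        _ = u := pow_one u
    calc F ≤ ∑' n : ℕ, u * rr P X (n + 1) :=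
          hrsum.tsum_le_tsum h1 (hsumr.mul_left u)
      _ = u * ∑' n : ℕ, rr P X (n + 1) := tsum_mul_left
      _ ≤ u * 1 := mul_le_mul_of_nonneg_left hsumr1 hu0.le
      _ = u := mul_one u
  have hFlt : F < 1 := lt_of_le_of_lt hFle hu1
  set c : ℕ → ℝ := fun m => ∑' n : ℕ, u ^ (n + 1) * qq P X m (n + 1) with hc
  have hc1 : c 1 = F := by
    rw [hc, hF]
    exact tsum_congr fun n => by rw [Q2' hmeas (by omega : 1 ≤ n + 1)]
  have hrec : ∀ m, 1 ≤ m → c (m + 1) = F * c m := by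
    intro m hm
    have hnorm : ∀ (f : ℕ → ℝ), (∀ n, 0 ≤ f n) → Summable f → Summable fun n => ‖f n‖ :=
      fun f h0 hs => hs.congr fun n => (Real.norm_of_nonneg (h0 n)).symm
    have hcauchy := tsum_mul_tsum_eq_tsum_sum_range_of_summable_norm
      (f := fun n : ℕ => u ^ (n + 1) * rr P X (n + 1))
      (g := fun n : ℕ => u ^ (n + 1) * qq P X m (n + 1))
      (hnorm _ (fun n => mul_nonneg (pow_nonneg hu0.le _) (hr0 _)) hrsum)
      (hnorm _ (fun n => mul_nonneg (pow_nonneg hu0.le _) (hq0 _ _)) (hqsum m))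
    have hstep1 : c (m + 1) = ∑' N : ℕ, ∑ k ∈ Finset.range (N + 1),
        (u ^ (k + 1) * rr P X (k + 1)) * (u ^ (N - k + 1) * qq P X m (N - k + 1)) := by
      rw [hc]
      dsimp only
      rw [Summable.tsum_eq_zero_add (hqsum (m + 1))]
      have h0 : u ^ (0 + 1) * qq P X (m + 1) (0 + 1) = 0 := by
        rw [qq_zero_gt hmeas (by omega : 1 < m + 1), mul_zero]
      rw [h0, zero_add]
      apply tsum_congr
      intro N
      have hq3 : qq P X (m + 1) (N + 1 + 1)
          = ∑ k ∈ Finset.Icc 1 (N + 1), rr P X k * qq P X m (N + 1 + 1 - k) := by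
        have := Q3' hmeas hindep hident hm (by omega : 1 ≤ N + 2)
        simpa using this
      rw [hq3, sum_Icc_one]
      rw [Finset.mul_sum]
      apply Finset.sum_congr rfl
      intro i hi
      rw [Finset.mem_range] at hi
      have h1 : N + 1 + 1 - (i + 1) = N - i + 1 := by omega
      rw [h1]
      have h2 : u ^ (N + 1 + 1) = u ^ (i + 1) * u ^ (N - i + 1) := by
        rw [← pow_add]
        congr 1
        omega
      rw [h2]
      ring
    rw [hstep1, hF, hc]
    exact hcauchy.symm
  have hcpow : ∀ m, 1 ≤ m → c m = F ^ m := by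
    intro m hm
    induction m with
    | zero => omega
    | succ k ih =>
        rcases Nat.eq_zero_or_pos k with rfl | hk
        · rw [hc1, pow_one]
        · rw [hrec k hk, ih hk, pow_succ, mul_comm]
  set g : ℕ → ℕ → ℝ := fun n m => u ^ (n + 1) * ((m : ℝ))⁻¹ * qq P X m (n + 1) with hg
  have hg0 : ∀ n m, 0 ≤ g n m := by
    intro n m
    rw [hg]
    exact mul_nonneg (mul_nonneg (pow_nonneg hu0.le _) (by positivity)) (hq0 _ _)
  have hgle : ∀ n m, g n m ≤ u ^ (n + 1) := by
    intro n m
    rw [hg]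
    dsimp only
    have hminv : ((m : ℝ))⁻¹ ≤ 1 := by
      rcases Nat.eq_zero_or_pos m with rfl | hm
      · simp
      · rw [inv_eq_one_div]
        exact div_le_one_of_le₀ (by exact_mod_cast hm) (by positivity)
    calc u ^ (n + 1) * ((m : ℝ))⁻¹ * qq P X m (n + 1)
        ≤ u ^ (n + 1) * 1 * 1 := by
          apply mul_le_mul
          · exact mul_le_mul_of_nonneg_left hminv (pow_nonneg hu0.le _)
          · exact hq1 _ _
          · exact hq0 _ _
          · positivity
      _ = u ^ (n + 1) := by ring
  have hrow_fin : ∀ n : ℕ, ∀ m ∉ Finset.Icc 1 (n + 1), g n m = 0 := by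
    intro n m hm
    rw [Finset.mem_Icc] at hm
    push_neg at hm
    rcases Nat.eq_zero_or_pos m with rfl | hm1
    · rw [hg]; simp
    · have hlt : n + 1 < m := by omega
      rw [hg]
      dsimp only
      rw [qq_zero_gt hmeas hlt, mul_zero]
  have hrowS : ∀ n, Summable fun m => g n m :=
    fun n => summable_of_ne_finset_zero (hrow_fin n)
  have hrow_sum : ∀ n, ∑' m, g n m = ∑ m ∈ Finset.Icc 1 (n + 1), g n m :=
    fun n => tsum_eq_sum (hrow_fin n)
  have hcol : ∀ m, Summable fun n => g n m := by
    intro m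
    exact Summable.of_nonneg_of_le (fun n => hg0 n m) (fun n => hgle n m)
      (summable_upow hu0 hu1)
  have hcolsum_bound : ∀ n, ∑' m, g n m ≤ ((n : ℝ) + 1) * u ^ (n + 1) := by
    intro n
    rw [hrow_sum n]
    calc ∑ m ∈ Finset.Icc 1 (n + 1), g n m
        ≤ ∑ _m ∈ Finset.Icc 1 (n + 1), u ^ (n + 1) :=
          Finset.sum_le_sum fun m _ => hgle n m
      _ = ((n + 1 : ℕ) : ℝ) * u ^ (n + 1) := by
          rw [Finset.sum_const, Nat.card_Icc, nsmul_eq_mul]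
          norm_num
      _ = ((n : ℝ) + 1) * u ^ (n + 1) := by push_cast; ring
  have houter : Summable fun n => ∑' m, g n m := by
    apply Summable.of_nonneg_of_le (fun n => tsum_nonneg fun m => hg0 n m)
      hcolsum_bound (summable_nupow hu0 hu1)
  have hunc : Summable (Function.uncurry g) :=
    (summable_prod_of_nonneg (fun p => hg0 p.1 p.2)).mpr ⟨hrowS, houter⟩
  have hswap : ∑' n, ∑' m, g n m = ∑' m, ∑' n, g n m :=
    (hunc.tsum_comm' hrowS hcol).symm
  have hterm : ∀ n : ℕ, u ^ (n + 1) / ((n : ℝ) + 1) * aa P X (n + 1) = ∑' m, g n m := by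
    intro n
    rw [hrow_sum n, Q1' hmeas hindep hident (by omega : 1 ≤ n + 1)]
    have hne : ((n : ℝ) + 1) ≠ 0 := by positivity
    have hcast : ((n + 1 : ℕ) : ℝ) = (n : ℝ) + 1 := by push_cast; ring
    rw [hcast]
    rw [Finset.mul_sum, Finset.mul_sum]
    apply Finset.sum_congr rfl
    intro m _
    rw [hg]
    dsimp only
    rw [mul_assoc (u ^ (n + 1))]
    generalize ((m : ℝ))⁻¹ * qq P X m (n + 1) = z
    field_simp
  have hinner : ∀ m, ∑' n, g n m = ((m : ℝ))⁻¹ * c m := by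
    intro m
    rw [hc]
    dsimp only
    rw [← tsum_mul_left]
    apply tsum_congr
    intro n
    rw [hg]
    dsimp only
    ring
  have habs : |F| < 1 := by rw [abs_of_nonneg hFnn]; exact hFlt
  have hlog := Real.hasSum_pow_div_log_of_abs_lt_one habs
  have hshift_eq : (fun m : ℕ => (((m + 1 : ℕ) : ℝ))⁻¹ * c (m + 1))
      = fun m : ℕ => F ^ (m + 1) / ((m : ℝ) + 1) := by
    funext m
    rw [hcpow (m + 1) (by omega)]
    push_cast
    ring
  have hsum_shift : Summable fun m : ℕ => ((m : ℝ))⁻¹ * c m := by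
    apply (summable_nat_add_iff 1).mp
    have : (fun m : ℕ => (((m + 1 : ℕ) : ℝ))⁻¹ * c (m + 1))
        = fun m : ℕ => F ^ (m + 1) / ((m : ℝ) + 1) := hshift_eq
    rw [show (fun m : ℕ => ((((m + 1 : ℕ)) : ℝ))⁻¹ * c (m + 1))
        = fun m : ℕ => F ^ (m + 1) / ((m : ℝ) + 1) from hshift_eq] at *
    exact hlog.summable
  have hmsum : ∑' m : ℕ, ((m : ℝ))⁻¹ * c m = -Real.log (1 - F) := by
    rw [Summable.tsum_eq_zero_add hsum_shift]
    have h0 : (((0 : ℕ) : ℝ))⁻¹ * c 0 = 0 := by simp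
    rw [h0, zero_add]
    have h1 : ∑' m : ℕ, (((m + 1 : ℕ) : ℝ))⁻¹ * c (m + 1)
        = ∑' m : ℕ, F ^ (m + 1) / ((m : ℝ) + 1) := by
      apply tsum_congr
      intro m
      exact congrFun hshift_eq m
    rw [h1, hlog.tsum_eq]
  have hexp : ∑' n : ℕ, u ^ (n + 1) / ((n : ℝ) + 1) * aa P X (n + 1)
      = -Real.log (1 - F) := by
    calc ∑' n : ℕ, u ^ (n + 1) / ((n : ℝ) + 1) * aa P X (n + 1)
        = ∑' n, ∑' m, g n m := tsum_congr hterm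
      _ = ∑' m, ∑' n, g n m := hswap
      _ = ∑' m : ℕ, ((m : ℝ))⁻¹ * c m := tsum_congr hinner
      _ = -Real.log (1 - F) := hmsum
  rw [hexp, neg_neg, Real.exp_log (by linarith : (0:ℝ) < 1 - F)]

end MainProof

end Stmt14

namespace Stmt14

variable {Ω : Type*}

/-- Sparre Andersen / Spitzer identity for `τ_0`: for a random walk with
i.i.d. real increments and every `u ∈ (0,1)`:
`1 - E[u^{τ_0}] = exp(-∑_{n=1}^∞ (u^n/n)·P(S(n) ≤ 0))`, where `u^{τ_0} := 0` on
`{τ_0 = ∞}`, so `E[u^{τ_0}] = ∑_{n≥1} u^n P(τ_0 = n)`. -/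
theorem spitzer_tau0
    [MeasurableSpace Ω] (P : Measure Ω) [IsProbabilityMeasure P]
    (X : ℕ → Ω → ℝ)
    (hmeas : ∀ k, Measurable (X k))
    (hindep : iIndepFun X P)
    (hident : ∀ k, IdentDistrib (X k) (X 0) P P)
    (u : ℝ) (hu : u ∈ Set.Ioo (0:ℝ) 1) :
    1 - ∑' n : ℕ, u ^ (n + 1) * (P (tau0Eq X (n + 1))).toReal
      = Real.exp (-∑' n : ℕ, u ^ (n + 1) / (n + 1) * (P {ω | S X (n + 1) ω ≤ 0}).toReal) := by
  exact spitzer_main hmeas hindep hident hu.1 hu.2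

end Stmt14
end

section
/- Let S(n)=X_1+⋯+X_n be a random walk with independent real-valued increments, let g:ℕ→ℝ be any boundary sequence, and let T_g = inf{n≥1 : S(n) ≤ g(n)}. Then for every n≥1 and every x∈ℝ: P(S(n)>x, T_g>n) ≥ P(S(n)>x)·P(T_g>n). -/
open MeasureTheory ProbabilityTheory Filter
open scoped ENNReal

namespace Stmt17

variable {Ω : Type*}

/-- Partial sums of the increments: `S n = X 0 + ⋯ + X (n-1)`. -/
def S (X : ℕ → Ω → ℝ) (n : ℕ) (ω : Ω) : ℝ := ∑ k ∈ Finset.range n, X k ω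

/-- The event `T_g > n`, i.e. `S k > g k` for all `1 ≤ k ≤ n`. -/
def TgGt (X : ℕ → Ω → ℝ) (g : ℕ → ℝ) (n : ℕ) : Set Ω :=
  {ω | ∀ k, 1 ≤ k → k ≤ n → g k < S X k ω}

/-! ### Auxiliary material: Harris/FKG inequality for product measures -/

/-- Rearrangement-type pointwise inequality in `ℝ≥0∞` for two monotone functions. -/
lemma key_pointwise {α : Type*} [LinearOrder α] {f g : α → ℝ≥0∞}
    (hf : Monotone f) (hg : Monotone g) (a b : α) :
    f a * g b + f b * g a ≤ f a * g a + f b * g b := by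
  wlog hab : a ≤ b generalizing a b
  · rw [add_comm, add_comm (f a * g a)]
    exact this b a (le_of_not_ge hab)
  have h1 : g a ≤ g b := hg hab
  have h2 : f a ≤ f b := hf hab
  calc f a * g b + f b * g a
      = f a * (g b - g a + g a) + f b * g a := by rw [tsub_add_cancel_of_le h1]
    _ = (f a * (g b - g a) + f a * g a) + f b * g a := by rw [mul_add]
    _ ≤ (f b * (g b - g a) + f a * g a) + f b * g a := by gcongr
    _ = f a * g a + (f b * (g b - g a) + f b * g a) := by ring
    _ = f a * g a + f b * (g b - g a + g a) := by rw [mul_add]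
    _ = f a * g a + f b * g b := by rw [tsub_add_cancel_of_le h1]

/-- Chebyshev/FKG inequality for lower integrals under a probability measure. -/
lemma chebyshev_lintegral {α : Type*} [MeasurableSpace α] (μ : Measure α)
    [IsProbabilityMeasure μ] {f g : α → ℝ≥0∞} (hf : Measurable f) (hg : Measurable g)
    (hkey : ∀ a b, f a * g b + f b * g a ≤ f a * g a + f b * g b) :
    (∫⁻ a, f a ∂μ) * ∫⁻ a, g a ∂μ ≤ ∫⁻ a, f a * g a ∂μ := by
  set F := ∫⁻ a, f a ∂μ with hF
  set G := ∫⁻ a, g a ∂μ with hG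
  set I := ∫⁻ a, f a * g a ∂μ with hI
  have h2 : 2 * (F * G) ≤ 2 * I := by
    have L : ∀ a : α, ∫⁻ b, (f a * g b + f b * g a) ∂μ = f a * G + F * g a := by
      intro a
      rw [lintegral_add_left (hg.const_mul _), lintegral_const_mul _ hg,
        lintegral_mul_const _ hf]
    have R : ∀ a : α, ∫⁻ b, (f a * g a + f b * g b) ∂μ = f a * g a + I := by
      intro a
      rw [lintegral_add_left measurable_const, lintegral_const]
      simp [hI]
    calc 2 * (F * G)
        = ∫⁻ a, (f a * G + F * g a) ∂μ := by
          rw [lintegral_add_left (hf.mul_const _), lintegral_mul_const _ hf,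
            lintegral_const_mul _ hg, two_mul]
      _ = ∫⁻ a, ∫⁻ b, (f a * g b + f b * g a) ∂μ ∂μ := by
          exact (lintegral_congr fun a => (L a).symm)
      _ ≤ ∫⁻ a, ∫⁻ b, (f a * g a + f b * g b) ∂μ ∂μ :=
          lintegral_mono fun a => lintegral_mono fun b => hkey a b
      _ = ∫⁻ a, (f a * g a + I) ∂μ := lintegral_congr fun a => R a
      _ = 2 * I := by
          rw [lintegral_add_right _ measurable_const, lintegral_const]
          simp [two_mul, hI]
  exact (ENNReal.mul_le_mul_iff_right two_ne_zero (ENNReal.ofNat_ne_top (n := 2))).mp h2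

/-- Harris inequality: induction step from `β` to `ℝ × β`. -/
lemma harris_prod {β : Type*} [MeasurableSpace β] [Preorder β]
    (μ : Measure ℝ) (ν : Measure β) [IsProbabilityMeasure μ] [IsProbabilityMeasure ν]
    (hν : ∀ A B : Set β, MeasurableSet A → MeasurableSet B → IsUpperSet A → IsUpperSet B →
      ν A * ν B ≤ ν (A ∩ B))
    {A B : Set (ℝ × β)} (hA : MeasurableSet A) (hB : MeasurableSet B)
    (hAu : IsUpperSet A) (hBu : IsUpperSet B) :
    (μ.prod ν) A * (μ.prod ν) B ≤ (μ.prod ν) (A ∩ B) := by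
  set f : ℝ → ℝ≥0∞ := fun y => ν (Prod.mk y ⁻¹' A) with hfdef
  set g : ℝ → ℝ≥0∞ := fun y => ν (Prod.mk y ⁻¹' B) with hgdef
  have hfm : Measurable f := measurable_measure_prodMk_left hA
  have hgm : Measurable g := measurable_measure_prodMk_left hB
  have hfmono : Monotone f := fun y y' h =>
    measure_mono fun b hb => hAu (Prod.mk_le_mk.mpr ⟨h, le_rfl⟩) hb
  have hgmono : Monotone g := fun y y' h =>
    measure_mono fun b hb => hBu (Prod.mk_le_mk.mpr ⟨h, le_rfl⟩) hb
  have hsecA : ∀ y : ℝ, IsUpperSet (Prod.mk y ⁻¹' A) := fun y b b' h hb =>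
    hAu (Prod.mk_le_mk.mpr ⟨le_rfl, h⟩) hb
  have hsecB : ∀ y : ℝ, IsUpperSet (Prod.mk y ⁻¹' B) := fun y b b' h hb =>
    hBu (Prod.mk_le_mk.mpr ⟨le_rfl, h⟩) hb
  rw [Measure.prod_apply hA, Measure.prod_apply hB, Measure.prod_apply (hA.inter hB)]
  calc (∫⁻ y, f y ∂μ) * ∫⁻ y, g y ∂μ
      ≤ ∫⁻ y, f y * g y ∂μ :=
        chebyshev_lintegral μ hfm hgm (fun a b => key_pointwise hfmono hgmono a b)
    _ ≤ ∫⁻ y, ν (Prod.mk y ⁻¹' (A ∩ B)) ∂μ := by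
        refine lintegral_mono fun y => ?_
        rw [Set.preimage_inter]
        exact hν _ _ (hA.preimage measurable_prodMk_left)
          (hB.preimage measurable_prodMk_left) (hsecA y) (hsecB y)

/-- Harris inequality for finite products of probability measures on `ℝ`:
monotone (upper) events are positively correlated. -/
lemma harris_pi : ∀ (n : ℕ) (μ : Fin n → Measure ℝ)
    (_ : ∀ i, IsProbabilityMeasure (μ i)) (A B : Set (Fin n → ℝ)),
    MeasurableSet A → MeasurableSet B → IsUpperSet A → IsUpperSet B →
    Measure.pi μ A * Measure.pi μ B ≤ Measure.pi μ (A ∩ B) := by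
  intro n
  induction n with
  | zero =>
    intro μ hp A B hAm hBm hAu hBu
    haveI := hp
    rcases A.eq_empty_or_nonempty with rfl | ⟨a, ha⟩
    · simp
    rcases B.eq_empty_or_nonempty with rfl | ⟨b, hb⟩
    · simp
    have hA : A = Set.univ := Set.eq_univ_of_forall fun v => by
      have : v = a := funext fun i => i.elim0
      rwa [this]
    have hB : B = Set.univ := Set.eq_univ_of_forall fun v => by
      have : v = b := funext fun i => i.elim0
      rwa [this]
    subst hA; subst hB
    simp
  | succ n IH =>
    intro μ hp A B hAm hBm hAu hBu
    haveI := hp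
    set e := MeasurableEquiv.piFinSuccAbove (fun _ : Fin (n + 1) => ℝ) 0 with he
    have mp := MeasureTheory.measurePreserving_piFinSuccAbove μ 0
    have mps : MeasurePreserving e.symm
        ((μ 0).prod (Measure.pi fun j => μ (Fin.succAbove 0 j))) (Measure.pi μ) :=
      mp.symm e
    have hesymm_mono : Monotone (e.symm : ℝ × (Fin n → ℝ) → (Fin (n + 1) → ℝ)) := by
      rintro ⟨a, h⟩ ⟨a', h'⟩ ⟨ha, hh⟩ i
      refine Fin.succAboveCases 0 ?_ ?_ i
      · simpa [e, MeasurableEquiv.piFinSuccAbove, Fin.insertNthEquiv] using ha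
      · intro j
        simpa [e, MeasurableEquiv.piFinSuccAbove, Fin.insertNthEquiv] using hh j
    set A' := e.symm ⁻¹' A with hA'
    set B' := e.symm ⁻¹' B with hB'
    have hA'm : MeasurableSet A' := hAm.preimage e.symm.measurable
    have hB'm : MeasurableSet B' := hBm.preimage e.symm.measurable
    have hA'u : IsUpperSet A' := hAu.preimage hesymm_mono
    have hB'u : IsUpperSet B' := hBu.preimage hesymm_mono
    haveI : ∀ j, IsProbabilityMeasure (μ (Fin.succAbove 0 j)) := fun j => hp _
    have key := harris_prod (μ 0) (Measure.pi fun j => μ (Fin.succAbove 0 j))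
      (fun C D hC hD hCu hDu =>
        IH (fun j => μ (Fin.succAbove 0 j)) (fun j => hp _) C D hC hD hCu hDu)
      hA'm hB'm hA'u hB'u
    have eA := mps.measure_preimage hAm.nullMeasurableSet
    have eB := mps.measure_preimage hBm.nullMeasurableSet
    have eAB := mps.measure_preimage (hAm.inter hBm).nullMeasurableSet
    rw [← eA, ← eB, ← eAB]
    rw [Set.preimage_inter] at eAB ⊢
    exact key

/-- Extension of a finite vector to `ℕ` by zeros. -/
def extend (n : ℕ) (v : Fin n → ℝ) (m : ℕ) : ℝ := if h : m < n then v ⟨m, h⟩ else 0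

lemma measurable_extend (n m : ℕ) : Measurable fun v : Fin n → ℝ => extend n v m := by
  unfold extend
  split
  · exact measurable_pi_apply _
  · exact measurable_const

lemma monotone_extend {n m : ℕ} {v w : Fin n → ℝ} (h : v ≤ w) :
    extend n v m ≤ extend n w m := by
  unfold extend
  split
  · exact h _
  · exact le_rfl

/-- for a random walk with independent (not necessarily identically
distributed) increments, any boundary `g`, every `n ≥ 1` and every `x ∈ ℝ`:
`P(S(n) > x, T_g > n) ≥ P(S(n) > x) · P(T_g > n)`. -/
theorem positive_correlation
    [MeasurableSpace Ω] (P : Measure Ω) [IsProbabilityMeasure P]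
    (X : ℕ → Ω → ℝ) (g : ℕ → ℝ)
    (hmeas : ∀ k, Measurable (X k))
    (hindep : iIndepFun X P)
    (n : ℕ) (hn : 1 ≤ n) (x : ℝ) :
    P {ω | x < S X n ω} * P (TgGt X g n) ≤ P ({ω | x < S X n ω} ∩ TgGt X g n) := by
  classical
  set φ : Ω → (Fin n → ℝ) := fun ω i => X i ω with hφdef
  have hφ : Measurable φ := measurable_pi_lambda _ fun i => hmeas i
  haveI : ∀ i : Fin n, IsProbabilityMeasure (P.map (X i)) := fun i =>
    Measure.isProbabilityMeasure_map (hmeas i).aemeasurable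
  -- joint law is the product of the marginals
  have hmap : Measure.pi (fun i : Fin n => P.map (X i)) = P.map φ := by
    refine Measure.pi_eq fun s hs => ?_
    set s' : ℕ → Set ℝ := fun k => if h : k < n then s ⟨k, h⟩ else Set.univ with hs'
    have hs'm : ∀ k, MeasurableSet (s' k) := by
      intro k
      simp only [hs']
      split
      · exact hs _
      · exact MeasurableSet.univ
    have hpre : φ ⁻¹' Set.pi Set.univ s = ⋂ k ∈ Finset.range n, X k ⁻¹' s' k := by
      ext ω
      simp only [Set.mem_preimage, Set.mem_pi, Set.mem_univ, forall_true_left,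
        Set.mem_iInter, Finset.mem_range, hs']
      constructor
      · intro h k hk
        rw [dif_pos hk]
        exact h ⟨k, hk⟩
      · intro h i
        have := h i i.isLt
        rwa [dif_pos i.isLt] at this
    rw [Measure.map_apply hφ (MeasurableSet.univ_pi hs), hpre,
      hindep.measure_inter_preimage_eq_mul (Finset.range n) (fun k _ => hs'm k)]
    rw [← Fin.prod_univ_eq_prod_range (fun k => P (X k ⁻¹' s' k)) n]
    refine Finset.prod_congr rfl fun i _ => ?_
    rw [Measure.map_apply (hmeas i) (hs i)]
    congr 1
    simp only [hs', dif_pos i.isLt]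
  -- the two events as upper sets in `Fin n → ℝ`
  set U : Set (Fin n → ℝ) := {v | x < ∑ i, v i} with hU
  set V : Set (Fin n → ℝ) :=
    {v | ∀ k, 1 ≤ k → k ≤ n → g k < ∑ j ∈ Finset.range k, extend n v j} with hV
  have hUm : MeasurableSet U :=
    measurableSet_lt measurable_const (Finset.univ.measurable_sum fun i _ =>
      measurable_pi_apply i)
  have hVm : MeasurableSet V := by
    have : V = ⋂ k, ⋂ (_ : 1 ≤ k), ⋂ (_ : k ≤ n),
        {v : Fin n → ℝ | g k < ∑ j ∈ Finset.range k, extend n v j} := by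
      ext v; simp [hV]
    rw [this]
    refine MeasurableSet.iInter fun k => MeasurableSet.iInter fun _ =>
      MeasurableSet.iInter fun _ => ?_
    exact measurableSet_lt measurable_const
      ((Finset.range k).measurable_sum fun j _ => measurable_extend n j)
  have hUu : IsUpperSet U := fun v w hvw hv =>
    lt_of_lt_of_le hv (Finset.sum_le_sum fun i _ => hvw i)
  have hVu : IsUpperSet V := fun v w hvw hv k hk1 hkn =>
    lt_of_lt_of_le (hv k hk1 hkn)
      (Finset.sum_le_sum fun j _ => monotone_extend hvw)
  have hUpre : φ ⁻¹' U = {ω | x < S X n ω} := by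
    ext ω
    simp only [Set.mem_preimage, hU, Set.mem_setOf_eq, S]
    rw [Fin.sum_univ_eq_sum_range (fun k => X k ω) n]
  have hVpre : φ ⁻¹' V = TgGt X g n := by
    ext ω
    simp only [Set.mem_preimage, hV, Set.mem_setOf_eq, TgGt, S]
    refine forall_congr' fun k => ?_
    refine imp_congr_right fun hk1 => imp_congr_right fun hkn => ?_
    have : ∀ j ∈ Finset.range k, extend n (φ ω) j = X j ω := by
      intro j hj
      have hjn : j < n := lt_of_lt_of_le (Finset.mem_range.mp hj) hkn
      simp [extend, dif_pos hjn, hφdef]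
    rw [Finset.sum_congr rfl this]
  have H := harris_pi n (fun i => P.map (X i)) (fun i => inferInstance) U V hUm hVm hUu hVu
  rw [hmap, Measure.map_apply hφ hUm, Measure.map_apply hφ hVm,
    Measure.map_apply hφ (hUm.inter hVm), Set.preimage_inter, hUpre, hVpre] at H
  exact H

end Stmt17
end
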